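/- arXiv:0711.4100 — 9 statements merged into one kernel-verified Lean document; each statement's English description precedes it below -/
import Mathlib

section
/- For an integer n ≥ 2, the two-dimensional Lebesgue measure of C_n is zero if and only if n ∈ {2, 3, 4, 6, 8, 12, 24}. -/
open Filter MeasureTheory

noncomputable section

/-- The set `G_n = {(a,b) : 1 ≤ a,b ≤ n-1, ab ≡ 1 (mod n)}` as a set of points in `ℝ²`. -/
def modPoints (n : ℕ) : Set (ℝ × ℝ) :=
  {p | ∃ a b : ℤ, 1 ≤ a ∧ a ≤ (n : ℤ) - 1 ∧ 1 ≤ b ∧ b ≤ (n : ℤ) - 1 ∧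
    (n : ℤ) ∣ a * b - 1 ∧ p = ((a : ℝ), (b : ℝ))}

/-- The convex closure `C_n` of `G_n`. -/
def modHull (n : ℕ) : Set (ℝ × ℝ) := convexHull ℝ (modPoints n)

/-- The set of vertices (extreme points) of `C_n`. -/
def modVertices (n : ℕ) : Set (ℝ × ℝ) := Set.extremePoints ℝ (modHull n)

private lemma sq_one_dvd_24 (n : ℕ) (hn : 2 ≤ n) (H : ∀ u : (ZMod n)ˣ, u ^ 2 = 1) : n ∣ 24 := by
  haveI : NeZero n := ⟨by omega⟩
  have key : ∀ q : ℕ, q ∣ n → ∀ v : (ZMod q)ˣ, v ^ 2 = 1 := by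
    intro q hq v
    obtain ⟨u, rfl⟩ := ZMod.unitsMap_surjective hq v
    rw [← map_pow, H u, map_one]
  have h16 : ¬ (16 ∣ n) := fun h => absurd (key 16 h) (by decide)
  have h9 : ¬ (9 ∣ n) := fun h => absurd (key 9 h) (by decide)
  have hp5 : ∀ p : ℕ, p.Prime → p ∣ n → p = 2 ∨ p = 3 := by
    intro p hp hpn
    by_contra hc
    push_neg at hc
    have hple : 3 < p := by
      have h2 := hp.two_le
      rcases Nat.lt_or_ge p 5 with h | h
      · interval_cases p <;> simp_all (config := {decide := true})
      · omega
    have hcop : Nat.Coprime 2 p := ((Nat.coprime_primes Nat.prime_two hp).mpr (by omega))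
    have hv := key p hpn (ZMod.unitOfCoprime 2 hcop)
    have hv' : ((2 : ℕ) : ZMod p) ^ 2 = 1 := by
      have := congrArg (Units.val) hv
      simpa using this
    have h41 : ((4 : ℕ) : ZMod p) = ((1 : ℕ) : ZMod p) := by push_cast; push_cast at hv'; linear_combination hv'
    have := (Nat.modEq_iff_dvd' (by norm_num)).mp ((ZMod.natCast_eq_natCast_iff _ _ _).mp h41).symm
    have := Nat.le_of_dvd (by norm_num) this
    omega
  rw [← Nat.factorization_le_iff_dvd (by omega) (by norm_num)]
  intro p
  by_cases hp : p.Prime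
  · by_cases hpn : p ∣ n
    · rcases hp5 p hp hpn with rfl | rfl
      · have h1 : n.factorization 2 ≤ 3 := by
          by_contra hgt
          have : (2:ℕ) ^ 4 ∣ n := (Nat.Prime.pow_dvd_iff_le_factorization Nat.prime_two (by omega)).mpr (by omega)
          exact h16 (by simpa using this)
        have h2 : 3 ≤ (24).factorization 2 :=
          (Nat.Prime.pow_dvd_iff_le_factorization Nat.prime_two (by norm_num)).mp (by norm_num)
        omega
      · have h1 : n.factorization 3 ≤ 1 := by
          by_contra hgt
          have : (3:ℕ) ^ 2 ∣ n := (Nat.Prime.pow_dvd_iff_le_factorization Nat.prime_three (by omega)).mpr (by omega)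
          exact h9 (by simpa using this)
        have h2 : 1 ≤ (24).factorization 3 :=
          (Nat.Prime.pow_dvd_iff_le_factorization Nat.prime_three (by norm_num)).mp (by norm_num)
        omega
    · simp [Nat.factorization_eq_zero_of_not_dvd hpn]
  · simp [Nat.factorization_eq_zero_of_not_prime _ hp]

lemma hull_pos (n : ℕ) (hn : 2 ≤ n) (u : (ZMod n)ˣ) (hu : u ^ 2 ≠ 1) :
    volume (modHull n) ≠ 0 := by
  haveI : NeZero n := ⟨by omega⟩
  haveI : Fact (1 < n) := ⟨hn⟩
  set A : ℕ := (u : ZMod n).val with hA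
  set B : ℕ := ((u⁻¹ : (ZMod n)ˣ) : ZMod n).val with hB
  have hAcast : ((A : ℕ) : ZMod n) = (u : ZMod n) := by rw [hA, ZMod.natCast_val, ZMod.cast_id]
  have hBcast : ((B : ℕ) : ZMod n) = ((u⁻¹ : (ZMod n)ˣ) : ZMod n) := by
    rw [hB, ZMod.natCast_val, ZMod.cast_id]
  have hAlt : A < n := ZMod.val_lt _
  have hBlt : B < n := ZMod.val_lt _
  have hAne : A ≠ 0 := by
    intro h
    have : ((u : ZMod n)) = 0 := by rw [← hAcast, h, Nat.cast_zero]
    exact u.ne_zero this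
  have hBne : B ≠ 0 := by
    intro h
    have : (((u⁻¹ : (ZMod n)ˣ) : ZMod n)) = 0 := by rw [← hBcast, h, Nat.cast_zero]
    exact (u⁻¹).ne_zero this
  have hAB : A ≠ B := by
    intro h
    apply hu
    have : (u : ZMod n) = ((u⁻¹ : (ZMod n)ˣ) : ZMod n) := by rw [← hAcast, h, hBcast]
    have huu : u = u⁻¹ := Units.ext this
    calc u ^ 2 = u * u := sq u
      _ = u * u⁻¹ := by rw [← huu]
      _ = 1 := mul_inv_cancel u
  have hdvdAB : (n : ℤ) ∣ (A : ℤ) * (B : ℤ) - 1 := by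
    rw [← ZMod.intCast_zmod_eq_zero_iff_dvd]
    push_cast
    rw [hAcast, hBcast]
    simp
  -- the three points
  have hp : ((1 : ℝ), (1 : ℝ)) ∈ modPoints n :=
    ⟨1, 1, le_refl _, by push_cast; omega, le_refl _, by push_cast; omega, by simp, by norm_num⟩
  have hq : (((A : ℝ)), ((B : ℝ))) ∈ modPoints n :=
    ⟨A, B, by omega, by push_cast; omega, by omega, by push_cast; omega, hdvdAB, by push_cast; rfl⟩
  have hr : (((B : ℝ)), ((A : ℝ))) ∈ modPoints n :=
    ⟨B, A, by omega, by push_cast; omega, by omega, by push_cast; omega, by rw [mul_comm]; exact hdvdAB, by push_cast; rfl⟩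
  -- affine span is top
  set α : ℝ := (A : ℝ) - 1 with hα
  set β : ℝ := (B : ℝ) - 1 with hβ
  have hα0 : 0 ≤ α := by
    have h1 : (1:ℝ) ≤ (A:ℝ) := by exact_mod_cast Nat.one_le_iff_ne_zero.mpr hAne
    rw [hα]; linarith
  have hβ0 : 0 ≤ β := by
    have h1 : (1:ℝ) ≤ (B:ℝ) := by exact_mod_cast Nat.one_le_iff_ne_zero.mpr hBne
    rw [hβ]; linarith
  have hABr : ((A:ℝ)) ≠ ((B:ℝ)) := by exact_mod_cast hAB
  have hαβ : α ≠ β := by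
    intro h
    rw [hα, hβ] at h
    exact hABr (by linarith)
  have hlin : LinearIndependent ℝ ![((α, β) : ℝ × ℝ), (β, α)] := by
    rw [linearIndependent_fin2]
    constructor
    · simp only [Matrix.cons_val_one, Matrix.head_cons]
      intro h
      rw [Prod.ext_iff] at h
      simp at h
      exact hαβ (by rw [h.1, h.2])
    · intro c h
      simp only [Matrix.cons_val_one, Matrix.head_cons, Matrix.cons_val_zero, Prod.smul_mk,
        smul_eq_mul, Prod.mk.injEq] at h
      obtain ⟨h1, h2⟩ := h
      have hsum : (c - 1) * (α + β) = 0 := by linear_combination h1 + h2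
      have hpos : 0 < α + β := by
        rcases eq_or_lt_of_le hα0 with h | h
        · rcases eq_or_lt_of_le hβ0 with h' | h'
          · exact absurd (h ▸ h') hαβ
          · linarith
        · linarith
      have hc : c = 1 := by
        rcases mul_eq_zero.mp hsum with h | h
        · linarith
        · linarith
      rw [hc, one_mul] at h1 h2
      exact hαβ (h1 ▸ rfl)
  have hspan : affineSpan ℝ (modPoints n) = ⊤ := by
    rw [AffineSubspace.affineSpan_eq_top_iff_vectorSpan_eq_top_of_nonempty ℝ (ℝ × ℝ) (ℝ × ℝ) ⟨_, hp⟩]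
    have hle : Submodule.span ℝ (Set.range ![((α, β) : ℝ × ℝ), (β, α)]) ≤
        vectorSpan ℝ (modPoints n) := by
      rw [Submodule.span_le]
      rintro x ⟨i, rfl⟩
      fin_cases i
      · have := vsub_mem_vectorSpan ℝ hq hp
        simpa [hα, hβ, Prod.ext_iff] using this
      · have := vsub_mem_vectorSpan ℝ hr hp
        simpa [hα, hβ, Prod.ext_iff] using this
    have htop : Submodule.span ℝ (Set.range ![((α, β) : ℝ × ℝ), (β, α)]) = ⊤ :=
      hlin.span_eq_top_of_card_eq_finrank (by simp)
    rw [← top_le_iff, ← htop]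
    exact hle
  have hint : (interior (modHull n)).Nonempty := by
    rw [modHull, interior_convexHull_nonempty_iff_affineSpan_eq_top]
    exact hspan
  have := MeasureTheory.Measure.measure_pos_of_nonempty_interior (μ := volume) hint
  exact this.ne'

lemma hull_zero (n : ℕ) (hn : 2 ≤ n) (H : ∀ u : (ZMod n)ˣ, u ^ 2 = 1) :
    volume (modHull n) = 0 := by
  haveI : NeZero n := ⟨by omega⟩
  set D : Submodule ℝ (ℝ × ℝ) := LinearMap.ker ((LinearMap.fst ℝ ℝ ℝ) - (LinearMap.snd ℝ ℝ ℝ)) with hD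
  have hsub : modPoints n ⊆ (D : Set (ℝ × ℝ)) := by
    rintro p ⟨a, b, ha1, ha2, hb1, hb2, hdvd, rfl⟩
    have hab : ((a : ZMod n) * (b : ZMod n)) = 1 := by
      have := (ZMod.intCast_zmod_eq_zero_iff_dvd (a * b - 1) n).mpr hdvd
      push_cast at this
      linear_combination this
    have hu : IsUnit ((a : ZMod n)) := IsUnit.of_mul_eq_one _ hab
    have hsq : (a : ZMod n) * (a : ZMod n) = 1 := by
      have := H hu.unit
      have := congrArg Units.val this
      simpa [pow_two, hu.unit_spec] using this
    have heq : (a : ZMod n) = (b : ZMod n) := by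
      calc (a : ZMod n) = (a * (a * b) : ZMod n) := by rw [hab]; ring
        _ = (b : ZMod n) := by rw [← mul_assoc, hsq, one_mul]
    have hdvd2 : (n : ℤ) ∣ b - a := ((ZMod.intCast_eq_intCast_iff _ _ _).mp heq).dvd
    have hba : b - a = 0 := Int.eq_zero_of_abs_lt_dvd hdvd2 (by
      rw [abs_lt]; omega)
    have : a = b := by omega
    subst this
    simp [hD, LinearMap.mem_ker]
  have hconv : Convex ℝ (D : Set (ℝ × ℝ)) := D.convex
  have hhull : modHull n ⊆ (D : Set (ℝ × ℝ)) := convexHull_min hsub hconv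
  refine measure_mono_null hhull ?_
  apply MeasureTheory.Measure.addHaar_submodule
  intro hT
  have : ((1, 0) : ℝ × ℝ) ∈ D := hT ▸ Submodule.mem_top
  simp [hD, LinearMap.mem_ker] at this

theorem stmt1 (n : ℕ) (hn : 2 ≤ n) :
    volume (modHull n) = 0 ↔ n ∈ ({2, 3, 4, 6, 8, 12, 24} : Set ℕ) := by
  constructor
  · intro h0
    by_contra hmem
    have hex : ∃ u : (ZMod n)ˣ, u ^ 2 ≠ 1 := by
      by_contra h'
      push_neg at h'
      have hdvd : n ∣ 24 := sq_one_dvd_24 n hn h'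
      have hle : n ≤ 24 := Nat.le_of_dvd (by norm_num) hdvd
      apply hmem
      simp only [Set.mem_insert_iff, Set.mem_singleton_iff]
      interval_cases n <;> revert hdvd <;> decide
    obtain ⟨u, hu⟩ := hex
    exact hull_pos n hn u hu h0
  · intro hmem
    simp only [Set.mem_insert_iff, Set.mem_singleton_iff] at hmem
    rcases hmem with rfl | rfl | rfl | rfl | rfl | rfl | rfl <;>
      exact hull_zero _ (by norm_num) (by decide)
end
end

section
/- Let n ≥ 2 be an integer and let (a, b) be a vertex of C_n with a ≤ b, a + b ≤ n, and (a, b) ≠ (1, 1). Then a < b. -/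
open Filter MeasureTheory

noncomputable section

theorem stmt2 (n : ℕ) (hn : 2 ≤ n) (a b : ℤ)
    (hv : ((a : ℝ), (b : ℝ)) ∈ modVertices n)
    (hab : a ≤ b) (hsum : a + b ≤ (n : ℤ)) (hne : ¬(a = 1 ∧ b = 1)) :
    a < b := by
  by_contra h
  have hba : b ≤ a := not_lt.mp h
  have heq : a = b := le_antisymm hab hba
  subst heq
  -- extract membership in modPoints
  have hmem : ((a : ℝ), (a : ℝ)) ∈ modPoints n :=
    extremePoints_convexHull_subset hv
  obtain ⟨a', b', h1, h2, h3, h4, hdvd, hp⟩ := hmem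
  have ha' : a = a' := by
    have := congrArg Prod.fst hp
    simp only [] at this
    exact_mod_cast this
  have hb' : a = b' := by
    have := congrArg Prod.snd hp
    simp only [] at this
    exact_mod_cast this
  subst ha'; subst hb'
  -- a ≠ 1
  have hane : a ≠ 1 := fun h' => hne ⟨h', h'⟩
  have ha2 : 2 ≤ a := lt_of_le_of_ne h1 (Ne.symm hane)
  have hsum2 : 2 * a ≤ (n : ℤ) := by linarith
  -- strict: 2a < n
  have hlt : 2 * a < (n : ℤ) := by
    rcases lt_or_eq_of_le hsum2 with h' | h'
    · exact h'
    · exfalso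
      have hdn : a ∣ (n : ℤ) := ⟨2, by linarith⟩
      have : a ∣ (1 : ℤ) := by
        have h11 : a ∣ a * a - 1 := dvd_trans hdn hdvd
        have h12 : a ∣ a * a := Dvd.intro a rfl
        have := dvd_sub h12 h11
        simpa using this
      have := Int.le_of_dvd one_pos this
      omega
  set c : ℤ := (n : ℤ) - a with hc
  have hac : a < c := by omega
  -- the two endpoints
  have hp1 : ((1 : ℝ), (1 : ℝ)) ∈ modPoints n := by
    refine ⟨1, 1, le_refl _, ?_, le_refl _, ?_, ⟨0, by ring⟩, by norm_num⟩ <;>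
      · have : (2 : ℤ) ≤ (n : ℤ) := by exact_mod_cast hn
        omega
  have hp2 : ((c : ℝ), (c : ℝ)) ∈ modPoints n := by
    refine ⟨c, c, by omega, by omega, by omega, by omega, ?_, rfl⟩
    obtain ⟨k, hk⟩ := hdvd
    exact ⟨(n : ℤ) - 2 * a + k, by rw [hc]; linarith [hk]⟩
  -- open segment membership
  have hc1R : (1 : ℝ) < (c : ℝ) := by exact_mod_cast (by omega : (1:ℤ) < c)
  have haR : (1 : ℝ) < (a : ℝ) := by exact_mod_cast (by omega : (1:ℤ) < a)
  have hacR : (a : ℝ) < (c : ℝ) := by exact_mod_cast hac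
  have hden : (0 : ℝ) < (c : ℝ) - 1 := by linarith
  set t₂ : ℝ := ((a : ℝ) - 1) / ((c : ℝ) - 1) with ht2
  set t₁ : ℝ := ((c : ℝ) - (a : ℝ)) / ((c : ℝ) - 1) with ht1
  have hseg : ((a : ℝ), (a : ℝ)) ∈ openSegment ℝ ((1 : ℝ), (1 : ℝ)) ((c : ℝ), (c : ℝ)) := by
    refine ⟨t₁, t₂, ?_, ?_, ?_, ?_⟩
    · exact div_pos (by linarith) hden
    · exact div_pos (by linarith) hden
    · rw [ht1, ht2]; field_simp; ring
    · rw [ht1, ht2, Prod.smul_mk, Prod.smul_mk, Prod.mk_add_mk, Prod.mk.injEq]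
      constructor <;> · rw [smul_eq_mul, smul_eq_mul, div_mul_eq_mul_div, div_mul_eq_mul_div, ← add_div, div_eq_iff hden.ne']; ring
  have := (hv.2 (subset_convexHull ℝ _ hp1) (subset_convexHull ℝ _ hp2) hseg)
  have : (1 : ℝ) = (a : ℝ) := congrArg Prod.fst this
  have : (1 : ℤ) = a := by exact_mod_cast this
  omega
end
end

section
/- Let n ≥ 2 be an integer and let (a, b) and (a′, b′) be vertices of C_n with a ≤ b, a + b ≤ n, a′ ≤ b′, a′ + b′ ≤ n, and a < a′. Then b < b′ and b − a < b′ − a′. -/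
open Filter MeasureTheory

noncomputable section

private lemma vertex_data (n : ℕ) {x y : ℝ} (h : (x, y) ∈ modVertices n) :
    ∃ a b : ℤ, 1 ≤ a ∧ a ≤ (n : ℤ) - 1 ∧ 1 ≤ b ∧ b ≤ (n : ℤ) - 1 ∧
      (n : ℤ) ∣ a * b - 1 ∧ x = (a : ℝ) ∧ y = (b : ℝ) := by
  have h' : (x, y) ∈ modPoints n := extremePoints_convexHull_subset h
  obtain ⟨a, b, h1, h2, h3, h4, h5, h6⟩ := h'
  refine ⟨a, b, h1, h2, h3, h4, h5, ?_, ?_⟩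
  · exact congrArg Prod.fst h6
  · exact congrArg Prod.snd h6

private lemma hull_mem (n : ℕ) {a b : ℤ}
    (h1 : 1 ≤ a) (h2 : a ≤ (n : ℤ) - 1) (h3 : 1 ≤ b) (h4 : b ≤ (n : ℤ) - 1)
    (h5 : (n : ℤ) ∣ a * b - 1) : ((a : ℝ), (b : ℝ)) ∈ modHull n :=
  subset_convexHull ℝ _ ⟨a, b, h1, h2, h3, h4, h5, rfl⟩

private lemma key (n : ℕ) (hn : 2 ≤ n) (a b a' b' : ℤ)
    (hv : ((a : ℝ), (b : ℝ)) ∈ modVertices n)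
    (hv' : ((a' : ℝ), (b' : ℝ)) ∈ modVertices n)
    (hab : a ≤ b) (hab' : a' ≤ b') (hsum' : a' + b' ≤ (n : ℤ))
    (haa : a < a') (htd : b' - a' ≤ b - a) : False := by
  obtain ⟨c, d, ha1, han, hb1, hbn, hdvd, hax, hbx⟩ := vertex_data n hv
  obtain ⟨c', d', ha1', han', hb1', hbn', hdvd', hax', hbx'⟩ := vertex_data n hv'
  have ea : a = c := by exact_mod_cast hax
  have eb : b = d := by exact_mod_cast hbx
  have ea' : a' = c' := by exact_mod_cast hax'
  have eb' : b' = d' := by exact_mod_cast hbx'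
  subst ea eb ea' eb'
  -- basic integer facts
  have h2a' : 2 ≤ a' := by omega
  have hn3 : (3 : ℤ) ≤ n := by omega
  -- extremality, unfolded
  have hv2 := hv'.2
  have hvmem : ((a : ℝ), (b : ℝ)) ∈ modHull n := hv.1
  -- special points of the hull
  have hP1 : ((1 : ℝ), (1 : ℝ)) ∈ modHull n := by
    have := hull_mem n (a := 1) (b := 1) le_rfl (by omega) le_rfl (by omega) ⟨0, by ring⟩
    simpa using this
  have hP2 : (((n : ℝ) - 1), ((n : ℝ) - 1)) ∈ modHull n := by
    have := hull_mem n (a := (n : ℤ) - 1) (b := (n : ℤ) - 1) (by omega) le_rfl (by omega) le_rfl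
      ⟨(n : ℤ) - 2, by ring⟩
    push_cast at this
    convert this using 2 <;> push_cast <;> ring
  have hW : (((n : ℝ) - b), ((n : ℝ) - a)) ∈ modHull n := by
    obtain ⟨k, hk⟩ := hdvd
    have := hull_mem n (a := (n : ℤ) - b) (b := (n : ℤ) - a) (by omega) (by omega) (by omega)
      (by omega) ⟨(n : ℤ) - a - b + k, by linear_combination hk⟩
    push_cast at this
    convert this using 2 <;> push_cast <;> ring
  -- real casts of basic facts
  have ra1 : (1 : ℝ) ≤ (a : ℝ) := by exact_mod_cast ha1
  have rab : (a : ℝ) ≤ (b : ℝ) := by exact_mod_cast hab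
  have raa : (a : ℝ) + 1 ≤ (a' : ℝ) := by exact_mod_cast haa
  have rtd : (b' : ℝ) - a' ≤ (b : ℝ) - a := by exact_mod_cast htd
  have rab' : (a' : ℝ) ≤ (b' : ℝ) := by exact_mod_cast hab'
  have rsum' : (a' : ℝ) + b' ≤ (n : ℝ) := by exact_mod_cast hsum'
  have rbn' : (b' : ℝ) ≤ (n : ℝ) - 1 := by exact_mod_cast hbn'
  have ra2' : (2 : ℝ) ≤ (a' : ℝ) := by exact_mod_cast h2a'
  rcases eq_or_lt_of_le (show (0 : ℤ) ≤ b' - a' by omega) with ht0 | ht0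
  · -- t = 0 : v' is on the diagonal, strictly between (1,1) and (n-1,n-1)
    have hb'a' : b' = a' := by omega
    have ha'n2 : a' ≤ (n : ℤ) - 2 := by omega
    have rn2 : (0 : ℝ) < (n : ℝ) - 2 := by
      have h : ((3 : ℤ) : ℝ) ≤ ((n : ℤ) : ℝ) := by exact_mod_cast hn3
      push_cast at h; linarith
    set μ : ℝ := ((a' : ℝ) - 1) / ((n : ℝ) - 2) with hμ
    have hμ0 : 0 < μ := div_pos (by linarith) rn2
    have hμ1 : μ < 1 := by
      rw [hμ, div_lt_one rn2]
      have : (a' : ℝ) ≤ (n : ℝ) - 2 := by exact_mod_cast ha'n2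
      linarith
    have hos : ((a' : ℝ), (b' : ℝ)) ∈
        openSegment ℝ (((1 : ℝ), (1 : ℝ))) (((n : ℝ) - 1), ((n : ℝ) - 1)) := by
      refine ⟨1 - μ, μ, by linarith, hμ0, by ring, ?_⟩
      have hb : (b' : ℝ) = (a' : ℝ) := by exact_mod_cast hb'a'
      have hm : μ * ((n : ℝ) - 2) = (a' : ℝ) - 1 := by
        rw [hμ]; exact div_mul_cancel₀ _ (ne_of_gt rn2)
      simp only [Prod.smul_mk, smul_eq_mul, Prod.mk_add_mk, Prod.mk.injEq]
      exact ⟨by linear_combination hm, by linear_combination hm - hb⟩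
    have := hv2 hP1 hP2 hos
    have h1 : (1 : ℝ) = (a' : ℝ) := congrArg Prod.fst this
    linarith
  · -- t > 0
    have rt0 : (0 : ℝ) < (b' : ℝ) - a' := by exact_mod_cast ht0
    have hd0 : (0 : ℝ) < (b : ℝ) - a := by linarith
    rcases eq_or_lt_of_le htd with hteqd | htltd
    · -- t = d : v' lies strictly inside the segment from (a,b) to (n-b,n-a)
      have hden : (a' : ℤ) + b < n := by omega
      have rden : (a' : ℝ) - a < (n : ℝ) - a - b := by
        have : ((a' : ℝ) + b) + 1 ≤ (n : ℝ) := by exact_mod_cast hden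
        linarith
      set s : ℝ := ((a' : ℝ) - a) / ((n : ℝ) - a - b) with hs
      have hden0 : (0 : ℝ) < (n : ℝ) - a - b := by linarith
      have hs0 : 0 < s := div_pos (by linarith) hden0
      have hs1 : s < 1 := by rw [hs, div_lt_one hden0]; linarith
      have hos : ((a' : ℝ), (b' : ℝ)) ∈
          openSegment ℝ (((a : ℝ), (b : ℝ))) (((n : ℝ) - b, (n : ℝ) - a)) := by
        refine ⟨1 - s, s, by linarith, hs0, by ring, ?_⟩
        have hbd : (b' : ℝ) - a' = (b : ℝ) - a := by exact_mod_cast hteqd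
        have hm : s * ((n : ℝ) - a - b) = (a' : ℝ) - a := by
          rw [hs]; exact div_mul_cancel₀ _ (ne_of_gt hden0)
        simp only [Prod.smul_mk, smul_eq_mul, Prod.mk_add_mk, Prod.mk.injEq]
        exact ⟨by linear_combination hm, by linear_combination hm - hbd⟩
      have := hv2 hvmem hW hos
      have h1 : (a : ℝ) = (a' : ℝ) := congrArg Prod.fst this
      linarith
    · -- t < d
      set l : ℝ := ((b' : ℝ) - a') / ((b : ℝ) - a) with hl
      have hl0 : 0 < l := div_pos rt0 hd0
      have rtdlt : (b' : ℝ) - a' < (b : ℝ) - a := by exact_mod_cast htltd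
      have hl1 : l < 1 := by rw [hl, div_lt_one hd0]; linarith
      have hld : l * ((b : ℝ) - a) = (b' : ℝ) - a' := by
        rw [hl]; exact div_mul_cancel₀ _ (ne_of_gt hd0)
      set xl : ℝ := 1 + l * ((a : ℝ) - 1) with hxl
      set xr : ℝ := (n : ℝ) - 1 - l * ((b : ℝ) - 1) with hxr
      -- left: xl < a'
      have hxla : xl < (a' : ℝ) := by
        have h1 : l * ((a : ℝ) - 1) ≤ (a : ℝ) - 1 := by nlinarith
        linarith
      -- right: a' ≤ xr, via the integer inequality
      have hRint : (b - 1) * (b' - a') ≤ (b' - 1) * (b - a) := by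
        nlinarith [mul_nonneg (sub_nonneg.2 hab) (sub_nonneg.2 haa.le),
          mul_nonneg (sub_nonneg.2 ha1) (sub_nonneg.2 htd)]
      have hRreal : ((b : ℝ) - 1) * ((b' : ℝ) - a') ≤ ((b' : ℝ) - 1) * ((b : ℝ) - a) := by
        exact_mod_cast hRint
      have hlb : l * ((b : ℝ) - 1) ≤ (b' : ℝ) - 1 := by
        have h1 : l * ((b : ℝ) - 1) * ((b : ℝ) - a) ≤ ((b' : ℝ) - 1) * ((b : ℝ) - a) := by
          calc l * ((b : ℝ) - 1) * ((b : ℝ) - a)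
              = ((b : ℝ) - 1) * (l * ((b : ℝ) - a)) := by ring
            _ = ((b : ℝ) - 1) * ((b' : ℝ) - a') := by rw [hld]
            _ ≤ ((b' : ℝ) - 1) * ((b : ℝ) - a) := hRreal
        exact le_of_mul_le_mul_right h1 hd0
      have hxra : (a' : ℝ) ≤ xr := by
        rw [hxr]; linarith
      -- the two auxiliary points on the lateral edges of the trapezoid
      have hL : ((xl, xl + ((b' : ℝ) - a'))) ∈
          openSegment ℝ (((1 : ℝ), (1 : ℝ))) (((a : ℝ), (b : ℝ))) := by
        refine ⟨1 - l, l, by linarith, hl0, by ring, ?_⟩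
        simp only [Prod.smul_mk, smul_eq_mul, Prod.mk_add_mk, Prod.mk.injEq]
        constructor
        · rw [hxl]; ring
        · rw [hxl]; linear_combination hld
      have hR : ((xr, xr + ((b' : ℝ) - a'))) ∈
          openSegment ℝ (((n : ℝ) - 1, (n : ℝ) - 1)) (((n : ℝ) - b, (n : ℝ) - a)) := by
        refine ⟨1 - l, l, by linarith, hl0, by ring, ?_⟩
        simp only [Prod.smul_mk, smul_eq_mul, Prod.mk_add_mk, Prod.mk.injEq]
        constructor
        · rw [hxr]; ring
        · rw [hxr]; linear_combination hld
      rcases eq_or_lt_of_le hxra with hxeq | hxlt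
      · -- v' coincides with the point on the right edge
        have hos : ((a' : ℝ), (b' : ℝ)) ∈
            openSegment ℝ (((n : ℝ) - 1, (n : ℝ) - 1)) (((n : ℝ) - b, (n : ℝ) - a)) := by
          have : ((a' : ℝ), (b' : ℝ)) = ((xr, xr + ((b' : ℝ) - a'))) := by
            rw [← hxeq]; exact Prod.ext rfl (by ring)
          rw [this]; exact hR
        have := hv2 hP2 hW hos
        have h1 : ((n : ℝ) - 1) = (a' : ℝ) := congrArg Prod.fst this
        have h2 : ((n : ℝ) - 1) = (b' : ℝ) := congrArg Prod.snd this
        linarith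
      · -- v' strictly between the two lateral points
        have hLhull : ((xl, xl + ((b' : ℝ) - a'))) ∈ modHull n :=
          (convex_convexHull ℝ _).segment_subset hP1 hvmem (openSegment_subset_segment ℝ _ _ hL)
        have hRhull : ((xr, xr + ((b' : ℝ) - a'))) ∈ modHull n :=
          (convex_convexHull ℝ _).segment_subset hP2 hW (openSegment_subset_segment ℝ _ _ hR)
        have hxlr : xl < xr := by linarith
        set μ : ℝ := ((a' : ℝ) - xl) / (xr - xl) with hμ
        have hμ0 : 0 < μ := div_pos (by linarith) (by linarith)
        have hμ1 : μ < 1 := by rw [hμ, div_lt_one (by linarith)]; linarith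
        have hos : ((a' : ℝ), (b' : ℝ)) ∈
            openSegment ℝ ((xl, xl + ((b' : ℝ) - a'))) ((xr, xr + ((b' : ℝ) - a'))) := by
          refine ⟨1 - μ, μ, by linarith, hμ0, by ring, ?_⟩
          have hm : μ * (xr - xl) = (a' : ℝ) - xl := by
            rw [hμ]; exact div_mul_cancel₀ _ (by linarith)
          simp only [Prod.smul_mk, smul_eq_mul, Prod.mk_add_mk, Prod.mk.injEq]
          exact ⟨by linear_combination hm, by linear_combination hm⟩
        have := hv2 hLhull hRhull hos
        have h1 : xl = (a' : ℝ) := congrArg Prod.fst this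
        linarith

theorem stmt3 (n : ℕ) (hn : 2 ≤ n) (a b a' b' : ℤ)
    (hv : ((a : ℝ), (b : ℝ)) ∈ modVertices n)
    (hv' : ((a' : ℝ), (b' : ℝ)) ∈ modVertices n)
    (hab : a ≤ b) (hsum : a + b ≤ (n : ℤ))
    (hab' : a' ≤ b') (hsum' : a' + b' ≤ (n : ℤ))
    (haa : a < a') :
    b < b' ∧ b - a < b' - a' := by
  constructor
  · by_contra h
    push_neg at h
    exact key n hn a b a' b' hv hv' hab hab' hsum' haa (by omega)
  · by_contra h
    push_neg at h
    exact key n hn a b a' b' hv hv' hab hab' hsum' haa h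
end
end

section
/- Let n ≥ 2 be an integer and let (a, b) be a point of G_n such that a(n − b) = n − 1 or b(n − a) = n − 1. Then (a, b) is a vertex of C_n. Consequently every divisor d of n − 1 with 1 ≤ d ≤ n − 1 gives rise to the vertex (d, n − (n−1)/d) of C_n. -/
open Filter MeasureTheory

noncomputable section

private lemma upos' (c x u : ℝ) (hc : 0 < c) (hx : 0 < x) (h : c ≤ x * u) : 0 < u := by
  rcases mul_pos_iff.1 (lt_of_lt_of_le hc h) with ⟨_, h2⟩ | ⟨h1, _⟩
  · exact h2
  · exact absurd hx (not_lt.2 h1.le)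

private lemma coreS (c x₁ x₂ u₁ u₂ : ℝ) (hc : 0 < c) (hx₁ : 0 < x₁) (hx₂ : 0 < x₂)
    (h1 : c ≤ x₁ * u₁) (h2 : c ≤ x₂ * u₂) : 2 * c ≤ x₁ * u₂ + x₂ * u₁ := by
  have hu₁ : 0 < u₁ := upos' c x₁ u₁ hc hx₁ h1
  have hu₂ : 0 < u₂ := upos' c x₂ u₂ hc hx₂ h2
  nlinarith [sq_nonneg (x₁*u₂ - x₂*u₁), mul_le_mul h1 h2 hc.le (by positivity),
    mul_pos hx₁ hu₂, mul_pos hx₂ hu₁, sq_nonneg (x₁*u₂ + x₂*u₁ - 2*c)]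

private lemma coreIneq (c t x₁ x₂ u₁ u₂ : ℝ) (hc : 0 < c) (ht : 0 ≤ t) (ht1 : t ≤ 1)
    (hx₁ : 0 < x₁) (hx₂ : 0 < x₂) (h1 : c ≤ x₁ * u₁) (h2 : c ≤ x₂ * u₂) :
    c ≤ (t * x₁ + (1 - t) * x₂) * (t * u₁ + (1 - t) * u₂) := by
  have hS := coreS c x₁ x₂ u₁ u₂ hc hx₁ hx₂ h1 h2
  nlinarith [mul_nonneg (mul_nonneg ht ht) (sub_nonneg.2 h1),
    mul_nonneg (mul_nonneg (sub_nonneg.2 ht1) (sub_nonneg.2 ht1)) (sub_nonneg.2 h2),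
    mul_nonneg (mul_nonneg ht (sub_nonneg.2 ht1)) (sub_nonneg.2 hS)]

private lemma coreEq (c t x₁ x₂ u₁ u₂ : ℝ) (hc : 0 < c) (ht : 0 < t) (ht1 : t < 1)
    (hx₁ : 0 < x₁) (hx₂ : 0 < x₂) (h1 : c ≤ x₁ * u₁) (h2 : c ≤ x₂ * u₂)
    (heq : (t * x₁ + (1 - t) * x₂) * (t * u₁ + (1 - t) * u₂) = c) :
    x₁ = x₂ ∧ u₁ = u₂ := by
  have hu₁ : 0 < u₁ := upos' c x₁ u₁ hc hx₁ h1
  have hu₂ : 0 < u₂ := upos' c x₂ u₂ hc hx₂ h2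
  have hS := coreS c x₁ x₂ u₁ u₂ hc hx₁ hx₂ h1 h2
  have hts : 0 < t * (1 - t) := mul_pos ht (by linarith)
  have hA : x₁ * u₁ = c := by
    nlinarith [mul_nonneg (mul_nonneg ht.le ht.le) (sub_nonneg.2 h1),
      mul_nonneg (mul_nonneg (by linarith : (0:ℝ) ≤ 1 - t) (by linarith : (0:ℝ) ≤ 1 - t)) (sub_nonneg.2 h2),
      mul_nonneg hts.le (sub_nonneg.2 hS), mul_pos ht ht]
  have hB : x₂ * u₂ = c := by
    nlinarith [mul_nonneg (mul_nonneg ht.le ht.le) (sub_nonneg.2 h1),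
      mul_nonneg (mul_nonneg (by linarith : (0:ℝ) ≤ 1 - t) (by linarith : (0:ℝ) ≤ 1 - t)) (sub_nonneg.2 h2),
      mul_nonneg hts.le (sub_nonneg.2 hS), mul_pos (show (0:ℝ) < 1 - t by linarith) (show (0:ℝ) < 1 - t by linarith)]
  have hD : x₁ * u₂ + x₂ * u₁ = 2 * c := by
    nlinarith [mul_nonneg (mul_nonneg ht.le ht.le) (sub_nonneg.2 h1),
      mul_nonneg (mul_nonneg (by linarith : (0:ℝ) ≤ 1 - t) (by linarith : (0:ℝ) ≤ 1 - t)) (sub_nonneg.2 h2),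
      mul_nonneg hts.le (sub_nonneg.2 hS)]
  have hP : (x₁ * u₂) * (x₂ * u₁) = c * c := by
    have : (x₁ * u₁) * (x₂ * u₂) = c * c := by rw [hA, hB]
    nlinarith [this]
  have hsq : (x₁ * u₂ - x₂ * u₁) ^ 2 = 0 := by nlinarith [hD, hP]
  have hE : x₁ * u₂ = x₂ * u₁ := by nlinarith [sq_nonneg (x₁*u₂ - x₂*u₁), hsq]
  have hE1 : x₁ * u₂ = c := by nlinarith
  have hu : u₂ = u₁ := by
    exact mul_left_cancel₀ (ne_of_gt hx₁) (hE1.trans hA.symm)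
  have hx : x₁ = x₂ := by
    have h2' : x₂ * u₁ = c := by rw [← hE, hE1]
    have : x₁ * u₁ = x₂ * u₁ := by rw [hA, h2']
    exact mul_right_cancel₀ (ne_of_gt hu₁) this
  exact ⟨hx, hu.symm⟩

/-- For points of `G_n`: `a(n-b) ≥ n-1` (integer version). -/
private lemma int_lb (n a b : ℤ) (hn : 2 ≤ n) (ha : 1 ≤ a) (hb : b ≤ n - 1)
    (hd : n ∣ a * b - 1) : n - 1 ≤ a * (n - b) := by
  obtain ⟨k, hk⟩ := hd
  have h1 : 1 ≤ a * (n - b) := by nlinarith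
  have hdvd : n ∣ a * (n - b) + 1 := ⟨a - k, by linear_combination -hk⟩
  have := Int.le_of_dvd (by linarith) hdvd
  linarith

/-- First convex superset: `{(x,y) : 1 ≤ x, (n-1) ≤ x(n-y)}`. -/
private lemma K1_convex (n : ℕ) (hn : 2 ≤ n) :
    Convex ℝ {p : ℝ × ℝ | 1 ≤ p.1 ∧ (n : ℝ) - 1 ≤ p.1 * ((n : ℝ) - p.2)} := by
  intro p hp q hq s t hs ht hst
  obtain ⟨hp1, hp2⟩ := hp
  obtain ⟨hq1, hq2⟩ := hq
  have hc : (0:ℝ) < (n:ℝ) - 1 := by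
    have : (2:ℝ) ≤ (n:ℝ) := by exact_mod_cast hn
    linarith
  have ht' : t = 1 - s := by linarith
  constructor
  · show 1 ≤ (s • p + t • q).1
    simp only [Prod.fst_add, Prod.smul_fst, smul_eq_mul]
    nlinarith
  · show (n : ℝ) - 1 ≤ (s • p + t • q).1 * ((n : ℝ) - (s • p + t • q).2)
    simp only [Prod.fst_add, Prod.smul_fst, Prod.snd_add, Prod.smul_snd, smul_eq_mul]
    have key := coreIneq ((n:ℝ) - 1) s p.1 q.1 ((n:ℝ) - p.2) ((n:ℝ) - q.2) hc hs
      (by linarith) (by linarith) (by linarith) hp2 hq2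
    subst ht'
    calc (n : ℝ) - 1 ≤ (s * p.1 + (1 - s) * q.1) * (s * ((n:ℝ) - p.2) + (1 - s) * ((n:ℝ) - q.2)) := key
    _ = (s * p.1 + (1 - s) * q.1) * ((n:ℝ) - (s * p.2 + (1 - s) * q.2)) := by ring

private lemma K2_convex (n : ℕ) (hn : 2 ≤ n) :
    Convex ℝ {p : ℝ × ℝ | 1 ≤ p.2 ∧ (n : ℝ) - 1 ≤ p.2 * ((n : ℝ) - p.1)} := by
  intro p hp q hq s t hs ht hst
  obtain ⟨hp1, hp2⟩ := hp
  obtain ⟨hq1, hq2⟩ := hq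
  have hc : (0:ℝ) < (n:ℝ) - 1 := by
    have : (2:ℝ) ≤ (n:ℝ) := by exact_mod_cast hn
    linarith
  have ht' : t = 1 - s := by linarith
  constructor
  · show 1 ≤ (s • p + t • q).2
    simp only [Prod.snd_add, Prod.smul_snd, smul_eq_mul]
    nlinarith
  · show (n : ℝ) - 1 ≤ (s • p + t • q).2 * ((n : ℝ) - (s • p + t • q).1)
    simp only [Prod.fst_add, Prod.smul_fst, Prod.snd_add, Prod.smul_snd, smul_eq_mul]
    have key := coreIneq ((n:ℝ) - 1) s p.2 q.2 ((n:ℝ) - p.1) ((n:ℝ) - q.1) hc hs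
      (by linarith) (by linarith) (by linarith) hp2 hq2
    subst ht'
    calc (n : ℝ) - 1 ≤ (s * p.2 + (1 - s) * q.2) * (s * ((n:ℝ) - p.1) + (1 - s) * ((n:ℝ) - q.1)) := key
    _ = (s * p.2 + (1 - s) * q.2) * ((n:ℝ) - (s * p.1 + (1 - s) * q.1)) := by ring

private lemma points_sub_K1 (n : ℕ) (hn : 2 ≤ n) :
    modPoints n ⊆ {p : ℝ × ℝ | 1 ≤ p.1 ∧ (n : ℝ) - 1 ≤ p.1 * ((n : ℝ) - p.2)} := by
  rintro p ⟨a, b, ha1, ha2, hb1, hb2, hd, rfl⟩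
  have hn' : 2 ≤ (n : ℤ) := by exact_mod_cast hn
  have h := int_lb n a b hn' ha1 hb2 hd
  constructor
  · show (1:ℝ) ≤ (a:ℝ); exact_mod_cast ha1
  · show (n : ℝ) - 1 ≤ (a:ℝ) * ((n : ℝ) - (b:ℝ))
    exact_mod_cast h

private lemma points_sub_K2 (n : ℕ) (hn : 2 ≤ n) :
    modPoints n ⊆ {p : ℝ × ℝ | 1 ≤ p.2 ∧ (n : ℝ) - 1 ≤ p.2 * ((n : ℝ) - p.1)} := by
  rintro p ⟨a, b, ha1, ha2, hb1, hb2, hd, rfl⟩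
  have hn' : 2 ≤ (n : ℤ) := by exact_mod_cast hn
  have hd' : (n:ℤ) ∣ b * a - 1 := by rwa [mul_comm] at hd
  have h := int_lb n b a hn' hb1 ha2 hd'
  constructor
  · show (1:ℝ) ≤ (b:ℝ); exact_mod_cast hb1
  · show (n : ℝ) - 1 ≤ (b:ℝ) * ((n : ℝ) - (a:ℝ))
    exact_mod_cast h

private lemma vertex1 (n : ℕ) (hn : 2 ≤ n) (a b : ℤ) (ha1 : 1 ≤ a) (ha2 : a ≤ (n : ℤ) - 1)
    (hb1 : 1 ≤ b) (hb2 : b ≤ (n : ℤ) - 1) (hd : (n : ℤ) ∣ a * b - 1)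
    (hab : a * ((n : ℤ) - b) = (n : ℤ) - 1) :
    ((a : ℝ), (b : ℝ)) ∈ modVertices n := by
  have hmem : ((a : ℝ), (b : ℝ)) ∈ modPoints n := ⟨a, b, ha1, ha2, hb1, hb2, hd, rfl⟩
  have hc : (0:ℝ) < (n:ℝ) - 1 := by
    have : (2:ℝ) ≤ (n:ℝ) := by exact_mod_cast hn
    linarith
  have hsub : modHull n ⊆ {p : ℝ × ℝ | 1 ≤ p.1 ∧ (n : ℝ) - 1 ≤ p.1 * ((n : ℝ) - p.2)} :=
    convexHull_min (points_sub_K1 n hn) (K1_convex n hn)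
  rw [modVertices, mem_extremePoints]
  refine ⟨subset_convexHull ℝ _ hmem, ?_⟩
  rintro p hp q hq ⟨s, t, hs, ht, hst, hpq⟩
  obtain ⟨hp1, hp2⟩ := hsub hp
  obtain ⟨hq1, hq2⟩ := hsub hq
  have ht' : t = 1 - s := by linarith
  have h1 : s * p.1 + t * q.1 = (a:ℝ) := congrArg Prod.fst hpq
  have h2 : s * p.2 + t * q.2 = (b:ℝ) := congrArg Prod.snd hpq
  have habR : (a:ℝ) * ((n:ℝ) - (b:ℝ)) = (n:ℝ) - 1 := by exact_mod_cast hab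
  subst ht'
  have heq : (s * p.1 + (1 - s) * q.1) * (s * ((n:ℝ) - p.2) + (1 - s) * ((n:ℝ) - q.2))
      = (n:ℝ) - 1 := by
    rw [h1]; rw [show s * ((n:ℝ) - p.2) + (1 - s) * ((n:ℝ) - q.2) = (n:ℝ) - (s * p.2 + (1-s) * q.2) by ring, h2, habR]
  obtain ⟨hx, hu⟩ := coreEq ((n:ℝ)-1) s p.1 q.1 ((n:ℝ) - p.2) ((n:ℝ) - q.2) hc hs
    (by linarith) (by linarith) (by linarith) hp2 hq2 heq
  have hy : p.2 = q.2 := by linarith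
  have hpq' : p = q := Prod.ext hx hy
  have hp_eq : p = ((a:ℝ), (b:ℝ)) := by
    rw [← hpq, hpq']
    ext <;> simp
  exact ⟨hp_eq, hpq' ▸ hp_eq⟩

private lemma vertex2 (n : ℕ) (hn : 2 ≤ n) (a b : ℤ) (ha1 : 1 ≤ a) (ha2 : a ≤ (n : ℤ) - 1)
    (hb1 : 1 ≤ b) (hb2 : b ≤ (n : ℤ) - 1) (hd : (n : ℤ) ∣ a * b - 1)
    (hab : b * ((n : ℤ) - a) = (n : ℤ) - 1) :
    ((a : ℝ), (b : ℝ)) ∈ modVertices n := by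
  have hmem : ((a : ℝ), (b : ℝ)) ∈ modPoints n := ⟨a, b, ha1, ha2, hb1, hb2, hd, rfl⟩
  have hc : (0:ℝ) < (n:ℝ) - 1 := by
    have : (2:ℝ) ≤ (n:ℝ) := by exact_mod_cast hn
    linarith
  have hsub : modHull n ⊆ {p : ℝ × ℝ | 1 ≤ p.2 ∧ (n : ℝ) - 1 ≤ p.2 * ((n : ℝ) - p.1)} :=
    convexHull_min (points_sub_K2 n hn) (K2_convex n hn)
  rw [modVertices, mem_extremePoints]
  refine ⟨subset_convexHull ℝ _ hmem, ?_⟩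
  rintro p hp q hq ⟨s, t, hs, ht, hst, hpq⟩
  obtain ⟨hp1, hp2⟩ := hsub hp
  obtain ⟨hq1, hq2⟩ := hsub hq
  have ht' : t = 1 - s := by linarith
  have h1 : s * p.1 + t * q.1 = (a:ℝ) := congrArg Prod.fst hpq
  have h2 : s * p.2 + t * q.2 = (b:ℝ) := congrArg Prod.snd hpq
  have habR : (b:ℝ) * ((n:ℝ) - (a:ℝ)) = (n:ℝ) - 1 := by exact_mod_cast hab
  subst ht'
  have heq : (s * p.2 + (1 - s) * q.2) * (s * ((n:ℝ) - p.1) + (1 - s) * ((n:ℝ) - q.1))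
      = (n:ℝ) - 1 := by
    rw [h2]; rw [show s * ((n:ℝ) - p.1) + (1 - s) * ((n:ℝ) - q.1) = (n:ℝ) - (s * p.1 + (1-s) * q.1) by ring, h1, habR]
  obtain ⟨hy, hu⟩ := coreEq ((n:ℝ)-1) s p.2 q.2 ((n:ℝ) - p.1) ((n:ℝ) - q.1) hc hs
    (by linarith) (by linarith) (by linarith) hp2 hq2 heq
  have hx : p.1 = q.1 := by linarith
  have hpq' : p = q := Prod.ext hx hy
  have hp_eq : p = ((a:ℝ), (b:ℝ)) := by
    rw [← hpq, hpq']
    ext <;> simp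
  exact ⟨hp_eq, hpq' ▸ hp_eq⟩

theorem stmt6 (n : ℕ) (hn : 2 ≤ n) :
    (∀ a b : ℤ, 1 ≤ a → a ≤ (n : ℤ) - 1 → 1 ≤ b → b ≤ (n : ℤ) - 1 →
      (n : ℤ) ∣ a * b - 1 →
      (a * ((n : ℤ) - b) = (n : ℤ) - 1 ∨ b * ((n : ℤ) - a) = (n : ℤ) - 1) →
      ((a : ℝ), (b : ℝ)) ∈ modVertices n) ∧
    (∀ d : ℕ, d ∣ n - 1 → 1 ≤ d →
      ((d : ℝ), (n : ℝ) - (((n - 1) / d : ℕ) : ℝ)) ∈ modVertices n) := by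
  constructor
  · intro a b ha1 ha2 hb1 hb2 hd hor
    rcases hor with h | h
    · exact vertex1 n hn a b ha1 ha2 hb1 hb2 hd h
    · exact vertex2 n hn a b ha1 ha2 hb1 hb2 hd h
  · intro d hdvd hd1
    set e : ℕ := (n - 1) / d with he
    have hn1 : 1 ≤ n - 1 := by omega
    have hde : d * e = n - 1 := Nat.mul_div_cancel' hdvd
    have hedvd : e ∣ n - 1 := ⟨d, by rw [← hde]; ring⟩
    have hd_le : d ≤ n - 1 := Nat.le_of_dvd hn1 hdvd
    have he1 : 1 ≤ e := Nat.pos_of_dvd_of_pos hedvd hn1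
    have he_le : e ≤ n - 1 := Nat.le_of_dvd hn1 hedvd
    have hdeZ : (d : ℤ) * (e : ℤ) = (n : ℤ) - 1 := by
      have h1 : ((d : ℤ)) * ((e : ℤ)) = ((n - 1 : ℕ) : ℤ) := by exact_mod_cast hde
      rwa [Nat.cast_sub (by omega : 1 ≤ n)] at h1
    have key := vertex1 n hn (d : ℤ) ((n : ℤ) - (e : ℤ))
      (by exact_mod_cast hd1)
      (by have : (d:ℤ) ≤ ((n-1:ℕ):ℤ) := by exact_mod_cast hd_le
          rwa [Nat.cast_sub (by omega : 1 ≤ n)] at this)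
      (by have : (e:ℤ) ≤ ((n-1:ℕ):ℤ) := by exact_mod_cast he_le
          rw [Nat.cast_sub (by omega : 1 ≤ n)] at this
          omega)
      (by have : (1:ℤ) ≤ (e:ℤ) := by exact_mod_cast he1
          omega)
      (⟨(d:ℤ) - 1, by linear_combination -hdeZ⟩)
      (by linear_combination hdeZ)
    convert key using 2
    push_cast
    ring
    push_cast
    rfl
end
end

section
/- For every integer n ≥ 2, v(n) ≥ 2(τ(n−1) − 1). -/
open Filter MeasureTheory

noncomputable section

/-- `v(n)`, the number of vertices of `C_n`. -/
def numVertices (n : ℕ) : ℕ := (modVertices n).ncard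

/-- A point of `S` strictly maximizing a linear functional over `S` is an extreme point
of the convex hull of `S`. -/
lemma vertex_of_sep {E : Type*} [AddCommGroup E] [Module ℝ E]
    (S : Set E) (p : E) (hp : p ∈ S)
    (f : E → ℝ) (hf : IsLinearMap ℝ f)
    (hsep : ∀ q ∈ S, q ≠ p → f q < f p) :
    p ∈ Set.extremePoints ℝ (convexHull ℝ S) := by
  have hle : convexHull ℝ S ⊆ {w | f w ≤ f p} := by
    apply convexHull_min _ (convex_halfSpace_le hf (f p))
    intro q hq
    rcases eq_or_ne q p with rfl | h
    · simp
    · exact le_of_lt (hsep q hq h)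
  have key : ∀ x ∈ convexHull ℝ S, f x = f p → x = p := by
    intro x hx hfx
    rcases Set.eq_empty_or_nonempty (S \ {p}) with hS | hS
    · have hsub : S ⊆ {p} := by
        intro q hq
        by_contra h
        have : q ∈ S \ {p} := ⟨hq, h⟩
        rw [hS] at this
        exact this
      have := convexHull_mono hsub hx
      rwa [convexHull_singleton, Set.mem_singleton_iff] at this
    · have hSins : S = insert p (S \ {p}) := by
        rw [Set.insert_diff_singleton, Set.insert_eq_self.2 hp]
      rw [hSins, convexHull_insert hS, mem_convexJoin] at hx
      obtain ⟨a, ha, b, hb, hx⟩ := hx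
      rw [Set.mem_singleton_iff] at ha
      obtain ⟨u, v, hu, hv, huv, hx⟩ := hx
      have hblt : f b < f p := by
        have hsub : convexHull ℝ (S \ {p}) ⊆ {w | f w < f p} := by
          apply convexHull_min _ (convex_halfSpace_lt hf (f p))
          intro q hq
          exact hsep q hq.1 hq.2
        exact hsub hb
      have hfxc : f x = u * f p + v * f b := by
        rw [← hx, hf.map_add, hf.map_smul, hf.map_smul, ha]; simp [smul_eq_mul]
      have hv0 : v = 0 := by
        by_contra hv'
        have hvpos : 0 < v := lt_of_le_of_ne hv (Ne.symm hv')
        have := mul_lt_mul_of_pos_left hblt hvpos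
        have hsum : u * f p + v * f p = f p := by rw [← add_mul, huv, one_mul]
        linarith
      have hu1 : u = 1 := by linarith
      rw [← hx, hv0, hu1, ha]; simp
  rw [mem_extremePoints]
  refine ⟨subset_convexHull ℝ S hp, ?_⟩
  intro x₁ hx₁ x₂ hx₂ hseg
  obtain ⟨u, v, hu, hv, huv, hseg⟩ := hseg
  have h1 : f x₁ ≤ f p := hle hx₁
  have h2 : f x₂ ≤ f p := hle hx₂
  have hfp : f p = u * f x₁ + v * f x₂ := by
    rw [← hseg, hf.map_add, hf.map_smul, hf.map_smul]; simp [smul_eq_mul]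
  have e1 : f x₁ = f p := by
    by_contra h
    have hlt : f x₁ < f p := lt_of_le_of_ne h1 h
    have := mul_lt_mul_of_pos_left hlt hu
    have := mul_le_mul_of_nonneg_left h2 hv.le
    have hsum : u * f p + v * f p = f p := by rw [← add_mul, huv, one_mul]
    linarith
  have e2 : f x₂ = f p := by
    by_contra h
    have hlt : f x₂ < f p := lt_of_le_of_ne h2 h
    have := mul_lt_mul_of_pos_left hlt hv
    have := mul_le_mul_of_nonneg_left h1 hu.le
    have hsum : u * f p + v * f p = f p := by rw [← add_mul, huv, one_mul]
    linarith
  exact ⟨key x₁ hx₁ e1, key x₂ hx₂ e2⟩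

/-- The key integer inequality: all points of `G_n` lie strictly below the tangent line
to the concave curve `y = n - (n-1)/x` at `x = d`, except the point of tangency. -/
lemma key_ineq (n d e a b : ℤ) (hn : 2 ≤ n) (hd : 1 ≤ d) (he : 1 ≤ e)
    (hde : d * e = n - 1) (ha1 : 1 ≤ a) (ha2 : a ≤ n - 1) (hb1 : 1 ≤ b)
    (hb2 : b ≤ n - 1) (hdvd : (n:ℤ) ∣ a * b - 1) (hne : ¬(a = d ∧ b = n - e)) :
    d^2 * b - (n-1) * a < d^2 * n - 2*(n-1)*d := by
  obtain ⟨k, hk⟩ := hdvd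
  have hk1 : k ≤ a - 1 := by nlinarith
  have hkey : a * (n - b) ≥ n - 1 := by nlinarith
  set m := n - 1 with hm
  have hid : a * (d^2*(n-b) + m*a - 2*m*d) = m*(a-d)^2 + d^2*(a*(n-b) - m) := by ring
  rcases eq_or_ne a d with rfl | had
  · have hbne : b ≠ n - e := fun h => hne ⟨rfl, h⟩
    have h1 : a * (n - b) ≠ m := by
      intro h
      apply hbne
      have : a * (n - b) = a * e := by rw [h, ← hde]
      have := mul_left_cancel₀ (by omega : a ≠ 0) this
      omega
    have h2 : a * (n - b) ≥ m + 1 := by omega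
    nlinarith
  · have h1 : (a - d)^2 ≥ 1 := by
      have : a - d ≠ 0 := fun h => had (by omega)
      rcases lt_or_gt_of_ne this with h | h
      · nlinarith
      · nlinarith
    nlinarith

/-- For each factorization `d * e = n - 1`, the points `(d, n - e)` and `(n - e, d)`
are vertices of `C_n`. -/
lemma point_mem_vertices (n : ℕ) (hn : 2 ≤ n) (d e : ℤ) (hd : 1 ≤ d) (he : 1 ≤ e)
    (hde : d * e = (n:ℤ) - 1) :
    (((d:ℝ), (n:ℝ) - (e:ℝ)) ∈ modVertices n) ∧ (((n:ℝ) - (e:ℝ), (d:ℝ)) ∈ modVertices n) := by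
  have hnZ : (2:ℤ) ≤ (n:ℤ) := by exact_mod_cast hn
  have hd2 : d ≤ (n:ℤ) - 1 := by nlinarith
  have he2 : e ≤ (n:ℤ) - 1 := by nlinarith
  have hdeR : (d:ℝ) * (e:ℝ) = (n:ℝ) - 1 := by exact_mod_cast hde
  have hmem : (((d:ℝ), (n:ℝ) - (e:ℝ)) : ℝ × ℝ) ∈ modPoints n := by
    refine ⟨d, (n:ℤ) - e, hd, hd2, by omega, by omega, ⟨d - 1, by linear_combination -hde⟩, ?_⟩
    push_cast
    rfl
  have hmem' : (((n:ℝ) - (e:ℝ), (d:ℝ)) : ℝ × ℝ) ∈ modPoints n := by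
    refine ⟨(n:ℤ) - e, d, by omega, by omega, hd, hd2,
      ⟨d - 1, by linear_combination -hde⟩, ?_⟩
    push_cast
    rfl
  constructor
  · apply vertex_of_sep (modPoints n) _ hmem (fun q => (d:ℝ)^2 * q.2 - ((n:ℝ)-1) * q.1)
    · constructor
      · intro x y; simp [Prod.fst_add, Prod.snd_add]; ring
      · intro c x; simp [Prod.smul_fst, Prod.smul_snd, smul_eq_mul]; ring
    · rintro q ⟨a, b, ha1, ha2, hb1, hb2, hdvd, rfl⟩ hqne
      have hne : ¬(a = d ∧ b = (n:ℤ) - e) := by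
        rintro ⟨rfl, rfl⟩
        apply hqne
        push_cast
        rfl
      have hZ := key_ineq n d e a b hnZ hd he hde ha1 ha2 hb1 hb2 hdvd hne
      have hR : (d:ℝ)^2 * (b:ℝ) - ((n:ℝ)-1) * (a:ℝ) < (d:ℝ)^2 * (n:ℝ) - 2*((n:ℝ)-1)*(d:ℝ) := by
        exact_mod_cast hZ
      have hde2 : (d:ℝ)^2*(e:ℝ) = (d:ℝ)*((n:ℝ)-1) := by linear_combination (d:ℝ)*hdeR
      simp only
      linarith
  · apply vertex_of_sep (modPoints n) _ hmem' (fun q => (d:ℝ)^2 * q.1 - ((n:ℝ)-1) * q.2)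
    · constructor
      · intro x y; simp [Prod.fst_add, Prod.snd_add]; ring
      · intro c x; simp [Prod.smul_fst, Prod.smul_snd, smul_eq_mul]; ring
    · rintro q ⟨a, b, ha1, ha2, hb1, hb2, hdvd, rfl⟩ hqne
      have hne : ¬(b = d ∧ a = (n:ℤ) - e) := by
        rintro ⟨rfl, rfl⟩
        apply hqne
        push_cast
        rfl
      have hdvd' : (n:ℤ) ∣ b * a - 1 := by rwa [mul_comm]
      have hZ := key_ineq n d e b a hnZ hd he hde hb1 hb2 ha1 ha2 hdvd' hne
      have hR : (d:ℝ)^2 * (a:ℝ) - ((n:ℝ)-1) * (b:ℝ) < (d:ℝ)^2 * (n:ℝ) - 2*((n:ℝ)-1)*(d:ℝ) := by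
        exact_mod_cast hZ
      have hde2 : (d:ℝ)^2*(e:ℝ) = (d:ℝ)*((n:ℝ)-1) := by linear_combination (d:ℝ)*hdeR
      simp only
      linarith

theorem stmt7 (n : ℕ) (hn : 2 ≤ n) :
    2 * ((n - 1).divisors.card - 1) ≤ numVertices n := by
  classical
  set m := n - 1 with hm
  have hm1 : 1 ≤ m := by omega
  have hmn : (m : ℤ) = (n : ℤ) - 1 := by
    rw [hm]; push_cast [Nat.cast_sub (by omega : 1 ≤ n)]; ring
  set F : ℕ → ℝ × ℝ := fun d => ((d:ℝ), (n:ℝ) - ((m/d : ℕ):ℝ)) with hF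
  set G : ℕ → ℝ × ℝ := fun d => ((n:ℝ) - ((m/d : ℕ):ℝ), (d:ℝ)) with hG
  set A := m.divisors.image F with hA
  set B := m.divisors.image G with hB
  have hfact : ∀ d ∈ m.divisors, 1 ≤ d ∧ d * (m/d) = m ∧ 1 ≤ m/d ∧ d ≤ m := by
    intro d hdmem
    rw [Nat.mem_divisors] at hdmem
    have h2 : d * (m/d) = m := Nat.mul_div_cancel' hdmem.1
    have h1 : 1 ≤ d := by
      rcases Nat.eq_zero_or_pos d with h | h
      · subst h; simp at h2; omega
      · exact h
    have h3 : 1 ≤ m / d := by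
      rcases Nat.eq_zero_or_pos (m/d) with h | h
      · rw [h, Nat.mul_zero] at h2; omega
      · exact h
    exact ⟨h1, h2, h3, Nat.le_of_dvd (by omega) hdmem.1⟩
  -- all these points are vertices
  have hsubV : ∀ p ∈ A ∪ B, p ∈ modVertices n := by
    intro p hp
    rw [Finset.mem_union] at hp
    rcases hp with hp | hp <;> rw [Finset.mem_image] at hp <;> obtain ⟨d, hdm, rfl⟩ := hp
    · obtain ⟨h1, h2, h3, _⟩ := hfact d hdm
      exact (point_mem_vertices n hn d (m/d) (by exact_mod_cast h1) (by exact_mod_cast h3)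
        (by rw [← hmn]; exact_mod_cast h2)).1
    · obtain ⟨h1, h2, h3, _⟩ := hfact d hdm
      exact (point_mem_vertices n hn d (m/d) (by exact_mod_cast h1) (by exact_mod_cast h3)
        (by rw [← hmn]; exact_mod_cast h2)).2
  -- injectivity
  have hFinj : Set.InjOn F ↑m.divisors := by
    intro x _ y _ hxy
    have := congrArg Prod.fst hxy
    simpa [hF] using Nat.cast_injective this
  have hGinj : Set.InjOn G ↑m.divisors := by
    intro x _ y _ hxy
    have := congrArg Prod.snd hxy
    simpa [hG] using Nat.cast_injective this
  -- intersection is small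
  have hinter : A ∩ B ⊆ ({((1:ℝ),(1:ℝ)), ((m:ℝ),(m:ℝ))} : Finset (ℝ × ℝ)) := by
    intro p hp
    rw [Finset.mem_inter] at hp
    obtain ⟨hpA, hpB⟩ := hp
    rw [Finset.mem_image] at hpA hpB
    obtain ⟨d, hdm, rfl⟩ := hpA
    obtain ⟨d', hdm', hFG⟩ := hpB
    obtain ⟨hd1, hde, he1, hdm2⟩ := hfact d hdm
    obtain ⟨hd1', hde', he1', hdm2'⟩ := hfact d' hdm'
    set e := m / d
    set e' := m / d'
    -- from the coordinates: d + e' = n and d' + e = n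
    have hc1 : (d':ℝ) + (e:ℝ) = (n:ℝ) := by
      have := congrArg Prod.snd hFG
      simp only [hF, hG] at this
      linarith [this.symm]
    have hc2 : (d:ℝ) + (e':ℝ) = (n:ℝ) := by
      have := congrArg Prod.fst hFG
      simp only [hF, hG] at this
      linarith [this.symm]
    have hn1 : d' + e = n := by exact_mod_cast hc1
    have hn2 : d + e' = n := by exact_mod_cast hc2
    -- in ℤ: d*(n-d') = n-1 and d'*(n-d) = n-1
    have hz1 : (d:ℤ) * ((n:ℤ) - d') = (n:ℤ) - 1 := by
      have : (e:ℤ) = (n:ℤ) - d' := by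
        have : (d':ℤ) + (e:ℤ) = (n:ℤ) := by exact_mod_cast hn1
        linarith
      rw [← this, ← hmn]
      exact_mod_cast hde
    have hz2 : (d':ℤ) * ((n:ℤ) - d) = (n:ℤ) - 1 := by
      have : (e':ℤ) = (n:ℤ) - d := by
        have : (d:ℤ) + (e':ℤ) = (n:ℤ) := by exact_mod_cast hn2
        linarith
      rw [← this, ← hmn]
      exact_mod_cast hde'
    have hdd' : (d:ℤ) = (d':ℤ) := by
      have hnpos : (0:ℤ) < (n:ℤ) := by exact_mod_cast (by omega : 0 < n)
      have h : ((d:ℤ) - d') * (n:ℤ) = 0 := by linarith [hz1, hz2, mul_comm (d:ℤ) (d':ℤ)]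
      rcases mul_eq_zero.1 h with h | h
      · linarith
      · linarith
    have hquad : ((d:ℤ) - 1) * ((d:ℤ) - ((n:ℤ) - 1)) = 0 := by
      have := hz1
      rw [← hdd'] at this
      linear_combination -this
    have hd1m : d = 1 ∨ d = m := by
      rcases mul_eq_zero.1 hquad with h | h
      · left
        have : (d:ℤ) = 1 := by linarith
        exact_mod_cast this
      · right
        have : (d:ℤ) = (m:ℤ) := by rw [hmn]; linarith
        exact_mod_cast this
    have hmR : (m:ℝ) = (n:ℝ) - 1 := by exact_mod_cast hmn
    rcases hd1m with rfl | rfl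
    · have hFm : (n:ℝ) - ((m/1 : ℕ):ℝ) = 1 := by
        rw [Nat.div_one]; linarith
      have hq : F 1 = ((1:ℝ), (1:ℝ)) := by
        simp only [hF]; rw [hFm]; norm_num
      rw [hq]; simp
    · have hFm : (n:ℝ) - ((m/m : ℕ):ℝ) = (m:ℝ) := by
        rw [Nat.div_self (by omega : 0 < m)]; push_cast; linarith
      have hq : F m = ((m:ℝ), (m:ℝ)) := by
        simp only [hF]; rw [hFm]
      rw [hq]; simp
  -- finiteness
  have hPfin : (modPoints n).Finite := by
    have hsub : modPoints n ⊆
        (fun q : ℤ × ℤ => ((q.1:ℝ), (q.2:ℝ))) ''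
          (Set.Icc (1:ℤ) ((n:ℤ)-1) ×ˢ Set.Icc (1:ℤ) ((n:ℤ)-1)) := by
      rintro p ⟨a, b, ha1, ha2, hb1, hb2, _, rfl⟩
      exact ⟨(a, b), ⟨⟨ha1, ha2⟩, ⟨hb1, hb2⟩⟩, rfl⟩
    exact (((Set.finite_Icc _ _).prod (Set.finite_Icc _ _)).image _).subset hsub
  have hVfin : (modVertices n).Finite := by
    apply hPfin.subset
    rw [modVertices, modHull]
    exact extremePoints_convexHull_subset
  -- cardinalities
  have hle : (A ∪ B).card ≤ numVertices n := by
    rw [numVertices, ← Set.ncard_coe_finset]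
    apply Set.ncard_le_ncard _ hVfin
    intro p hp
    exact hsubV p (by exact_mod_cast hp)
  have hcard_un : (A ∪ B).card + (A ∩ B).card = A.card + B.card :=
    Finset.card_union_add_card_inter A B
  have hAcard : A.card = m.divisors.card := Finset.card_image_of_injOn hFinj
  have hBcard : B.card = m.divisors.card := Finset.card_image_of_injOn hGinj
  have hint2 : (A ∩ B).card ≤ 2 := by
    apply le_trans (Finset.card_le_card hinter)
    apply le_trans (Finset.card_insert_le _ _)
    simp
  have hτ : 1 ≤ m.divisors.card :=
    Finset.card_pos.mpr ⟨1, Nat.one_mem_divisors.mpr (by omega)⟩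
  omega
end
end

section
/- Let n ≥ 3 be an integer such that T(n−1) ≤ 5. Then v(n) = 2(τ(n−1) − 1). In particular this holds for all n of the form n = 2^r·3^s·5^t + 1 with nonnegative integers r, s, t (with n ≥ 3). -/
open Filter MeasureTheory

noncomputable section

/-- `T(s)`, the maximal ratio `d_{i+1}/d_i` of consecutive divisors of `s`. -/
def Tratio (s : ℕ) : ℝ :=
  sSup {r : ℝ | ∃ d e : ℕ, d ∣ s ∧ e ∣ s ∧ d < e ∧
    (∀ f : ℕ, f ∣ s → ¬(d < f ∧ f < e)) ∧ r = (e : ℝ) / (d : ℝ)}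

set_option maxHeartbeats 1000000

namespace Stmt9Aux

/-- the upper-chain point for a divisor `d` of `s`, where `n = s+1`. -/
def Ppt (n s d : ℕ) : ℝ × ℝ := ((d : ℝ), (n : ℝ) - ((s / d : ℕ) : ℝ))

def FF (n s : ℕ) : Finset (ℝ × ℝ) :=
  (s.divisors.image (Ppt n s)) ∪ (s.divisors.image (fun d => (Ppt n s d).swap))

lemma Ppt_eq {s d : ℕ} (n : ℕ) (hd : d ∣ s) (hd0 : d ≠ 0) :
    Ppt n s d = ((d : ℝ), (n : ℝ) - (s : ℝ) / (d : ℝ)) := by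
  rw [Ppt, Nat.cast_div hd (by exact_mod_cast hd0)]

lemma swap_mem_modPoints {n : ℕ} {p : ℝ × ℝ} (hp : p ∈ modPoints n) :
    p.swap ∈ modPoints n := by
  obtain ⟨a, b, h1, h2, h3, h4, h5, rfl⟩ := hp
  exact ⟨b, a, h3, h4, h1, h2, by rwa [mul_comm], rfl⟩

lemma Ppt_mem_modPoints {n s d : ℕ} (hn : 3 ≤ n) (hsn : s + 1 = n) (hd : d ∈ s.divisors) :
    Ppt n s d ∈ modPoints n := by
  rw [Nat.mem_divisors] at hd
  obtain ⟨hdvd, hs0⟩ := hd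
  have hd0 : 0 < d := Nat.pos_of_dvd_of_pos hdvd (Nat.pos_of_ne_zero hs0)
  have hds : d ≤ s := Nat.le_of_dvd (Nat.pos_of_ne_zero hs0) hdvd
  have hq1 : 1 ≤ s / d := Nat.one_le_div_iff hd0 |>.mpr hds
  have hqs : s / d ≤ s := Nat.div_le_self s d
  have hmulN : d * (s / d) = s := Nat.mul_div_cancel' hdvd
  have hmul : (d : ℤ) * ((s / d : ℕ) : ℤ) = (s : ℤ) := by exact_mod_cast hmulN
  have hns : (n : ℤ) = (s : ℤ) + 1 := by exact_mod_cast hsn.symm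
  refine ⟨(d : ℤ), (n : ℤ) - ((s / d : ℕ) : ℤ), by exact_mod_cast hd0, by omega, by omega, by omega,
    ⟨(d : ℤ) - 1, ?_⟩, by push_cast; rfl⟩
  linear_combination -hmul + hns

lemma dichotomy {n : ℕ} {a b : ℤ} (hn : 3 ≤ n)
    (ha1 : 1 ≤ a) (ha2 : a ≤ (n:ℤ) - 1) (hb1 : 1 ≤ b) (hb2 : b ≤ (n:ℤ) - 1)
    (hdvd : (n:ℤ) ∣ a * b - 1) :
    a * ((n:ℤ) - b) = (n:ℤ) - 1 ∨ 2 * (n:ℤ) - 1 ≤ a * ((n:ℤ) - b) := by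
  obtain ⟨k, hk⟩ := hdvd
  have hn3 : (3:ℤ) ≤ (n:ℤ) := by exact_mod_cast hn
  have h1 : a * ((n:ℤ) - b) + 1 = (n:ℤ) * (a - k) := by linear_combination -hk
  have h2 : 1 ≤ a * ((n:ℤ) - b) := by nlinarith
  have h3 : 1 ≤ a - k := by nlinarith
  rcases eq_or_lt_of_le h3 with h | h
  · left
    have h4 : a * ((n:ℤ) - b) + 1 = (n:ℤ) * 1 := by rw [h1, ← h]
    linarith
  · right; nlinarith

lemma oncurve {n s : ℕ} {a b : ℤ} (hn : 3 ≤ n) (hsn : s + 1 = n)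
    (ha1 : 1 ≤ a) (hb2 : b ≤ (n:ℤ) - 1)
    (hc : a * ((n:ℤ) - b) = (n:ℤ) - 1) :
    ∃ d : ℕ, d ∈ s.divisors ∧ ((a:ℝ), (b:ℝ)) = Ppt n s d := by
  have hns : (n : ℤ) = (s : ℤ) + 1 := by exact_mod_cast hsn.symm
  have hs0 : s ≠ 0 := by omega
  lift a to ℕ using (by linarith) with d hd
  have hd0 : d ≠ 0 := by
    rintro rfl; simp at ha1
  have hdvdZ : (d:ℤ) ∣ (s:ℤ) := ⟨(n:ℤ) - b, by linarith [hc]⟩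
  have hdvd : d ∣ s := by exact_mod_cast hdvdZ
  have hmul : (d : ℤ) * ((s / d : ℕ) : ℤ) = (s : ℤ) := by
    exact_mod_cast Nat.mul_div_cancel' hdvd
  have hb : b = (n:ℤ) - ((s / d : ℕ) : ℤ) := by
    have h2 : (d:ℤ) * ((n:ℤ) - b) = (d:ℤ) * ((s / d : ℕ) : ℤ) := by
      rw [hmul]; linarith [hc]
    have := mul_left_cancel₀ (by exact_mod_cast hd0 : (d:ℤ) ≠ 0) h2
    linarith
  refine ⟨d, Nat.mem_divisors.mpr ⟨hdvd, hs0⟩, ?_⟩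
  rw [Ppt, Prod.mk.injEq]
  constructor
  · norm_num
  · rw [hb, Int.cast_sub, Int.cast_natCast, Int.cast_natCast]

/-- the linear functional `z ↦ c₁ z₁ + c₂ z₂`. -/
def lf (c₁ c₂ : ℝ) : (ℝ × ℝ) →ₗ[ℝ] ℝ :=
  c₁ • (LinearMap.fst ℝ ℝ ℝ) + c₂ • (LinearMap.snd ℝ ℝ ℝ)

lemma lf_apply (c₁ c₂ : ℝ) (z : ℝ × ℝ) : lf c₁ c₂ z = c₁ * z.1 + c₂ * z.2 := rfl

/-- AM-GM exposure: the functional `(s/d) x - d y` is minimized on `G` exactly at `Ppt d`. -/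
lemma functional_bound {n s d : ℕ} (hn : 3 ≤ n) (hsn : s + 1 = n) (hd : d ∈ s.divisors)
    {p : ℝ × ℝ} (hp : p ∈ modPoints n) :
    2*(s:ℝ) - d*n ≤ lf ((s:ℝ)/d) (-(d:ℝ)) p ∧
      (lf ((s:ℝ)/d) (-(d:ℝ)) p = 2*(s:ℝ) - d*n → p = Ppt n s d) := by
  rw [Nat.mem_divisors] at hd
  obtain ⟨hdvd, hs0'⟩ := hd
  have hs2 : 2 ≤ s := by omega
  have hd0 : 0 < d := Nat.pos_of_dvd_of_pos hdvd (by omega)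
  obtain ⟨a, b, ha1, ha2, hb1, hb2, hdvd', rfl⟩ := hp
  have hcurve := dichotomy hn ha1 ha2 hb1 hb2 hdvd'
  -- real variables
  set A : ℝ := (a : ℝ) with hA
  set B : ℝ := (n : ℝ) - (b : ℝ) with hB
  have hA1 : 1 ≤ A := by rw [hA]; exact_mod_cast ha1
  have hB1 : 1 ≤ B := by
    have : (b:ℝ) ≤ (n:ℝ) - 1 := by exact_mod_cast hb2
    simp [hB]; linarith
  have hd1 : 1 ≤ (d:ℝ) := by exact_mod_cast hd0
  have hs1 : 1 ≤ (s:ℝ) := by exact_mod_cast (by omega : 1 ≤ s)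
  have hsA : (s:ℝ) ≤ A * B := by
    have h1 : (n:ℝ) - 1 ≤ A * B := by
      rcases hcurve with h | h
      · have : (a:ℝ) * ((n:ℝ) - (b:ℝ)) = (n:ℝ) - 1 := by exact_mod_cast h
        rw [hA, hB, this]
      · have : 2*(n:ℝ) - 1 ≤ (a:ℝ) * ((n:ℝ) - (b:ℝ)) := by exact_mod_cast h
        have hn3 : (3:ℝ) ≤ (n:ℝ) := by exact_mod_cast hn
        rw [hA, hB]; linarith
    have : (s:ℝ) = (n:ℝ) - 1 := by
      have : ((s:ℝ)) + 1 = (n:ℝ) := by exact_mod_cast hsn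
      linarith
    linarith [h1, this]
  have hfval : lf ((s:ℝ)/d) (-(d:ℝ)) ((a:ℝ), (b:ℝ)) = ((s:ℝ)*A + (d:ℝ)^2*B - (d:ℝ)^2*(n:ℝ))/(d:ℝ) := by
    rw [lf_apply]
    field_simp [hA, hB]
    ring
  have hdR0 : (d:ℝ) ≠ 0 := by positivity
  constructor
  · rw [hfval]
    rw [le_div_iff₀ (by positivity : (0:ℝ) < (d:ℝ))]
    nlinarith [mul_nonneg (by linarith : (0:ℝ) ≤ (s:ℝ)) (sq_nonneg (A-(d:ℝ))),
      mul_nonneg (sq_nonneg (d:ℝ)) (by linarith : 0 ≤ A*B - (s:ℝ))]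
  · intro heq0
    rw [hfval, div_eq_iff hdR0] at heq0
    -- heq : s*A + d^2*B = 2*s*d
    have heq : (s:ℝ)*A + (d:ℝ)^2*B = 2*(s:ℝ)*(d:ℝ) := by nlinarith [heq0]
    have hsq : ((s:ℝ)*A - (d:ℝ)^2*B)^2 = 4*(s:ℝ)*(d:ℝ)^2*((s:ℝ) - A*B) := by
      linear_combination ((s:ℝ)*A + (d:ℝ)^2*B + 2*(s:ℝ)*(d:ℝ)) * heq
    have hz : ((s:ℝ)*A - (d:ℝ)^2*B)^2 = 0 := by
      have h1 : ((s:ℝ)*A - (d:ℝ)^2*B)^2 ≤ 0 := by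
        nlinarith [hsq, mul_nonneg (by positivity : (0:ℝ) ≤ 4*(s:ℝ)*(d:ℝ)^2)
          (by linarith : (0:ℝ) ≤ A*B - (s:ℝ))]
      exact le_antisymm h1 (sq_nonneg _)
    have e1 : (s:ℝ)*A = (d:ℝ)^2*B := by
      have hx0 := sq_eq_zero_iff.mp hz
      linarith [hx0]
    have hABs : A * B = (s:ℝ) := by
      have h2 : 4*(s:ℝ)*(d:ℝ)^2*((s:ℝ) - A*B) = 0 := by rw [← hsq, hz]
      have h3 : (s:ℝ) - A*B = 0 := by
        rcases mul_eq_zero.mp h2 with h | h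
        · exfalso; nlinarith
        · exact h
      linarith
    have hA2 : (s:ℝ) * A^2 = (s:ℝ) * (d:ℝ)^2 := by
      linear_combination A * e1 + (d:ℝ)^2 * hABs
    have hAd : A = (d:ℝ) := by
      have h4 : A^2 = (d:ℝ)^2 := mul_left_cancel₀ (by positivity) hA2
      have h5 : (A - d) * (A + d) = 0 := by linear_combination h4
      rcases mul_eq_zero.mp h5 with h | h
      · linarith
      · exfalso; linarith
    have hBv : B = (s:ℝ)/(d:ℝ) := by
      rw [hAd] at e1
      rw [eq_div_iff hdR0]
      have h6 : (d:ℝ) * ((d:ℝ)*B) = (d:ℝ) * (s:ℝ) := by linear_combination -e1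
      have h7 := mul_left_cancel₀ hdR0 h6
      linarith
    rw [Ppt_eq n hdvd (by omega), Prod.mk.injEq]
    constructor
    · exact hAd
    · have : (b:ℝ) = (n:ℝ) - B := by rw [hB]; ring
      rw [this, hBv]

/-- A point exposed by a linear functional on a finite set is an extreme point of the hull. -/
lemma extreme_helper {F : Finset (ℝ × ℝ)} {f : (ℝ × ℝ) →ₗ[ℝ] ℝ} {m : ℝ} {p : ℝ × ℝ}
    (hpF : p ∈ F) (hfp : f p = m) (hge : ∀ g ∈ F, m ≤ f g)
    (heq : ∀ g ∈ F, f g = m → g = p) :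
    p ∈ (convexHull ℝ (F : Set (ℝ × ℝ))).extremePoints ℝ := by
  have hhullge : ∀ z ∈ convexHull ℝ (F : Set (ℝ × ℝ)), m ≤ f z := by
    intro z hz
    have : convexHull ℝ (F : Set (ℝ × ℝ)) ⊆ {w | m ≤ f w} :=
      convexHull_min (fun g hg => hge g (Finset.mem_coe.mp hg)) (convex_halfSpace_ge f.isLinear m)
    exact this hz
  have hface : ∀ z ∈ convexHull ℝ (F : Set (ℝ × ℝ)), f z = m → z = p := by
    intro z hz hfz
    rw [Finset.convexHull_eq] at hz
    obtain ⟨w, hw0, hw1, hwz⟩ := hz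
    rw [Finset.centerMass_eq_of_sum_1 _ _ hw1] at hwz
    have hfz' : ∑ g ∈ F, w g * f g = m := by
      rw [← hfz, ← hwz]
      rw [map_sum]
      exact Finset.sum_congr rfl (fun g _ => by rw [_root_.map_smul, smul_eq_mul, id])
    have hzero : ∑ g ∈ F, w g * (f g - m) = 0 := by
      have hsum : ∑ g ∈ F, w g * m = m := by
        rw [← Finset.sum_mul, hw1, one_mul]
      calc ∑ g ∈ F, w g * (f g - m) = (∑ g ∈ F, w g * f g) - ∑ g ∈ F, w g * m := by
            rw [← Finset.sum_sub_distrib]; exact Finset.sum_congr rfl fun g _ => by ring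
        _ = 0 := by rw [hfz', hsum]; ring
    have hterm : ∀ g ∈ F, w g * (f g - m) = 0 := by
      intro g hg
      have := (Finset.sum_eq_zero_iff_of_nonneg (fun g hg =>
        mul_nonneg (hw0 g hg) (by linarith [hge g hg]))).mp hzero
      exact this g hg
    have hrepr : ∀ g ∈ F, w g • (id g : ℝ × ℝ) = w g • p := by
      intro g hg
      rcases eq_or_ne (w g) 0 with h | h
      · rw [h, zero_smul, zero_smul]
      · have : f g - m = 0 := by
          rcases mul_eq_zero.mp (hterm g hg) with h' | h'
          · exact absurd h' h
          · exact h'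
        rw [heq g hg (by linarith), id]
    rw [← hwz, Finset.sum_congr rfl hrepr, ← Finset.sum_smul, hw1, one_smul]
  rw [mem_extremePoints]
  refine ⟨subset_convexHull ℝ _ (Finset.mem_coe.mpr hpF), ?_⟩
  intro x₁ hx₁ x₂ hx₂ hseg
  obtain ⟨t, u, ht, hu, htu, hsum⟩ := hseg
  have hf1 : m ≤ f x₁ := hhullge x₁ hx₁
  have hf2 : m ≤ f x₂ := hhullge x₂ hx₂
  have hcomb : t * f x₁ + u * f x₂ = m := by
    rw [← hfp, ← hsum, map_add, _root_.map_smul, _root_.map_smul, smul_eq_mul, smul_eq_mul]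
  have e0 : t*(f x₁ - m) + u*(f x₂ - m) = 0 := by linear_combination hcomb + (-m)*htu
  have h1 : 0 ≤ t*(f x₁ - m) := mul_nonneg ht.le (by linarith)
  have h2 : 0 ≤ u*(f x₂ - m) := mul_nonneg hu.le (by linarith)
  have hfx1 : f x₁ = m := by
    have h3 : t*(f x₁ - m) = 0 := by linarith
    rcases mul_eq_zero.mp h3 with h | h
    · exact absurd h ht.ne'
    · linarith
  have hfx2 : f x₂ = m := by
    have h3 : u*(f x₂ - m) = 0 := by linarith
    rcases mul_eq_zero.mp h3 with h | h
    · exact absurd h hu.ne'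
    · linarith
  exact ⟨hface x₁ hx₁ hfx1, hface x₂ hx₂ hfx2⟩

lemma FF_subset {n s : ℕ} (hn : 3 ≤ n) (hsn : s + 1 = n) :
    (FF n s : Set (ℝ × ℝ)) ⊆ modPoints n := by
  intro p hp
  rw [Finset.mem_coe, FF, Finset.mem_union] at hp
  rcases hp with hp | hp
  · obtain ⟨d, hd, rfl⟩ := Finset.mem_image.mp hp
    exact Ppt_mem_modPoints hn hsn hd
  · obtain ⟨d, hd, rfl⟩ := Finset.mem_image.mp hp
    exact swap_mem_modPoints (Ppt_mem_modPoints hn hsn hd)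

lemma Ppt_mem_FF {n s d : ℕ} (hd : d ∈ s.divisors) : Ppt n s d ∈ FF n s :=
  Finset.mem_union_left _ (Finset.mem_image_of_mem _ hd)

lemma Ppt_swap_mem_FF {n s d : ℕ} (hd : d ∈ s.divisors) : (Ppt n s d).swap ∈ FF n s :=
  Finset.mem_union_right _ (Finset.mem_image_of_mem _ hd)

lemma FF_extreme {n s : ℕ} (hn : 3 ≤ n) (hsn : s + 1 = n) {p : ℝ × ℝ} (hp : p ∈ FF n s) :
    p ∈ (convexHull ℝ (FF n s : Set (ℝ × ℝ))).extremePoints ℝ := by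
  have hsub := FF_subset hn hsn
  rw [FF, Finset.mem_union] at hp
  rcases hp with hp | hp
  · obtain ⟨d, hd, rfl⟩ := Finset.mem_image.mp hp
    have hfp : lf ((s:ℝ)/d) (-(d:ℝ)) (Ppt n s d) = 2*(s:ℝ) - d*n := by
      have hdvd := (Nat.mem_divisors.mp hd).1
      have hd0 : d ≠ 0 := by
        rintro rfl
        exact absurd ((Nat.mem_divisors.mp hd).1) (by simpa using (Nat.mem_divisors.mp hd).2)
      rw [Ppt_eq n hdvd hd0, lf_apply]
      have hdR : (d:ℝ) ≠ 0 := by exact_mod_cast hd0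
      field_simp
      ring
    refine extreme_helper (Ppt_mem_FF hd) hfp ?_ ?_
    · exact fun g hg => (functional_bound hn hsn hd (hsub (Finset.mem_coe.mpr hg))).1
    · exact fun g hg h => (functional_bound hn hsn hd (hsub (Finset.mem_coe.mpr hg))).2 h
  · obtain ⟨d, hd, rfl⟩ := Finset.mem_image.mp hp
    -- use the swapped functional
    set f : (ℝ × ℝ) →ₗ[ℝ] ℝ :=
      (lf ((s:ℝ)/d) (-(d:ℝ))).comp ((LinearEquiv.prodComm ℝ ℝ ℝ : (ℝ×ℝ) ≃ₗ[ℝ] (ℝ×ℝ)) :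
        (ℝ×ℝ) →ₗ[ℝ] (ℝ×ℝ)) with hf
    have hfapp : ∀ z : ℝ × ℝ, f z = lf ((s:ℝ)/d) (-(d:ℝ)) z.swap := fun z => rfl
    have hfp : f (Ppt n s d).swap = 2*(s:ℝ) - d*n := by
      rw [hfapp, Prod.swap_swap]
      have hdvd := (Nat.mem_divisors.mp hd).1
      have hd0 : d ≠ 0 := by
        rintro rfl
        exact absurd ((Nat.mem_divisors.mp hd).1) (by simpa using (Nat.mem_divisors.mp hd).2)
      rw [Ppt_eq n hdvd hd0, lf_apply]
      have hdR : (d:ℝ) ≠ 0 := by exact_mod_cast hd0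
      field_simp
      ring
    refine extreme_helper (Ppt_swap_mem_FF hd) hfp ?_ ?_
    · intro g hg
      rw [hfapp]
      exact (functional_bound hn hsn hd (swap_mem_modPoints (hsub (Finset.mem_coe.mpr hg)))).1
    · intro g hg h
      rw [hfapp] at h
      have := (functional_bound hn hsn hd (swap_mem_modPoints (hsub (Finset.mem_coe.mpr hg)))).2 h
      calc g = g.swap.swap := (Prod.swap_swap g).symm
        _ = (Ppt n s d).swap := by rw [this]

lemma exists_consec {s : ℕ} (a : ℕ) (hs0 : s ≠ 0) (ha1 : 1 ≤ a) (ha2 : a < s) :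
    ∃ d e : ℕ, d ∈ s.divisors ∧ e ∈ s.divisors ∧ d ≤ a ∧ a < e ∧
      (∀ f : ℕ, f ∣ s → ¬(d < f ∧ f < e)) := by
  classical
  set D := s.divisors.filter (fun x => x ≤ a) with hD
  set E := s.divisors.filter (fun x => a < x) with hE
  have hD1 : (1:ℕ) ∈ D := by
    rw [hD, Finset.mem_filter, Nat.mem_divisors]
    exact ⟨⟨one_dvd s, hs0⟩, ha1⟩
  have hEs : s ∈ E := by
    rw [hE, Finset.mem_filter, Nat.mem_divisors]
    exact ⟨⟨dvd_rfl, hs0⟩, ha2⟩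
  set d := D.max' ⟨1, hD1⟩ with hd
  set e := E.min' ⟨s, hEs⟩ with he
  have hdD : d ∈ D := Finset.max'_mem _ _
  have heE : e ∈ E := Finset.min'_mem _ _
  rw [hD, Finset.mem_filter] at hdD
  rw [hE, Finset.mem_filter] at heE
  refine ⟨d, e, hdD.1, heE.1, hdD.2, heE.2, ?_⟩
  intro f hf ⟨hdf, hfe⟩
  rcases le_or_gt f a with h | h
  · have hfD : f ∈ D := by
      rw [hD, Finset.mem_filter, Nat.mem_divisors]; exact ⟨⟨hf, hs0⟩, h⟩
    exact absurd (Finset.le_max' D f hfD) (by omega)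
  · have hfE : f ∈ E := by
      rw [hE, Finset.mem_filter, Nat.mem_divisors]; exact ⟨⟨hf, hs0⟩, h⟩
    exact absurd (Finset.min'_le E f hfE) (by omega)

lemma ratio_le {s : ℕ} (hs : 2 ≤ s) (hT : Tratio s ≤ 5) {d e : ℕ}
    (hd : d ∣ s) (he : e ∣ s) (hde : d < e)
    (hcons : ∀ f : ℕ, f ∣ s → ¬(d < f ∧ f < e)) :
    (e : ℝ) ≤ 5 * d := by
  have hd0 : 0 < d := Nat.pos_of_dvd_of_pos hd (by omega)
  have hdR : (0:ℝ) < d := by exact_mod_cast hd0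
  have hmem : (e:ℝ)/d ∈ {r : ℝ | ∃ d' e' : ℕ, d' ∣ s ∧ e' ∣ s ∧ d' < e' ∧
      (∀ f : ℕ, f ∣ s → ¬(d' < f ∧ f < e')) ∧ r = (e' : ℝ) / (d' : ℝ)} :=
    ⟨d, e, hd, he, hde, hcons, rfl⟩
  have hbdd : BddAbove {r : ℝ | ∃ d' e' : ℕ, d' ∣ s ∧ e' ∣ s ∧ d' < e' ∧
      (∀ f : ℕ, f ∣ s → ¬(d' < f ∧ f < e')) ∧ r = (e' : ℝ) / (d' : ℝ)} := by
    refine ⟨(s:ℝ), fun r hr => ?_⟩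
    obtain ⟨d', e', hd', he', hde', _, rfl⟩ := hr
    have hd'0 : 0 < d' := Nat.pos_of_dvd_of_pos hd' (by omega)
    have he's : e' ≤ s := Nat.le_of_dvd (by omega) he'
    calc (e':ℝ)/(d':ℝ) ≤ (e':ℝ)/1 := by
          apply div_le_div_of_nonneg_left (by positivity) one_pos
          exact_mod_cast hd'0
      _ = (e':ℝ) := div_one _
      _ ≤ (s:ℝ) := by exact_mod_cast he's
  have h1 : (e:ℝ)/d ≤ Tratio s := by rw [Tratio]; exact le_csSup hbdd hmem
  have h2 : (e:ℝ)/d ≤ 5 := le_trans h1 hT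
  calc (e:ℝ) = ((e:ℝ)/d) * d := by field_simp
    _ ≤ 5 * d := by
        apply mul_le_mul_of_nonneg_right h2 hdR.le

lemma key_ineq {s d e x : ℝ} (hd : 1 ≤ d) (hdx : d ≤ x) (hxe : x ≤ e) (he : e ≤ 5*d)
    (hs : 1 ≤ s) : s*(x*(d+e-x)) ≤ (2*s+1)*(d*e) := by
  nlinarith [mul_nonneg (by linarith : (0:ℝ) ≤ s) (sq_nonneg (d+e-2*x)),
    mul_nonneg (mul_nonneg (by linarith : (0:ℝ) ≤ s) (by linarith : 0 ≤ 5*d - e))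
      (by linarith : 0 ≤ e - d),
    mul_pos (by linarith : (0:ℝ) < d) (by linarith : (0:ℝ) < e),
    mul_nonneg (by linarith : (0:ℝ) ≤ s) (sq_nonneg d)]

lemma seg2 {x l u b : ℝ} (h1 : l ≤ b) (h2 : b ≤ u) :
    ((x, b) : ℝ × ℝ) ∈ segment ℝ (x, l) (x, u) := by
  rcases eq_or_lt_of_le (h1.trans h2) with h | h
  · have hb : b = l := le_antisymm (h ▸ h2) h1
    rw [hb]
    exact left_mem_segment ℝ _ _
  · have hul : u - l ≠ 0 := by linarith
    refine ⟨(u - b)/(u - l), (b - l)/(u - l),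
      div_nonneg (by linarith) (by linarith), div_nonneg (by linarith) (by linarith),
      by field_simp; ring, ?_⟩
    simp only [Prod.smul_mk, Prod.mk_add_mk, smul_eq_mul, Prod.mk.injEq]
    constructor
    · field_simp
      ring
    · field_simp
      ring

lemma main_subset {n s : ℕ} (hn : 3 ≤ n) (hsn : s + 1 = n) (hT : Tratio s ≤ 5) :
    modPoints n ⊆ convexHull ℝ (FF n s : Set (ℝ × ℝ)) := by
  intro p hp
  obtain ⟨a, b, ha1, ha2, hb1, hb2, hdvd, rfl⟩ := hp
  have hs2 : 2 ≤ s := by omega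
  have hs0 : s ≠ 0 := by omega
  have hcv := convex_convexHull ℝ (FF n s : Set (ℝ × ℝ))
  have hsubFF : (FF n s : Set (ℝ × ℝ)) ⊆ convexHull ℝ (FF n s : Set (ℝ × ℝ)) :=
    subset_convexHull ℝ _
  have h1 := dichotomy hn ha1 ha2 hb1 hb2 hdvd
  have h2 := dichotomy hn hb1 hb2 ha1 ha2 (by rwa [mul_comm])
  rcases h1 with hcurve | h1
  · obtain ⟨d, hd, hpe⟩ := oncurve hn hsn ha1 hb2 hcurve
    rw [hpe]
    exact hsubFF (Finset.mem_coe.mpr (Ppt_mem_FF hd))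
  rcases h2 with hcurve2 | h2
  · obtain ⟨d, hd, hpe⟩ := oncurve hn hsn hb1 ha2 hcurve2
    have : ((a:ℝ), (b:ℝ)) = (Ppt n s d).swap := by
      rw [← hpe]; rfl
    rw [this]
    exact hsubFF (Finset.mem_coe.mpr (Ppt_swap_mem_FF hd))
  -- main case: both strict
  have hnZ : (3:ℤ) ≤ (n:ℤ) := by exact_mod_cast hn
  have haZ2 : 2 ≤ a := by
    by_contra hcon
    push_neg at hcon
    have haa : a = 1 := by omega
    rw [haa, one_mul] at h1
    omega
  have haZn : a ≤ (n:ℤ) - 2 := by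
    by_contra hcon
    push_neg at hcon
    have haa : a = (n:ℤ) - 1 := by omega
    rw [haa] at h2
    have : (n:ℤ) - ((n:ℤ)-1) = 1 := by ring
    rw [this, mul_one] at h2
    omega
  -- pass to naturals
  lift a to ℕ using (by linarith : (0:ℤ) ≤ a) with A hA
  set m : ℕ := n - A with hm
  have hAn : A ≤ n - 2 := by omega
  have hA2 : 2 ≤ A := by exact_mod_cast haZ2
  have hmZ : (m:ℤ) = (n:ℤ) - A := by
    rw [hm]; push_cast [Nat.cast_sub (by omega : A ≤ n)]; ring
  have hm2 : 2 ≤ m := by omega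
  have hms : m < s := by omega
  have hAs : A < s := by omega
  obtain ⟨d, e, hdm, hem, hdA, hAe, hcons⟩ := exists_consec A hs0 (by omega) hAs
  obtain ⟨d', e', hdm', hem', hdM, hMe, hcons'⟩ := exists_consec m hs0 (by omega) hms
  have hddvd := (Nat.mem_divisors.mp hdm).1
  have hedvd := (Nat.mem_divisors.mp hem).1
  have hddvd' := (Nat.mem_divisors.mp hdm').1
  have hedvd' := (Nat.mem_divisors.mp hem').1
  have hd0 : 0 < d := Nat.pos_of_dvd_of_pos hddvd (by omega)
  have he0 : 0 < e := Nat.pos_of_dvd_of_pos hedvd (by omega)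
  have hd0' : 0 < d' := Nat.pos_of_dvd_of_pos hddvd' (by omega)
  have he0' : 0 < e' := Nat.pos_of_dvd_of_pos hedvd' (by omega)
  have h5 : (e:ℝ) ≤ 5*d := ratio_le hs2 hT hddvd hedvd (by omega) hcons
  have h5' : (e':ℝ) ≤ 5*d' := ratio_le hs2 hT hddvd' hedvd' (by omega) hcons'
  -- real versions
  have hnR : (n:ℝ) = (s:ℝ) + 1 := by exact_mod_cast hsn.symm
  have hsR : (1:ℝ) ≤ s := by exact_mod_cast (by omega : 1 ≤ s)
  have hdR : (1:ℝ) ≤ d := by exact_mod_cast hd0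
  have heR : (1:ℝ) ≤ e := by exact_mod_cast he0
  have hdR' : (1:ℝ) ≤ d' := by exact_mod_cast hd0'
  have heR' : (1:ℝ) ≤ e' := by exact_mod_cast he0'
  have hdAR : (d:ℝ) ≤ A := by exact_mod_cast hdA
  have hAeR : (A:ℝ) ≤ e := by exact_mod_cast hAe.le
  have hdMR : (d':ℝ) ≤ (n:ℝ) - A := by
    have : (d':ℝ) ≤ m := by exact_mod_cast hdM
    have hmR : (m:ℝ) = (n:ℝ) - A := by exact_mod_cast hmZ
    linarith
  have hMeR : (n:ℝ) - A ≤ (e':ℝ) := by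
    have : (m:ℝ) ≤ e' := by exact_mod_cast hMe.le
    have hmR : (m:ℝ) = (n:ℝ) - A := by exact_mod_cast hmZ
    linarith
  have hdne : (d:ℝ) < (e:ℝ) := by exact_mod_cast (by omega : d < e)
  have hdne' : (d':ℝ) < (e':ℝ) := by exact_mod_cast (by omega : d' < e')
  have hAR1 : (1:ℝ) ≤ (A:ℝ) := by exact_mod_cast (by omega : 1 ≤ A)
  have hmR1 : (1:ℝ) ≤ (n:ℝ) - A := by linarith
  -- the integral inequalities, in ℝ
  have hineq1 : 2*(s:ℝ)+1 ≤ (A:ℝ)*((n:ℝ) - b) := by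
    have : (2*(n:ℤ)-1 : ℤ) ≤ A*((n:ℤ)-b) := h1
    have hcast : 2*(n:ℝ)-1 ≤ (A:ℝ)*((n:ℝ) - (b:ℝ)) := by exact_mod_cast this
    linarith
  have hineq2 : 2*(s:ℝ)+1 ≤ ((n:ℝ) - A)*(b:ℝ) := by
    have : (2*(n:ℤ)-1 : ℤ) ≤ b*((n:ℤ)-A) := h2
    have hcast : 2*(n:ℝ)-1 ≤ (b:ℝ)*((n:ℝ) - (A:ℝ)) := by exact_mod_cast this
    linarith
  have hbR1 : (1:ℝ) ≤ (b:ℝ) := by exact_mod_cast hb1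
  have hbRn : (b:ℝ) ≤ (n:ℝ)-1 := by exact_mod_cast hb2
  -- upper chord value
  set U : ℝ := (n:ℝ) - (s:ℝ)*((d:ℝ)+(e:ℝ)-(A:ℝ))/((d:ℝ)*(e:ℝ)) with hU
  set L : ℝ := (s:ℝ)*((d':ℝ)+(e':ℝ)-((n:ℝ)-(A:ℝ)))/((d':ℝ)*(e':ℝ)) with hL
  -- membership of chord points
  have hUmem : (((A:ℝ), U) : ℝ × ℝ) ∈ convexHull ℝ (FF n s : Set (ℝ × ℝ)) := by
    have hseg : (((A:ℝ), U) : ℝ × ℝ) ∈ segment ℝ (Ppt n s d) (Ppt n s e) := by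
      rw [Ppt_eq n hddvd (by omega), Ppt_eq n hedvd (by omega)]
      have hed : (e:ℝ) - d ≠ 0 := by linarith
      have hdn0 : (d:ℝ) ≠ 0 := by linarith
      have hen0 : (e:ℝ) ≠ 0 := by linarith
      refine ⟨((e:ℝ)-A)/((e:ℝ)-d), ((A:ℝ)-d)/((e:ℝ)-d),
        div_nonneg (by linarith) (by linarith), div_nonneg (by linarith) (by linarith),
        by field_simp; ring, ?_⟩
      simp only [Prod.smul_mk, Prod.mk_add_mk, smul_eq_mul, Prod.mk.injEq]
      constructor
      · field_simp
        ring
      · rw [hU]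
        field_simp
        ring
    exact hcv.segment_subset (hsubFF (Finset.mem_coe.mpr (Ppt_mem_FF hdm)))
      (hsubFF (Finset.mem_coe.mpr (Ppt_mem_FF hem))) hseg
  have hLmem : (((A:ℝ), L) : ℝ × ℝ) ∈ convexHull ℝ (FF n s : Set (ℝ × ℝ)) := by
    -- lower chain points
    have hc1dvd : s / e' ∣ s := ⟨e', (Nat.div_mul_cancel hedvd').symm⟩
    have hc2dvd : s / d' ∣ s := ⟨d', (Nat.div_mul_cancel hddvd').symm⟩
    have hc1m : s / e' ∈ s.divisors := Nat.mem_divisors.mpr ⟨hc1dvd, hs0⟩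
    have hc2m : s / d' ∈ s.divisors := Nat.mem_divisors.mpr ⟨hc2dvd, hs0⟩
    have hcc1 : s / (s / e') = e' := Nat.div_div_self hedvd' hs0
    have hcc2 : s / (s / d') = d' := Nat.div_div_self hddvd' hs0
    have he'0 : (e':ℝ) ≠ 0 := by linarith
    have hd'0 : (d':ℝ) ≠ 0 := by linarith
    have hP1 : (Ppt n s (s/e')).swap = (((n:ℝ) - e', (s:ℝ)/e') : ℝ × ℝ) := by
      rw [Ppt, Prod.swap_prod_mk, hcc1, Nat.cast_div hedvd' he'0]
    have hP2 : (Ppt n s (s/d')).swap = (((n:ℝ) - d', (s:ℝ)/d') : ℝ × ℝ) := by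
      rw [Ppt, Prod.swap_prod_mk, hcc2, Nat.cast_div hddvd' hd'0]
    have hseg : (((A:ℝ), L) : ℝ × ℝ) ∈
        segment ℝ (Ppt n s (s/e')).swap (Ppt n s (s/d')).swap := by
      rw [hP1, hP2]
      have hed : (e':ℝ) - d' ≠ 0 := by linarith
      refine ⟨(((n:ℝ)-A)-d')/((e':ℝ)-d'), ((e':ℝ)-((n:ℝ)-A))/((e':ℝ)-d'),
        div_nonneg (by linarith) (by linarith), div_nonneg (by linarith) (by linarith),
        by field_simp; ring, ?_⟩
      simp only [Prod.smul_mk, Prod.mk_add_mk, smul_eq_mul, Prod.mk.injEq]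
      constructor
      · field_simp
        ring
      · rw [hL]
        field_simp
        ring
    exact hcv.segment_subset (hsubFF (Finset.mem_coe.mpr (Ppt_swap_mem_FF hc1m)))
      (hsubFF (Finset.mem_coe.mpr (Ppt_swap_mem_FF hc2m))) hseg
  -- the point is between the chords
  have hAR0 : (0:ℝ) < (A:ℝ) := by linarith
  have hbU : (b:ℝ) ≤ U := by
    have hkey : (s:ℝ)*((A:ℝ)*((d:ℝ)+(e:ℝ)-(A:ℝ))) ≤ (2*(s:ℝ)+1)*((d:ℝ)*(e:ℝ)) :=
      key_ineq hdR hdAR hAeR h5 hsR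
    have hstep : (s:ℝ)*((d:ℝ)+(e:ℝ)-(A:ℝ))/((d:ℝ)*(e:ℝ)) ≤ (2*(s:ℝ)+1)/(A:ℝ) := by
      rw [div_le_div_iff₀ (by positivity) hAR0]
      nlinarith [hkey]
    have hb2' : (b:ℝ) ≤ (n:ℝ) - (2*(s:ℝ)+1)/(A:ℝ) := by
      rw [le_sub_iff_add_le, add_comm, ← le_sub_iff_add_le, div_le_iff₀ hAR0]
      nlinarith [hineq1]
    rw [hU]
    linarith
  have hbL : L ≤ (b:ℝ) := by
    have hkey : (s:ℝ)*(((n:ℝ)-(A:ℝ))*((d':ℝ)+(e':ℝ)-((n:ℝ)-(A:ℝ)))) ≤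
        (2*(s:ℝ)+1)*((d':ℝ)*(e':ℝ)) :=
      key_ineq hdR' hdMR hMeR h5' hsR
    have hMR0 : (0:ℝ) < (n:ℝ) - A := by linarith
    have hstep : L ≤ (2*(s:ℝ)+1)/((n:ℝ)-A) := by
      rw [hL, div_le_div_iff₀ (by positivity) hMR0]
      nlinarith [hkey]
    have hb2' : (2*(s:ℝ)+1)/((n:ℝ)-A) ≤ (b:ℝ) := by
      rw [div_le_iff₀ hMR0]
      nlinarith [hineq2]
    linarith
  have hfinal : (((A:ℝ), (b:ℝ)) : ℝ × ℝ) ∈ segment ℝ ((A:ℝ), L) ((A:ℝ), U) :=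
    seg2 hbL hbU
  exact hcv.segment_subset hLmem hUmem hfinal

lemma Ppt_one {n s : ℕ} (hn : 3 ≤ n) (hsn : s + 1 = n) :
    Ppt n s 1 = ((1:ℝ), (1:ℝ)) := by
  rw [Ppt, Nat.div_one, Prod.mk.injEq]
  have : (n:ℝ) = (s:ℝ) + 1 := by exact_mod_cast hsn.symm
  constructor
  · norm_num
  · rw [this]; ring

lemma Ppt_s {n s : ℕ} (hn : 3 ≤ n) (hsn : s + 1 = n) :
    Ppt n s s = ((s:ℝ), (s:ℝ)) := by
  have hs0 : 0 < s := by omega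
  rw [Ppt, Nat.div_self hs0, Prod.mk.injEq]
  have : (n:ℝ) = (s:ℝ) + 1 := by exact_mod_cast hsn.symm
  constructor
  · rfl
  · rw [this]; push_cast; ring

lemma card_FF {n s : ℕ} (hn : 3 ≤ n) (hsn : s + 1 = n) :
    (FF n s).card = 2 * (s.divisors.card - 1) := by
  classical
  have hs0 : s ≠ 0 := by omega
  have hs2 : 2 ≤ s := by omega
  have hnR : (n:ℝ) = (s:ℝ) + 1 := by exact_mod_cast hsn.symm
  set Fp := s.divisors.image (Ppt n s) with hFp
  set Fq := s.divisors.image (fun d => (Ppt n s d).swap) with hFq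
  have cardP : Fp.card = s.divisors.card := by
    rw [hFp]
    apply Finset.card_image_of_injOn
    intro d1 _ d2 _ h
    have : (d1:ℝ) = (d2:ℝ) := congrArg Prod.fst h
    exact_mod_cast this
  have cardQ : Fq.card = s.divisors.card := by
    rw [hFq]
    apply Finset.card_image_of_injOn
    intro d1 _ d2 _ h
    have : (d1:ℝ) = (d2:ℝ) := congrArg Prod.snd h
    exact_mod_cast this
  have hinter : Fp ∩ Fq = ({Ppt n s 1, Ppt n s s} : Finset (ℝ × ℝ)) := by
    ext p
    rw [Finset.mem_inter, Finset.mem_insert, Finset.mem_singleton]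
    constructor
    · rintro ⟨hp, hq⟩
      rw [hFp, Finset.mem_image] at hp
      rw [hFq, Finset.mem_image] at hq
      obtain ⟨d, hd, rfl⟩ := hp
      obtain ⟨c, hc, hqe⟩ := hq
      have hddvd := (Nat.mem_divisors.mp hd).1
      have hcdvd := (Nat.mem_divisors.mp hc).1
      have hd0 : 0 < d := Nat.pos_of_dvd_of_pos hddvd (by omega)
      have hc0 : 0 < c := Nat.pos_of_dvd_of_pos hcdvd (by omega)
      have hdR0 : (d:ℝ) ≠ 0 := by exact_mod_cast hd0.ne'
      have hcR0 : (c:ℝ) ≠ 0 := by exact_mod_cast hc0.ne'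
      rw [Ppt_eq n hddvd hd0.ne', Ppt_eq n hcdvd hc0.ne', Prod.swap_prod_mk,
        Prod.mk.injEq] at hqe
      obtain ⟨eq2, eq1⟩ := hqe
      -- eq2 : (n:ℝ) - s/c = d ;  eq1 : c = n - s/d  (orientation check below)
      have e1 : (d:ℝ)*(c:ℝ) = (n:ℝ)*c - s := by
        rw [← eq2]; field_simp
      have e2 : (c:ℝ)*(d:ℝ) = (n:ℝ)*d - s := by
        rw [eq1]; field_simp
      have hcd : (c:ℝ) = (d:ℝ) := by
        have h3 : (n:ℝ)*(c:ℝ) = (n:ℝ)*d := by linarith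
        have hn0 : (n:ℝ) ≠ 0 := by positivity
        exact mul_left_cancel₀ hn0 h3
      have hcdN : c = d := by exact_mod_cast hcd
      subst hcdN
      have hquad : ((c:ℝ)-1)*((c:ℝ)-(s:ℝ)) = 0 := by
        linear_combination e1 + (c:ℝ)*hnR
      rcases mul_eq_zero.mp hquad with h | h
      · left
        have : c = 1 := by
          have : (c:ℝ) = 1 := by linarith
          exact_mod_cast this
        rw [this]
      · right
        have : c = s := by
          have : (c:ℝ) = (s:ℝ) := by linarith
          exact_mod_cast this
        rw [this]
    · intro hp
      have h1m : (1:ℕ) ∈ s.divisors := Nat.mem_divisors.mpr ⟨one_dvd s, hs0⟩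
      have hsm : s ∈ s.divisors := Nat.mem_divisors.mpr ⟨dvd_rfl, hs0⟩
      have h11 := Ppt_one hn hsn
      have hss := Ppt_s hn hsn
      rcases hp with rfl | rfl
      · constructor
        · exact Finset.mem_image_of_mem _ h1m
        · rw [hFq, Finset.mem_image]
          exact ⟨1, h1m, by rw [h11]; rfl⟩
      · constructor
        · exact Finset.mem_image_of_mem _ hsm
        · rw [hFq, Finset.mem_image]
          exact ⟨s, hsm, by rw [hss]; rfl⟩
  have hne : Ppt n s 1 ≠ Ppt n s s := by
    rw [Ppt_one hn hsn, Ppt_s hn hsn]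
    intro h
    have : (1:ℝ) = (s:ℝ) := congrArg Prod.fst h
    have : (1:ℕ) = s := by exact_mod_cast this
    omega
  have hcard2 : (Fp ∩ Fq).card = 2 := by
    rw [hinter, Finset.card_insert_of_notMem (by simpa using hne), Finset.card_singleton]
  have hτ2 : 2 ≤ s.divisors.card := by
    have hsub : ({1, s} : Finset ℕ) ⊆ s.divisors := by
      intro x hx
      rw [Finset.mem_insert, Finset.mem_singleton] at hx
      rcases hx with rfl | rfl
      · exact Nat.mem_divisors.mpr ⟨one_dvd s, hs0⟩
      · exact Nat.mem_divisors.mpr ⟨dvd_rfl, hs0⟩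
    have : ({1, s} : Finset ℕ).card = 2 := by
      rw [Finset.card_insert_of_notMem (by simp; omega), Finset.card_singleton]
    calc 2 = ({1, s} : Finset ℕ).card := this.symm
      _ ≤ s.divisors.card := Finset.card_le_card hsub
  have hU := Finset.card_union_add_card_inter Fp Fq
  rw [cardP, cardQ, hcard2] at hU
  have : (FF n s).card = (Fp ∪ Fq).card := rfl
  omega

lemma prime_le_5 {p : ℕ} (hp : p.Prime) {r s t : ℕ} (hdvd : p ∣ 2^r*3^s*5^t) : p ≤ 5 := by
  rcases (Nat.Prime.dvd_mul hp).mp hdvd with h | h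
  · rcases (Nat.Prime.dvd_mul hp).mp h with h' | h'
    · have h2 : p ∣ 2 := hp.dvd_of_dvd_pow h'
      have : p = 2 := (Nat.prime_dvd_prime_iff_eq hp Nat.prime_two).mp h2
      omega
    · have h2 : p ∣ 3 := hp.dvd_of_dvd_pow h'
      have : p = 3 := (Nat.prime_dvd_prime_iff_eq hp Nat.prime_three).mp h2
      omega
  · have h2 : p ∣ 5 := hp.dvd_of_dvd_pow h
    have : p = 5 := (Nat.prime_dvd_prime_iff_eq hp (by norm_num)).mp h2
    omega

lemma Tratio_smooth (r s t : ℕ) : Tratio (2^r*3^s*5^t) ≤ 5 := by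
  set M := 2^r*3^s*5^t with hM
  have hM0 : 0 < M := by positivity
  rw [Tratio]
  apply Real.sSup_le _ (by norm_num)
  rintro x ⟨d, e, hd, he, hde, hcons, rfl⟩
  have hd0 : 0 < d := Nat.pos_of_dvd_of_pos hd hM0
  have heM : e ≤ M := Nat.le_of_dvd hM0 he
  have hdM : d < M := lt_of_lt_of_le hde heM
  have hdiv : M / d * d = M := Nat.div_mul_cancel hd
  have h1 : M / d ≠ 1 := by
    intro hcon
    rw [hcon, one_mul] at hdiv
    omega
  obtain ⟨p, hp, hpd⟩ := Nat.exists_prime_and_dvd h1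
  have hp5 : p ≤ 5 := prime_le_5 hp (hpd.trans ⟨d, hdiv.symm⟩)
  have hdp : d * p ∣ M := by
    obtain ⟨k, hk⟩ := hpd
    exact ⟨k, by rw [← hdiv, hk]; ring⟩
  have hp2 : 2 ≤ p := hp.two_le
  have hdlt : d < d * p := by nlinarith
  have hep : e ≤ d * p := by
    by_contra hcon
    push_neg at hcon
    exact hcons (d*p) hdp ⟨hdlt, hcon⟩
  have hdR : (0:ℝ) < d := by exact_mod_cast hd0
  rw [div_le_iff₀ hdR]
  have he1 : (e:ℝ) ≤ (d:ℝ)*p := by exact_mod_cast hep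
  have hp1 : (p:ℝ) ≤ 5 := by exact_mod_cast hp5
  nlinarith

theorem main_thm (n : ℕ) (hn : 3 ≤ n) (hT : Tratio (n-1) ≤ 5) :
    numVertices n = 2 * ((n-1).divisors.card - 1) := by
  set s := n - 1 with hs
  have hsn : s + 1 = n := by omega
  have hull_eq : modHull n = convexHull ℝ (FF n s : Set (ℝ×ℝ)) := by
    rw [modHull]
    apply Set.Subset.antisymm
    · exact convexHull_min (main_subset hn hsn hT) (convex_convexHull ℝ _)
    · exact convexHull_mono (FF_subset hn hsn)
  have hvert : modVertices n = (FF n s : Set (ℝ×ℝ)) := by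
    rw [modVertices, hull_eq]
    apply Set.Subset.antisymm extremePoints_convexHull_subset
    intro p hp
    exact FF_extreme hn hsn (Finset.mem_coe.mp hp)
  rw [numVertices, hvert, Set.ncard_coe_finset, card_FF hn hsn]

end Stmt9Aux

theorem stmt9 :
    (∀ n : ℕ, 3 ≤ n → Tratio (n - 1) ≤ 5 →
      numVertices n = 2 * ((n - 1).divisors.card - 1)) ∧
    (∀ r s t n : ℕ, n = 2 ^ r * 3 ^ s * 5 ^ t + 1 → 3 ≤ n →
      numVertices n = 2 * ((n - 1).divisors.card - 1)) := by
  refine ⟨fun n hn hT => Stmt9Aux.main_thm n hn hT, ?_⟩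
  intro r s t n hn h3
  apply Stmt9Aux.main_thm n h3
  rw [hn]
  simpa using Stmt9Aux.Tratio_smooth r s t
end
end

section
/- The set of integers n ≥ 2 with v(n) > 2(τ(n−1) − 1) has positive lower natural density; that is, liminf_{x→∞} (1/x)·#{2 ≤ n ≤ x : v(n) > 2(τ(n−1)−1)} > 0. -/
open Filter MeasureTheory

noncomputable section

private lemma lin_pair (α β : ℝ) : IsLinearMap ℝ (fun z : ℝ × ℝ => α * z.1 + β * z.2) := by
  constructor
  · intro x y; simp; ring
  · intro c x; simp [smul_eq_mul]; ring

lemma extreme_of_gap (S : Set (ℝ × ℝ)) (p : ℝ × ℝ) (α β δ : ℝ) (hδ : 0 < δ)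
    (hp : p ∈ S)
    (h : ∀ q ∈ S, q ≠ p → α * q.1 + β * q.2 + δ ≤ α * p.1 + β * p.2) :
    p ∈ Set.extremePoints ℝ (convexHull ℝ S) := by
  set ℓ : ℝ × ℝ → ℝ := fun z => α * z.1 + β * z.2 with hℓ
  have hlin := lin_pair α β
  have hSle : ∀ q ∈ S, ℓ q ≤ ℓ p := by
    intro q hq
    by_cases hqp : q = p
    · subst hqp; exact le_refl _
    · have := h q hq hqp; simp only [hℓ]; linarith
  have hhull : convexHull ℝ S ⊆ {z | ℓ z ≤ ℓ p} :=
    convexHull_min hSle (convex_halfSpace_le hlin (ℓ p))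
  have key : ∀ z ∈ convexHull ℝ S, ℓ z = ℓ p → z = p := by
    intro z hz hze
    by_cases hS' : (S \ {p}).Nonempty
    · have hSeq : S = insert p (S \ {p}) := by
        rw [Set.insert_diff_singleton, Set.insert_eq_self.2 hp]
      have hz' : z ∈ convexJoin ℝ {p} (convexHull ℝ (S \ {p})) := by
        rw [← convexHull_insert hS', ← hSeq]; exact hz
      rw [mem_convexJoin] at hz'
      obtain ⟨x0, hx0, w, hw, hseg⟩ := hz'
      rw [Set.mem_singleton_iff] at hx0
      rw [hx0] at hseg
      have hw_le : ℓ w ≤ ℓ p - δ := by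
        have hsub : convexHull ℝ (S \ {p}) ⊆ {z | ℓ z ≤ ℓ p - δ} := by
          apply convexHull_min _ (convex_halfSpace_le hlin _)
          intro q hq
          have hqp : q ≠ p := by
            intro hcontra
            exact hq.2 (by simp [hcontra])
          have := h q hq.1 hqp
          simp only [Set.mem_setOf_eq, hℓ]; linarith
        exact hsub hw
      obtain ⟨u, v, hu, hv, huv, hzeq⟩ := hseg
      have hlz : ℓ z = u * ℓ p + v * ℓ w := by
        rw [← hzeq]; simp [hℓ, smul_eq_mul]; ring
      have hv0 : v = 0 := by
        by_contra hne
        have hvpos : 0 < v := lt_of_le_of_ne hv (Ne.symm hne)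
        have h3 : u * ℓ p + v * ℓ p = ℓ p := by rw [← add_mul, huv, one_mul]
        have h4 : v * ℓ w ≤ v * (ℓ p - δ) := mul_le_mul_of_nonneg_left hw_le hv
        have h5 : 0 < v * δ := mul_pos hvpos hδ
        nlinarith
      have hu1 : u = 1 := by linarith
      rw [← hzeq, hv0, hu1]; simp
    · have hSsing : S = {p} := by
        apply Set.eq_singleton_iff_unique_mem.2 ⟨hp, ?_⟩
        intro q hq; by_contra hne; exact hS' ⟨q, hq, hne⟩
      rw [hSsing, convexHull_singleton] at hz; exact hz
  rw [mem_extremePoints]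
  refine ⟨subset_convexHull ℝ S hp, ?_⟩
  intro x hx y hy hseg
  obtain ⟨s, t, hs, ht, hst, hpeq⟩ := hseg
  have hℓp : s * ℓ x + t * ℓ y = ℓ p := by rw [← hpeq]; simp [hℓ, smul_eq_mul]; ring
  have hx_le : ℓ x ≤ ℓ p := hhull hx
  have hy_le : ℓ y ≤ ℓ p := hhull hy
  have hxe : ℓ x = ℓ p := by
    refine le_antisymm hx_le ?_
    have h1 : t * ℓ y ≤ t * ℓ p := mul_le_mul_of_nonneg_left hy_le ht.le
    have h3 : s * ℓ p + t * ℓ p = ℓ p := by rw [← add_mul, hst, one_mul]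
    have h2 : s * ℓ p ≤ s * ℓ x := by linarith
    exact le_of_mul_le_mul_left h2 hs
  have hye : ℓ y = ℓ p := by
    refine le_antisymm hy_le ?_
    have h1 : s * ℓ x ≤ s * ℓ p := mul_le_mul_of_nonneg_left hx_le hs.le
    have h3 : s * ℓ p + t * ℓ p = ℓ p := by rw [← add_mul, hst, one_mul]
    have h2 : t * ℓ p ≤ t * ℓ y := by linarith
    exact le_of_mul_le_mul_left h2 ht
  exact ⟨key x hx hxe, key y hy hye⟩


lemma k_le (n a b k : ℤ) (hn : 2 ≤ n) (ha1 : 1 ≤ a) (hb1 : 1 ≤ b) (hb2 : b ≤ n - 1)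
    (hk : a * b = k * n + 1) : k ≤ a - 1 := by
  by_contra hcon
  push_neg at hcon
  have h1 : a * b ≤ a * (n - 1) := mul_le_mul_of_nonneg_left hb2 (by linarith)
  have h2 : a * n ≤ k * n := mul_le_mul_of_nonneg_right (by linarith) (by linarith)
  linarith

lemma k_nonneg (n a b k : ℤ) (hn : 2 ≤ n) (ha1 : 1 ≤ a) (hb1 : 1 ≤ b)
    (hk : a * b = k * n + 1) : 0 ≤ k := by
  by_contra hcon
  push_neg at hcon
  have h1 : 1 ≤ a * b := by nlinarith
  have h2 : k * n ≤ (-1) * n := mul_le_mul_of_nonneg_right (by linarith) (by linarith)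
  linarith

lemma divpoint_sep (n d e a b : ℤ) (hn : 2 ≤ n) (hde : d * e = n - 1) (hd1 : 1 ≤ d)
    (ha1 : 1 ≤ a) (ha2 : a ≤ n - 1) (hb1 : 1 ≤ b) (hb2 : b ≤ n - 1)
    (hdvd : n ∣ a * b - 1) (hne : ¬(a = d ∧ b = n - e)) :
    a * (d^2 * b - (n-1) * a) + 1 ≤ a * (d * (d * n - 2 * (n - 1))) := by
  obtain ⟨k, hk'⟩ := hdvd
  have hk : a * b = k * n + 1 := by linarith [hk']
  have hkle : k ≤ a - 1 := k_le n a b k hn ha1 hb1 hb2 hk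
  have hiden : a * (d^2 * b - (n-1) * a) - a * (d * (d * n - 2 * (n - 1)))
      = d^2 * n * (k - a + 1) - (n - 1) * (a - d)^2 := by
    linear_combination d^2 * hk
  have hd2 : 1 ≤ d^2 := by nlinarith
  by_cases had : a = d
  · subst had
    have hkne : k ≠ a - 1 := by
      intro hkeq
      apply hne
      refine ⟨rfl, ?_⟩
      have h1 : a * b = a * (n - e) := by
        have : a * e = n - 1 := hde
        nlinarith [hkeq]
      exact mul_left_cancel₀ (by linarith : a ≠ 0) h1
    have hk2 : k - a + 1 ≤ -1 := by
      rcases lt_or_eq_of_le hkle with h | h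
      · linarith
      · exact absurd h hkne
    have h3 : a^2 * n * (k - a + 1) ≤ a^2 * n * (-1) :=
      mul_le_mul_of_nonneg_left hk2 (by nlinarith)
    nlinarith
  · have hsq : 1 ≤ (a - d)^2 := by
      have h0 : a - d ≠ 0 := sub_ne_zero.2 had
      have h1 : 1 ≤ |a - d| := Int.one_le_abs h0
      nlinarith [sq_abs (a - d)]
    have h3 : d^2 * n * (k - a + 1) ≤ 0 :=
      mul_nonpos_of_nonneg_of_nonpos (by nlinarith) (by linarith)
    nlinarith

lemma Xpoint_sep (n a b : ℤ) (hn : 26 ≤ n)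
    (h3 : ¬((3:ℤ) ∣ n - 1)) (h4 : ¬((4:ℤ) ∣ n - 1)) (h5 : ¬((5:ℤ) ∣ n - 1))
    (h7 : ¬((7:ℤ) ∣ n - 1)) (h11 : ¬((11:ℤ) ∣ n - 1))
    (ha1 : 1 ≤ a) (ha2 : a ≤ n - 1) (hb1 : 1 ≤ b) (hb2 : b ≤ n - 1)
    (hdvd : n ∣ a * b - 1) (hne : ¬(a = 7 ∧ 7 * b = 5 * n + 1)) :
    a * (49 * b - (2*n - 1) * a) + 1 ≤ a * (21 * n + 14) := by
  obtain ⟨k, hk'⟩ := hdvd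
  have hk : a * b = k * n + 1 := by linarith [hk']
  have hn2 : (2:ℤ) ≤ n := by linarith
  have hkle : k ≤ a - 1 := k_le n a b k hn2 ha1 hb1 hb2 hk
  have hG : a * (49 * b - (2*n - 1) * a) + 1 - a * (21 * n + 14)
      = 49*k*n + 49 - (2*n - 1)*a^2 - (21*n + 14)*a + 1 := by
    linear_combination 49 * hk
  have hsuff : 49*k*n + 49 - (2*n - 1)*a^2 - (21*n + 14)*a + 1 ≤ 0 := by
    by_cases hke : k = a - 1
    · -- a divides n - 1
      subst hke
      have hdvd_a : a ∣ n - 1 := ⟨n - b, by linear_combination hk⟩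
      have ha_cases : a = 1 ∨ a = 2 ∨ 13 ≤ a := by
        by_contra hcon
        push_neg at hcon
        obtain ⟨hc1, hc2, hc3⟩ := hcon
        have h3a : 3 ≤ a := by omega
        have h12 : a ≤ 12 := by omega
        interval_cases a <;> omega
      rcases ha_cases with rfl | rfl | h13
      · linarith
      · linarith
      · nlinarith [mul_nonneg (by linarith : (0:ℤ) ≤ n - 26)
          (by nlinarith : (0:ℤ) ≤ 2*a^2 - 28*a + 49),
          mul_nonneg (by linarith : (0:ℤ) ≤ a - 12) (by linarith : (0:ℤ) ≤ a - 2)]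
    · have hke2 : k ≤ a - 2 := by omega
      by_cases ha7 : a = 7
      · subst ha7
        have hk5 : k ≠ 5 := by
          intro hk5
          subst hk5
          exact hne ⟨rfl, by linarith⟩
        have hk4 : k ≤ 4 := by omega
        have hmul : k * n ≤ 4 * n := mul_le_mul_of_nonneg_right hk4 (by linarith)
        linarith
      · have hsq : 1 ≤ (a - 7)^2 := by
          have h0 : a - 7 ≠ 0 := sub_ne_zero.2 ha7
          have h1 : 1 ≤ |a - 7| := Int.one_le_abs h0
          nlinarith [sq_abs (a - 7)]
        have hmul : k * n ≤ (a - 2) * n := mul_le_mul_of_nonneg_right hke2 (by linarith)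
        nlinarith [mul_nonneg (by linarith : (0:ℤ) ≤ 2*n - 1) (by linarith : (0:ℤ) ≤ (a-7)^2 - 1)]
  linarith

lemma modPoints_finite (n : ℕ) : (modPoints n).Finite := by
  apply Set.Finite.subset ((Set.finite_Icc ((1:ℤ),(1:ℤ)) ((n:ℤ)-1,(n:ℤ)-1)).image
    (fun q : ℤ × ℤ => ((q.1 : ℝ), (q.2 : ℝ))))
  rintro p ⟨a, b, ha1, ha2, hb1, hb2, hdvd, rfl⟩
  exact ⟨(a, b), ⟨⟨ha1, hb1⟩, ⟨ha2, hb2⟩⟩, rfl⟩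

lemma modVertices_finite (n : ℕ) : (modVertices n).Finite :=
  (modPoints_finite n).subset extremePoints_convexHull_subset

lemma gap_transfer (n : ℕ) (a lq lp : ℝ) (hn : (2:ℝ) ≤ (n:ℝ)) (ha1 : 1 ≤ a)
    (ha2 : a ≤ (n:ℝ)) (h : a * lq + 1 ≤ a * lp) : lq + 1/(n:ℝ) ≤ lp := by
  have hapos : (0:ℝ) < a := by linarith
  have hnpos : (0:ℝ) < n := by linarith
  have h1 : 1 ≤ a * (lp - lq) := by nlinarith
  have hpos : 0 < lp - lq := by
    by_contra hcon
    push_neg at hcon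
    nlinarith
  have h2 : a * (lp - lq) ≤ (n:ℝ) * (lp - lq) := mul_le_mul_of_nonneg_right ha2 hpos.le
  have h3 : (1:ℝ)/n ≤ lp - lq := by
    rw [div_le_iff₀ hnpos]
    nlinarith
  linarith

lemma divpoint_vertex (n : ℕ) (d e : ℤ) (hn : (2:ℤ) ≤ (n:ℤ)) (hde : d * e = (n:ℤ) - 1)
    (hd1 : 1 ≤ d) (hd2 : d ≤ (n:ℤ) - 1) :
    ((d : ℝ), (n : ℝ) - (e : ℝ)) ∈ modVertices n := by
  have he1 : 1 ≤ e := by nlinarith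
  have he2 : e ≤ (n:ℤ) - 1 := by nlinarith
  have hp : ((d:ℝ), (n:ℝ) - (e:ℝ)) ∈ modPoints n := by
    refine ⟨d, (n:ℤ) - e, hd1, hd2, by linarith, by linarith, ⟨d - 1, by linear_combination -hde⟩, ?_⟩
    rw [Prod.mk.injEq]; constructor <;> push_cast <;> ring
  have hnposR : (0:ℝ) < (n:ℝ) := by
    have : (0:ℤ) < (n:ℤ) := by linarith
    exact_mod_cast this
  have hδ : (0:ℝ) < 1/(n:ℝ) := one_div_pos.2 hnposR
  apply extreme_of_gap (modPoints n) _ (-((n:ℝ)-1)) ((d:ℝ)^2) (1/(n:ℝ)) hδ hp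
  rintro q ⟨a, b, ha1, ha2, hb1, hb2, hdvd, rfl⟩ hne
  have hneint : ¬(a = d ∧ b = (n:ℤ) - e) := by
    rintro ⟨rfl, rfl⟩
    apply hne
    rw [Prod.mk.injEq]; constructor <;> push_cast <;> ring
  have hint := divpoint_sep (n:ℤ) d e a b hn hde hd1 ha1 ha2 hb1 hb2 hdvd hneint
  have hreal : (a:ℝ) * ((d:ℝ)^2 * (b:ℝ) - ((n:ℝ)-1) * (a:ℝ)) + 1
      ≤ (a:ℝ) * ((d:ℝ) * ((d:ℝ) * (n:ℝ) - 2 * ((n:ℝ) - 1))) := by exact_mod_cast hint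
  have ha1R : (1:ℝ) ≤ (a:ℝ) := by exact_mod_cast ha1
  have ha2R : (a:ℝ) ≤ (n:ℝ) := by
    have : ((a:ℤ):ℝ) ≤ ((n:ℤ):ℝ) - 1 := by exact_mod_cast ha2
    push_cast at this ⊢; linarith
  have hnR : (2:ℝ) ≤ (n:ℝ) := by exact_mod_cast hn
  have hdeR : (d:ℝ) * (e:ℝ) = (n:ℝ) - 1 := by exact_mod_cast hde
  have htrans := gap_transfer n (a:ℝ) ((d:ℝ)^2 * (b:ℝ) - ((n:ℝ)-1) * (a:ℝ))
      ((d:ℝ) * ((d:ℝ) * (n:ℝ) - 2 * ((n:ℝ) - 1))) hnR ha1R ha2R hreal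
  have hid : -((n:ℝ)-1)*(d:ℝ) + (d:ℝ)^2*((n:ℝ)-(e:ℝ)) = (d:ℝ)*((d:ℝ)*(n:ℝ) - 2*((n:ℝ)-1)) := by
    linear_combination (-(d:ℝ)) * hdeR
  simp only
  linarith [htrans, hid]

lemma divpoint_vertex' (n : ℕ) (d e : ℤ) (hn : (2:ℤ) ≤ (n:ℤ)) (hde : d * e = (n:ℤ) - 1)
    (hd1 : 1 ≤ d) (hd2 : d ≤ (n:ℤ) - 1) :
    ((n : ℝ) - (e : ℝ), (d : ℝ)) ∈ modVertices n := by
  have he1 : 1 ≤ e := by nlinarith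
  have he2 : e ≤ (n:ℤ) - 1 := by nlinarith
  have hp : ((n:ℝ) - (e:ℝ), (d:ℝ)) ∈ modPoints n := by
    refine ⟨(n:ℤ) - e, d, by linarith, by linarith, hd1, hd2, ⟨d - 1, by linear_combination -hde⟩, ?_⟩
    rw [Prod.mk.injEq]; constructor <;> push_cast <;> ring
  have hnposR : (0:ℝ) < (n:ℝ) := by
    have : (0:ℤ) < (n:ℤ) := by linarith
    exact_mod_cast this
  have hδ : (0:ℝ) < 1/(n:ℝ) := one_div_pos.2 hnposR
  apply extreme_of_gap (modPoints n) _ ((d:ℝ)^2) (-((n:ℝ)-1)) (1/(n:ℝ)) hδ hp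
  rintro q ⟨a, b, ha1, ha2, hb1, hb2, hdvd, rfl⟩ hne
  have hneint : ¬(b = d ∧ a = (n:ℤ) - e) := by
    rintro ⟨rfl, rfl⟩
    apply hne
    rw [Prod.mk.injEq]; constructor <;> push_cast <;> ring
  have hdvd' : (n:ℤ) ∣ b * a - 1 := by rwa [mul_comm] at hdvd
  have hint := divpoint_sep (n:ℤ) d e b a hn hde hd1 hb1 hb2 ha1 ha2 hdvd' hneint
  have hreal : (b:ℝ) * ((d:ℝ)^2 * (a:ℝ) - ((n:ℝ)-1) * (b:ℝ)) + 1
      ≤ (b:ℝ) * ((d:ℝ) * ((d:ℝ) * (n:ℝ) - 2 * ((n:ℝ) - 1))) := by exact_mod_cast hint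
  have hb1R : (1:ℝ) ≤ (b:ℝ) := by exact_mod_cast hb1
  have hb2R : (b:ℝ) ≤ (n:ℝ) := by
    have : ((b:ℤ):ℝ) ≤ ((n:ℤ):ℝ) - 1 := by exact_mod_cast hb2
    push_cast at this ⊢; linarith
  have hnR : (2:ℝ) ≤ (n:ℝ) := by exact_mod_cast hn
  have hdeR : (d:ℝ) * (e:ℝ) = (n:ℝ) - 1 := by exact_mod_cast hde
  have htrans := gap_transfer n (b:ℝ) ((d:ℝ)^2 * (a:ℝ) - ((n:ℝ)-1) * (b:ℝ))
      ((d:ℝ) * ((d:ℝ) * (n:ℝ) - 2 * ((n:ℝ) - 1))) hnR hb1R hb2R hreal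
  have hid : -((n:ℝ)-1)*(d:ℝ) + (d:ℝ)^2*((n:ℝ)-(e:ℝ)) = (d:ℝ)*((d:ℝ)*(n:ℝ) - 2*((n:ℝ)-1)) := by
    linear_combination (-(d:ℝ)) * hdeR
  simp only
  linarith [htrans, hid]

lemma Xpoint_vertex (n : ℕ) (y : ℤ) (hn : (26:ℤ) ≤ (n:ℤ))
    (h3 : ¬((3:ℤ) ∣ (n:ℤ) - 1)) (h4 : ¬((4:ℤ) ∣ (n:ℤ) - 1)) (h5 : ¬((5:ℤ) ∣ (n:ℤ) - 1))
    (h7 : ¬((7:ℤ) ∣ (n:ℤ) - 1)) (h11 : ¬((11:ℤ) ∣ (n:ℤ) - 1))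
    (hy : 7 * y = 5 * (n:ℤ) + 1) :
    ((7 : ℝ), (y : ℝ)) ∈ modVertices n := by
  have hy1 : 1 ≤ y := by linarith
  have hy2 : y ≤ (n:ℤ) - 1 := by linarith
  have hp : ((7:ℝ), (y:ℝ)) ∈ modPoints n := by
    refine ⟨7, y, by norm_num, by linarith, hy1, hy2, ⟨5, by linarith⟩, ?_⟩
    rw [Prod.mk.injEq]; constructor <;> push_cast <;> ring
  have hnposR : (0:ℝ) < (n:ℝ) := by
    have : (0:ℤ) < (n:ℤ) := by linarith
    exact_mod_cast this
  have hδ : (0:ℝ) < 1/(n:ℝ) := one_div_pos.2 hnposR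
  apply extreme_of_gap (modPoints n) _ (-(2*(n:ℝ)-1)) (49:ℝ) (1/(n:ℝ)) hδ hp
  rintro q ⟨a, b, ha1, ha2, hb1, hb2, hdvd, rfl⟩ hne
  have hneint : ¬(a = 7 ∧ 7 * b = 5 * (n:ℤ) + 1) := by
    rintro ⟨rfl, hb⟩
    apply hne
    have : b = y := by omega
    subst this
    rw [Prod.mk.injEq]; constructor <;> push_cast <;> ring
  have hint := Xpoint_sep (n:ℤ) a b hn h3 h4 h5 h7 h11 ha1 ha2 hb1 hb2 hdvd hneint
  have hreal : (a:ℝ) * (49 * (b:ℝ) - (2*(n:ℝ) - 1) * (a:ℝ)) + 1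
      ≤ (a:ℝ) * (21 * (n:ℝ) + 14) := by exact_mod_cast hint
  have ha1R : (1:ℝ) ≤ (a:ℝ) := by exact_mod_cast ha1
  have ha2R : (a:ℝ) ≤ (n:ℝ) := by
    have : ((a:ℤ):ℝ) ≤ ((n:ℤ):ℝ) - 1 := by exact_mod_cast ha2
    push_cast at this ⊢; linarith
  have hnR : (2:ℝ) ≤ (n:ℝ) := by
    have : ((26:ℤ):ℝ) ≤ ((n:ℤ):ℝ) := by exact_mod_cast hn
    push_cast at this; linarith
  have hyR : 7 * (y:ℝ) = 5 * (n:ℝ) + 1 := by exact_mod_cast hy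
  have htrans := gap_transfer n (a:ℝ) (49 * (b:ℝ) - (2*(n:ℝ) - 1) * (a:ℝ))
      (21 * (n:ℝ) + 14) hnR ha1R ha2R hreal
  simp only
  nlinarith [htrans]

lemma main_bound (n : ℕ) (hn : 26 ≤ n)
    (h3 : ¬((3:ℤ) ∣ (n:ℤ) - 1)) (h4 : ¬((4:ℤ) ∣ (n:ℤ) - 1)) (h5 : ¬((5:ℤ) ∣ (n:ℤ) - 1))
    (h7 : ¬((7:ℤ) ∣ (n:ℤ) - 1)) (h11 : ¬((11:ℤ) ∣ (n:ℤ) - 1))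
    (y : ℤ) (hy : 7 * y = 5 * (n:ℤ) + 1) :
    2 * ((n - 1).divisors.card - 1) < numVertices n := by
  have hnZ : (26:ℤ) ≤ (n:ℤ) := by exact_mod_cast hn
  have hn2 : (2:ℤ) ≤ (n:ℤ) := by linarith
  set D : Set ℕ := ↑(n-1).divisors with hD
  have hDfin : D.Finite := (n-1).divisors.finite_toSet
  -- facts about divisors
  have hdiv : ∀ d ∈ D, (d:ℤ) * (((n-1)/d : ℕ) : ℤ) = (n:ℤ) - 1 ∧ 1 ≤ (d:ℤ) ∧ (d:ℤ) ≤ (n:ℤ) - 1 := by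
    intro d hd
    rw [hD, Finset.mem_coe, Nat.mem_divisors] at hd
    obtain ⟨hdvd, hne0⟩ := hd
    have hprod : d * ((n-1)/d) = n - 1 := Nat.mul_div_cancel' hdvd
    have hd1 : 1 ≤ d := Nat.one_le_iff_ne_zero.2 (by rintro rfl; simp at hprod; omega)
    have hdle : d ≤ n - 1 := Nat.le_of_dvd (by omega) hdvd
    refine ⟨?_, by exact_mod_cast hd1, ?_⟩
    · have hcast : ((n - 1 : ℕ) : ℤ) = (n:ℤ) - 1 := by omega
      rw [← hcast]
      exact_mod_cast hprod
    · have : (d:ℤ) ≤ ((n-1:ℕ):ℤ) := by exact_mod_cast hdle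
      omega
  set f1 : ℕ → ℝ × ℝ := fun d => ((d:ℝ), (n:ℝ) - (((n-1)/d : ℕ) : ℝ)) with hf1
  set f2 : ℕ → ℝ × ℝ := fun d => ((n:ℝ) - (((n-1)/d : ℕ) : ℝ), (d:ℝ)) with hf2
  set A : Set (ℝ × ℝ) := f1 '' D with hA
  set B : Set (ℝ × ℝ) := f2 '' D with hB
  have hAfin : A.Finite := hDfin.image _
  have hBfin : B.Finite := hDfin.image _
  have hAcard : A.ncard = (n-1).divisors.card := by
    rw [hA, Set.ncard_image_of_injOn, hD, Set.ncard_coe_finset]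
    intro x _ x' _ hxx'
    have : (x:ℝ) = (x':ℝ) := congrArg Prod.fst hxx'
    exact_mod_cast this
  have hBcard : B.ncard = (n-1).divisors.card := by
    rw [hB, Set.ncard_image_of_injOn, hD, Set.ncard_coe_finset]
    intro x _ x' _ hxx'
    have : (x:ℝ) = (x':ℝ) := congrArg Prod.snd hxx'
    exact_mod_cast this
  -- A and B consist of vertices
  have hAsub : A ⊆ modVertices n := by
    rintro z ⟨d, hd, rfl⟩
    obtain ⟨hprod, hd1, hdle⟩ := hdiv d hd
    have := divpoint_vertex n (d:ℤ) (((n-1)/d : ℕ) : ℤ) hn2 hprod hd1 hdle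
    simp only [hf1]; exact_mod_cast this
  have hBsub : B ⊆ modVertices n := by
    rintro z ⟨d, hd, rfl⟩
    obtain ⟨hprod, hd1, hdle⟩ := hdiv d hd
    have := divpoint_vertex' n (d:ℤ) (((n-1)/d : ℕ) : ℤ) hn2 hprod hd1 hdle
    simp only [hf2]; exact_mod_cast this
  -- intersection is small
  have hinter : A ∩ B ⊆ {((1:ℝ), (1:ℝ)), (((n:ℝ) - 1), ((n:ℝ) - 1))} := by
    rintro z ⟨⟨d, hd, rfl⟩, ⟨d', hd', heq⟩⟩
    obtain ⟨hprod, hd1, hdle⟩ := hdiv d hd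
    obtain ⟨hprod', hd1', hdle'⟩ := hdiv d' hd'
    set e : ℕ := (n-1)/d
    set e' : ℕ := (n-1)/d'
    have h1 : (n:ℝ) - (e':ℝ) = (d:ℝ) := congrArg Prod.fst heq
    have h2 : (d':ℝ) = (n:ℝ) - (e:ℝ) := congrArg Prod.snd heq
    have h1Z : (n:ℤ) - (e':ℤ) = (d:ℤ) := by exact_mod_cast h1
    have h2Z : (d':ℤ) = (n:ℤ) - (e:ℤ) := by exact_mod_cast h2
    have he'eq : (e':ℤ) = (n:ℤ) - (d:ℤ) := by linarith
    rw [h2Z, he'eq] at hprod'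
    have hnz : (n:ℤ) * ((n:ℤ) - (d:ℤ) - (e:ℤ)) = 0 := by linear_combination hprod' - hprod
    have hsum : (d:ℤ) + (e:ℤ) = (n:ℤ) := by
      rcases mul_eq_zero.1 hnz with h | h
      · omega
      · linarith
    have hcase : (d:ℤ) = 1 ∨ (d:ℤ) = (n:ℤ) - 1 := by
      have hfac : ((d:ℤ) - 1) * ((d:ℤ) - ((n:ℤ) - 1)) = 0 := by
        linear_combination -hprod + (d:ℤ) * hsum
      rcases mul_eq_zero.1 hfac with h | h
      · left; linarith
      · right; linarith
    rcases hcase with h | h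
    · apply Set.mem_insert_iff.mpr
      left
      have he_ : (e:ℤ) = (n:ℤ) - 1 := by linarith [hsum]
      have h1R : (d:ℝ) = 1 := by exact_mod_cast h
      have h2R : (e:ℝ) = (n:ℝ) - 1 := by exact_mod_cast he_
      show ((d:ℝ), (n:ℝ) - (e:ℝ)) = ((1:ℝ), (1:ℝ))
      rw [Prod.mk.injEq]
      exact ⟨h1R, by rw [h2R]; ring⟩
    · apply Set.mem_insert_iff.mpr
      right
      have he_ : (e:ℤ) = 1 := by
        rw [h] at hprod
        have hz : ((n:ℤ) - 1) * ((e:ℤ) - 1) = 0 := by linear_combination hprod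
        rcases mul_eq_zero.1 hz with hh | hh
        · omega
        · linarith
      rw [Set.mem_singleton_iff]
      have h1R : (d:ℝ) = (n:ℝ) - 1 := by exact_mod_cast h
      have h2R : (e:ℝ) = 1 := by exact_mod_cast he_
      show ((d:ℝ), (n:ℝ) - (e:ℝ)) = ((n:ℝ) - 1, (n:ℝ) - 1)
      rw [Prod.mk.injEq]
      exact ⟨h1R, by rw [h2R]⟩
  have hintercard : (A ∩ B).ncard ≤ 2 := by
    calc (A ∩ B).ncard ≤ ({((1:ℝ), (1:ℝ)), (((n:ℝ) - 1), ((n:ℝ) - 1))} : Set (ℝ × ℝ)).ncard :=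
          Set.ncard_le_ncard hinter (Set.toFinite _)
      _ ≤ 2 := by
          apply le_trans (Set.ncard_insert_le _ _)
          simp
  -- the extra vertex X
  set X : ℝ × ℝ := ((7:ℝ), (y:ℝ)) with hX
  have hXvert : X ∈ modVertices n := Xpoint_vertex n y hnZ h3 h4 h5 h7 h11 hy
  have hXnotin : X ∉ A ∪ B := by
    rintro (⟨d, hd, heq⟩ | ⟨d, hd, heq⟩)
    · obtain ⟨hprod, hd1, hdle⟩ := hdiv d hd
      have h1 : (d:ℝ) = 7 := congrArg Prod.fst heq
      have h1Z : (d:ℤ) = 7 := by exact_mod_cast h1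
      exact h7 ⟨(((n-1)/d : ℕ) : ℤ), by rw [← hprod, h1Z]⟩
    · obtain ⟨hprod, hd1, hdle⟩ := hdiv d hd
      set e : ℕ := (n-1)/d
      have h1 : (n:ℝ) - (e:ℝ) = 7 := congrArg Prod.fst heq
      have h1Z : (n:ℤ) - (e:ℤ) = 7 := by exact_mod_cast h1
      -- d * (n - 7) = n - 1 with d ≥ 1
      have hd2 : (d:ℤ) = 1 ∨ 2 ≤ (d:ℤ) := by omega
      rcases hd2 with h | h
      · rw [h, one_mul] at hprod; omega
      · have he7 : (e:ℤ) = (n:ℤ) - 7 := by linarith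
        rw [he7] at hprod
        have := mul_le_mul_of_nonneg_right h (show (0:ℤ) ≤ (n:ℤ) - 7 by linarith)
        linarith
  -- assemble
  have hunion_fin : (A ∪ B).Finite := hAfin.union hBfin
  have hcard_union : (A ∪ B).ncard + (A ∩ B).ncard = A.ncard + B.ncard :=
    Set.ncard_union_add_ncard_inter A B hAfin hBfin
  have hins : (insert X (A ∪ B)).ncard = (A ∪ B).ncard + 1 :=
    Set.ncard_insert_of_notMem hXnotin hunion_fin
  have hsuball : insert X (A ∪ B) ⊆ modVertices n := by
    intro z hz
    rcases Set.mem_insert_iff.1 hz with rfl | hz'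
    · exact hXvert
    · rcases hz' with hz'' | hz''
      · exact hAsub hz''
      · exact hBsub hz''
  have hfinal : (insert X (A ∪ B)).ncard ≤ numVertices n :=
    Set.ncard_le_ncard hsuball (modVertices_finite n)
  have htau : 1 ≤ (n-1).divisors.card := by
    apply Finset.card_pos.2
    exact ⟨1, Nat.one_mem_divisors.2 (by omega)⟩
  omega

lemma mem_good (x n : ℕ) (hmod : n % 4620 = 4127) (hle : n ≤ x) :
    n ∈ {n : ℕ | 2 ≤ n ∧ n ≤ x ∧ 2 * ((n - 1).divisors.card - 1) < numVertices n} := by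
  have hn26 : 26 ≤ n := by omega
  have hZ : (n:ℤ) % 4620 = 4127 := by omega
  have h3 : ¬((3:ℤ) ∣ (n:ℤ) - 1) := by omega
  have h4 : ¬((4:ℤ) ∣ (n:ℤ) - 1) := by omega
  have h5 : ¬((5:ℤ) ∣ (n:ℤ) - 1) := by omega
  have h7 : ¬((7:ℤ) ∣ (n:ℤ) - 1) := by omega
  have h11 : ¬((11:ℤ) ∣ (n:ℤ) - 1) := by omega
  have h7d : (7:ℤ) ∣ 5*(n:ℤ) + 1 := by omega
  obtain ⟨y, hy⟩ := h7d
  exact ⟨by omega, hle, main_bound n hn26 h3 h4 h5 h7 h11 y (by linarith)⟩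

lemma count_lower (x : ℕ) (hx : 8254 ≤ x) :
    (x:ℝ) / 9240 ≤ (({n : ℕ | 2 ≤ n ∧ n ≤ x ∧
      2 * ((n - 1).divisors.card - 1) < numVertices n}.ncard : ℝ)) := by
  set T : Set ℕ := {n : ℕ | 2 ≤ n ∧ n ≤ x ∧ 2 * ((n - 1).divisors.card - 1) < numVertices n}
    with hT
  set m : ℕ := (x - 4127)/4620 + 1 with hm
  have hTfin : T.Finite := Set.Finite.subset (Finset.Iic x).finite_toSet
    (fun n hn => Finset.mem_coe.2 (Finset.mem_Iic.2 hn.2.1))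
  have hginj : Function.Injective (fun j : ℕ => 4127 + 4620 * j) := by
    intro a b h
    simp only at h
    omega
  have hsub : ↑((Finset.range m).image (fun j : ℕ => 4127 + 4620 * j)) ⊆ T := by
    intro n hn
    rw [Finset.coe_image] at hn
    obtain ⟨j, hj, rfl⟩ := hn
    rw [Finset.mem_coe, Finset.mem_range] at hj
    exact mem_good x (4127 + 4620 * j) (by omega) (by omega)
  have hcard : ((Finset.range m).image (fun j : ℕ => 4127 + 4620 * j)).card = m := by
    rw [Finset.card_image_of_injective _ hginj, Finset.card_range]
  have hle : m ≤ T.ncard := by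
    have := Set.ncard_le_ncard hsub hTfin
    rwa [Set.ncard_coe_finset, hcard] at this
  have hxm : x ≤ 9240 * m := by omega
  have hxmR : (x:ℝ) ≤ 9240 * (m:ℝ) := by exact_mod_cast hxm
  have hmR : (m:ℝ) ≤ (T.ncard : ℝ) := by exact_mod_cast hle
  rw [div_le_iff₀ (by norm_num : (0:ℝ) < 9240)]
  nlinarith

theorem stmt11 :
    0 < Filter.liminf (fun x : ℕ =>
      (({n : ℕ | 2 ≤ n ∧ n ≤ x ∧
        2 * ((n - 1).divisors.card - 1) < numVertices n}.ncard : ℝ)) / (x : ℝ))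
      Filter.atTop := by
  set f : ℕ → ℝ := fun x =>
    (({n : ℕ | 2 ≤ n ∧ n ≤ x ∧
        2 * ((n - 1).divisors.card - 1) < numVertices n}.ncard : ℝ)) / (x : ℝ) with hf
  have hcount_le : ∀ x : ℕ, ({n : ℕ | 2 ≤ n ∧ n ≤ x ∧
      2 * ((n - 1).divisors.card - 1) < numVertices n}.ncard) ≤ x + 1 := by
    intro x
    have hsub : {n : ℕ | 2 ≤ n ∧ n ≤ x ∧ 2 * ((n - 1).divisors.card - 1) < numVertices n}
        ⊆ ↑(Finset.Iic x) := fun n hn => Finset.mem_coe.2 (Finset.mem_Iic.2 hn.2.1)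
    have := Set.ncard_le_ncard hsub (Finset.Iic x).finite_toSet
    rwa [Set.ncard_coe_finset, Nat.card_Iic] at this
  have hbd : ∀ᶠ x in atTop, f x ≤ 2 := by
    rw [eventually_atTop]
    refine ⟨1, fun x hx => ?_⟩
    have hxpos : (0:ℝ) < x := by exact_mod_cast hx
    have h1 : (({n : ℕ | 2 ≤ n ∧ n ≤ x ∧
        2 * ((n - 1).divisors.card - 1) < numVertices n}.ncard : ℝ)) ≤ (x:ℝ) + 1 := by
      exact_mod_cast hcount_le x
    rw [hf]
    simp only
    rw [div_le_iff₀ hxpos]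
    have hx1 : (1:ℝ) ≤ (x:ℝ) := by exact_mod_cast hx
    linarith
  have hev : ∀ᶠ x in atTop, (1:ℝ)/9240 ≤ f x := by
    rw [eventually_atTop]
    refine ⟨8254, fun x hx => ?_⟩
    have hxpos : (0:ℝ) < x := by
      have : (8254:ℝ) ≤ (x:ℝ) := by exact_mod_cast hx
      linarith
    have := count_lower x hx
    rw [hf]
    simp only
    rw [div_le_div_iff₀ (by norm_num : (0:ℝ) < 9240) hxpos]
    rw [div_le_iff₀ (by norm_num : (0:ℝ) < 9240)] at this
    linarith
  have hcb : Filter.IsCoboundedUnder (· ≥ ·) atTop f :=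
    isCoboundedUnder_ge_of_eventually_le atTop hbd
  have hlim : (1:ℝ)/9240 ≤ Filter.liminf f atTop := le_liminf_of_le hcb hev
  calc (0:ℝ) < 1/9240 := by norm_num
    _ ≤ _ := hlim
end
end

section
/- For every prime p, v(p + 1) ≥ 2(τ(2p + 1) − 3). -/
open Filter MeasureTheory

noncomputable section

lemma extreme_of_unique_min {S : Set (ℝ × ℝ)} {x : ℝ × ℝ} (hx : x ∈ S)
    (u v : ℝ)
    (h : ∀ q ∈ S, q ≠ x → u * x.1 + v * x.2 < u * q.1 + v * q.2) :
    x ∈ Set.extremePoints ℝ (convexHull ℝ S) := by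
  set φ : ℝ × ℝ → ℝ := fun q => u * q.1 + v * q.2 with hφ
  have hlin : IsLinearMap ℝ φ := by
    constructor
    · intro a b; simp [hφ, Prod.fst_add, Prod.snd_add]; ring
    · intro c a; simp [hφ, Prod.smul_fst, Prod.smul_snd, smul_eq_mul]; ring
  have hmin : ∀ q ∈ S, φ x ≤ φ q := by
    intro q hq
    rcases eq_or_ne q x with rfl | hne
    · exact le_rfl
    · exact (h q hq hne).le
  have hhull : ∀ y ∈ convexHull ℝ S, φ x ≤ φ y := by
    intro y hy
    have hconv : Convex ℝ {q : ℝ × ℝ | φ x ≤ φ q} := convex_halfSpace_ge hlin (φ x)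
    exact convexHull_min hmin hconv hy
  have key : ∀ y ∈ convexHull ℝ S, φ y = φ x → y = x := by
    intro y hy hyx
    rw [mem_convexHull_iff_exists_fintype] at hy
    obtain ⟨ι, _, w, z, hw0, hw1, hz, hsum⟩ := hy
    have hy1 : y.1 = ∑ i, w i * (z i).1 := by
      rw [← hsum, Prod.fst_sum]; simp [Prod.smul_fst, smul_eq_mul]
    have hy2 : y.2 = ∑ i, w i * (z i).2 := by
      rw [← hsum, Prod.snd_sum]; simp [Prod.smul_snd, smul_eq_mul]
    have hφy : φ y = ∑ i, w i * φ (z i) := by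
      simp only [hφ, hy1, hy2, Finset.mul_sum, ← Finset.sum_add_distrib]
      congr 1; ext i; ring
    have hterm : ∀ i, w i * (φ (z i) - φ x) = 0 := by
      have hsum0 : ∑ i, w i * (φ (z i) - φ x) = 0 := by
        simp only [mul_sub, Finset.sum_sub_distrib, ← Finset.sum_mul, hw1, one_mul, ← hφy, hyx,
          sub_self]
      intro i
      exact (Finset.sum_eq_zero_iff_of_nonneg (fun i _ =>
        mul_nonneg (hw0 i) (sub_nonneg.2 (hmin _ (hz i))))).1 hsum0 i (Finset.mem_univ i)
    have hzx : ∀ i, w i • z i = w i • x := by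
      intro i
      rcases eq_or_ne (z i) x with he | hne
      · rw [he]
      · have : w i = 0 := by
          have h1 := hterm i
          have h2 : φ (z i) - φ x ≠ 0 := sub_ne_zero.2 (ne_of_gt (h _ (hz i) hne))
          exact (mul_eq_zero.1 h1).resolve_right h2
        rw [this, zero_smul, zero_smul]
    calc y = ∑ i, w i • z i := hsum.symm
    _ = ∑ i, w i • x := by simp_rw [hzx]
    _ = (∑ i, w i) • x := by rw [Finset.sum_smul]
    _ = x := by rw [hw1, one_smul]
  refine ⟨subset_convexHull ℝ S hx, ?_⟩
  intro x₁ h₁ x₂ h₂ hseg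
  obtain ⟨a, b, ha, hb, hab, hxe⟩ := hseg
  have hφx : a * φ x₁ + b * φ x₂ = φ x := by
    rw [← hxe]
    simp [hφ, Prod.fst_add, Prod.snd_add, Prod.smul_fst, Prod.smul_snd, smul_eq_mul]; ring
  have h1 : φ x ≤ φ x₁ := hhull _ h₁
  have h2 : φ x ≤ φ x₂ := hhull _ h₂
  have hsplit : a * φ x + b * φ x = φ x := by rw [← add_mul, hab, one_mul]
  have e1 : φ x₁ = φ x := by
    refine le_antisymm (le_of_mul_le_mul_left ?_ ha) h1
    have := mul_le_mul_of_nonneg_left h2 hb.le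
    linarith
  have e2 : φ x₂ = φ x := by
    refine le_antisymm (le_of_mul_le_mul_left ?_ hb) h2
    have := mul_le_mul_of_nonneg_left h1 ha.le
    linarith
  exact key _ h₁ e1

lemma core_ineq (n d e x y : ℤ) (hp : Prime (n - 1)) (hde : d * e = 2 * n - 1)
    (hd : 5 ≤ d) (he : 5 ≤ e) (hx1 : 1 ≤ x) (hxn : x ≤ n - 1) (hy1 : 1 ≤ y)
    (hdvd : (n : ℤ) ∣ x * y + 1) (hne : ¬(x = d ∧ y = e)) :
    2 * (d * e) < e * x + d * y := by
  have hn : 13 ≤ n := by nlinarith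
  have h5d : 5 * d ≤ 2 * n - 1 := by nlinarith
  have h5e : 5 * e ≤ 2 * n - 1 := by nlinarith
  obtain ⟨k, hk⟩ := hdvd
  have hk1 : 1 ≤ k := by nlinarith
  rcases eq_or_lt_of_le hk1 with hk1' | hk2
  · have hxy : x * y = n - 1 := by rw [← hk1'] at hk; linarith
    rcases hp.irreducible.isUnit_or_isUnit hxy.symm with hu | hu
    · have hx : x = 1 := by rcases Int.isUnit_iff.1 hu with h | h <;> omega
      have hy : y = n - 1 := by rw [hx, one_mul] at hxy; exact hxy
      rw [hx, hy]
      nlinarith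
    · have hy : y = 1 := by rcases Int.isUnit_iff.1 hu with h | h <;> omega
      have hx : x = n - 1 := by rw [hy, mul_one] at hxy; exact hxy
      rw [hx, hy]
      nlinarith
  · have hxyge : d * e ≤ x * y := by nlinarith
    have hpos : 0 < e * x + d * y := by positivity
    rcases eq_or_lt_of_le hxyge with hxyeq | hxygt
    · have hne' : e * x - d * y ≠ 0 := by
        intro h0
        have hxd : x = d := by nlinarith [sq_nonneg (x - d), sq_nonneg (x + d)]
        have hyd : y = e := by
          have : d * y = d * e := by nlinarith
          have hd0 : d ≠ 0 := by omega
          exact mul_left_cancel₀ hd0 this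
        exact hne ⟨hxd, hyd⟩
      have h1 : 1 ≤ (e * x - d * y) ^ 2 := by
        have := Int.one_le_abs hne'
        nlinarith [sq_abs (e * x - d * y)]
      nlinarith [sq_nonneg (e * x + d * y - 2 * (d * e))]
    · nlinarith [sq_nonneg (e * x - d * y), sq_nonneg (e * x + d * y - 2 * (d * e))]

lemma corner_one_vertex (n : ℕ) (hn : 2 ≤ n) : ((1 : ℝ), (1 : ℝ)) ∈ modVertices n := by
  have hx : ((1 : ℝ), (1 : ℝ)) ∈ modPoints n := by
    refine ⟨1, 1, le_refl _, ?_, le_refl _, ?_, ⟨0, by ring⟩, by norm_num⟩ <;>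
      · have : (2 : ℤ) ≤ (n : ℤ) := by exact_mod_cast hn
        omega
  refine extreme_of_unique_min hx 1 1 ?_
  rintro q ⟨a, b, ha1, han, hb1, hbn, hdvd, rfl⟩ hne
  have hab : ¬(a = 1 ∧ b = 1) := by
    rintro ⟨rfl, rfl⟩
    exact hne (by norm_num)
  have h3 : (3 : ℤ) ≤ a + b := by omega
  have h3' : (3 : ℝ) ≤ (a : ℝ) + b := by exact_mod_cast h3
  simp only
  linarith

lemma corner_top_vertex (n : ℕ) (hn : 2 ≤ n) :
    ((n : ℝ) - 1, (n : ℝ) - 1) ∈ modVertices n := by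
  have hn' : (2 : ℤ) ≤ (n : ℤ) := by exact_mod_cast hn
  have hx : ((n : ℝ) - 1, (n : ℝ) - 1) ∈ modPoints n := by
    refine ⟨(n : ℤ) - 1, (n : ℤ) - 1, by omega, le_refl _, by omega, le_refl _,
      ⟨(n : ℤ) - 2, by ring⟩, ?_⟩
    push_cast
    norm_num
  refine extreme_of_unique_min hx (-1) (-1) ?_
  rintro q ⟨a, b, ha1, han, hb1, hbn, hdvd, rfl⟩ hne
  have hab : ¬(a = (n : ℤ) - 1 ∧ b = (n : ℤ) - 1) := by
    rintro ⟨rfl, rfl⟩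
    refine hne ?_
    have : ((((n : ℤ) - 1 : ℤ) : ℝ)) = (n : ℝ) - 1 := by push_cast; ring
    rw [Prod.ext_iff]
    exact ⟨this, this⟩
  have h3 : a + b ≤ 2 * (n : ℤ) - 3 := by omega
  have h3' : (a : ℝ) + b ≤ 2 * (n : ℝ) - 3 := by exact_mod_cast h3
  have hnn : (2 : ℝ) ≤ (n : ℝ) := by exact_mod_cast hn
  simp only
  linarith

lemma P_vertex (p d e : ℕ) (hp : p.Prime) (hde : d * e = 2 * p + 1)
    (hd : 5 ≤ d) (he : 5 ≤ e) :
    ((d : ℝ), ((p : ℝ) + 1) - e) ∈ modVertices (p + 1) := by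
  set n : ℤ := (p : ℤ) + 1 with hn
  have hprime : Prime (n - 1) := by
    have : Prime ((p : ℤ)) := Nat.prime_iff_prime_int.mp hp
    simpa [hn] using this
  have hdeZ : (d : ℤ) * e = 2 * n - 1 := by push_cast [hn]; push_cast at hde ⊢; omega
  have hdZ : (5 : ℤ) ≤ d := by exact_mod_cast hd
  have heZ : (5 : ℤ) ≤ e := by exact_mod_cast he
  have hnn : 13 ≤ n := by nlinarith
  have hdn : (d : ℤ) ≤ n - 1 := by nlinarith
  have hen : (e : ℤ) ≤ n - 1 := by nlinarith
  have hcast : (((p : ℕ) + 1 : ℕ) : ℤ) = n := by push_cast [hn]; ring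
  have hx : ((d : ℝ), ((p : ℝ) + 1) - e) ∈ modPoints (p + 1) := by
    refine ⟨(d : ℤ), n - e, by omega, ?_, by omega, by omega, ?_, ?_⟩
    · rw [hcast]; omega
    · rw [hcast]
      exact ⟨(d : ℤ) - 2, by linear_combination (d : ℤ) * hn - hdeZ + (0 : ℤ)⟩
    · rw [Prod.ext_iff]
      constructor
      · norm_num
      · push_cast [hn]; ring
  refine extreme_of_unique_min hx (e : ℝ) (-(d : ℝ)) ?_
  rintro q ⟨a, b, ha1, han, hb1, hbn, hdvd, rfl⟩ hne
  rw [hcast] at han hbn hdvd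
  have hneZ : ¬(a = (d : ℤ) ∧ n - b = (e : ℤ)) := by
    rintro ⟨rfl, hb⟩
    refine hne ?_
    have hb' : b = n - e := by omega
    rw [Prod.ext_iff]
    constructor
    · norm_num
    · rw [hb']; push_cast [hn]; ring
  obtain ⟨c, hc⟩ := hdvd
  have hdvd' : n ∣ a * (n - b) + 1 := ⟨a - c, by linear_combination -hc + (0:ℤ)⟩
  have hkey : 2 * ((d : ℤ) * e) < (e : ℤ) * a + d * (n - b) :=
    core_ineq n d e a (n - b) hprime hdeZ hdZ heZ ha1 han (by omega) hdvd' hneZ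
  rw [hn] at hkey
  have hkeyR : 2 * ((d : ℝ) * e) < (e : ℝ) * a + d * (((p : ℝ) + 1) - b) := by
    exact_mod_cast hkey
  simp only
  nlinarith [hkeyR]

lemma Q_vertex (p d e : ℕ) (hp : p.Prime) (hde : d * e = 2 * p + 1)
    (hd : 5 ≤ d) (he : 5 ≤ e) :
    (((p : ℝ) + 1) - e, (d : ℝ)) ∈ modVertices (p + 1) := by
  set n : ℤ := (p : ℤ) + 1 with hn
  have hprime : Prime (n - 1) := by
    have : Prime ((p : ℤ)) := Nat.prime_iff_prime_int.mp hp
    simpa [hn] using this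
  have hdeZ : (d : ℤ) * e = 2 * n - 1 := by push_cast [hn]; push_cast at hde ⊢; omega
  have hdZ : (5 : ℤ) ≤ d := by exact_mod_cast hd
  have heZ : (5 : ℤ) ≤ e := by exact_mod_cast he
  have hnn : 13 ≤ n := by nlinarith
  have hdn : (d : ℤ) ≤ n - 1 := by nlinarith
  have hen : (e : ℤ) ≤ n - 1 := by nlinarith
  have hcast : (((p : ℕ) + 1 : ℕ) : ℤ) = n := by push_cast [hn]; ring
  have hx : (((p : ℝ) + 1) - e, (d : ℝ)) ∈ modPoints (p + 1) := by
    refine ⟨n - e, (d : ℤ), by omega, ?_, by omega, ?_, ?_, ?_⟩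
    · rw [hcast]; omega
    · rw [hcast]; omega
    · rw [hcast]
      exact ⟨(d : ℤ) - 2, by linear_combination (d : ℤ) * hn - hdeZ + (0 : ℤ)⟩
    · rw [Prod.ext_iff]
      constructor
      · push_cast [hn]; ring
      · norm_num
  refine extreme_of_unique_min hx (-(d : ℝ)) (e : ℝ) ?_
  rintro q ⟨a, b, ha1, han, hb1, hbn, hdvd, rfl⟩ hne
  rw [hcast] at han hbn hdvd
  have hneZ : ¬(b = (d : ℤ) ∧ n - a = (e : ℤ)) := by
    rintro ⟨rfl, ha⟩
    refine hne ?_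
    have ha' : a = n - e := by omega
    rw [Prod.ext_iff]
    constructor
    · rw [ha']; push_cast [hn]; ring
    · norm_num
  obtain ⟨c, hc⟩ := hdvd
  have hdvd' : n ∣ b * (n - a) + 1 := ⟨b - c, by linear_combination -hc + (0:ℤ)⟩
  have hkey : 2 * ((d : ℤ) * e) < (e : ℤ) * b + d * (n - a) :=
    core_ineq n d e b (n - a) hprime hdeZ hdZ heZ hb1 hbn (by omega) hdvd' hneZ
  rw [hn] at hkey
  have hkeyR : 2 * ((d : ℝ) * e) < (e : ℝ) * b + d * (((p : ℝ) + 1) - a) := by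
    exact_mod_cast hkey
  simp only
  nlinarith [hkeyR]

theorem stmt13 (p : ℕ) (hp : p.Prime) :
    2 * (((2 * p + 1).divisors.card : ℤ) - 3) ≤ (numVertices (p + 1) : ℤ) := by
  classical
  set N := 2 * p + 1 with hN
  have hp2 : 2 ≤ p := hp.two_le
  have hN0 : N ≠ 0 := by omega
  set D : Finset ℕ := N.divisors.filter (fun d => 5 ≤ d ∧ 5 ≤ N / d) with hD
  have hDfacts : ∀ d ∈ D, 5 ≤ d ∧ 5 ≤ N / d ∧ d * (N / d) = N := by
    intro d hd
    rw [hD, Finset.mem_filter, Nat.mem_divisors] at hd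
    exact ⟨hd.2.1, hd.2.2, Nat.mul_div_cancel' hd.1.1⟩
  -- counting divisors
  have hsub : N.divisors ⊆ D ∪ {1, 3, N / 3, N} := by
    intro d hd
    have hdvd : d ∣ N := (Nat.mem_divisors.1 hd).1
    by_cases h5 : 5 ≤ d ∧ 5 ≤ N / d
    · exact Finset.mem_union_left _ (by rw [hD, Finset.mem_filter]; exact ⟨hd, h5⟩)
    · refine Finset.mem_union_right _ ?_
      simp only [Finset.mem_insert, Finset.mem_singleton]
      rcases not_and_or.1 h5 with h | h
      · push_neg at h
        obtain ⟨c, hc⟩ := hdvd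
        have hd1 : 1 ≤ d := Nat.pos_of_dvd_of_pos ⟨c, hc⟩ (by omega)
        interval_cases d
        · left; rfl
        · exfalso; omega
        · right; left; rfl
        · exfalso; omega
      · push_neg at h
        have hedvd : N / d ∣ N := Nat.div_dvd_of_dvd hdvd
        have hmul : d * (N / d) = N := Nat.mul_div_cancel' hdvd
        have he1 : 1 ≤ N / d := Nat.pos_of_dvd_of_pos hedvd (by omega)
        have hcases : N / d = 1 ∨ N / d = 2 ∨ N / d = 3 ∨ N / d = 4 := by omega
        rcases hcases with h' | h' | h' | h' <;> rw [h'] at hmul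
        · right; right; right; omega
        · exfalso; omega
        · right; right; left; omega
        · exfalso; omega
  have hcard4 : ({1, 3, N / 3, N} : Finset ℕ).card ≤ 4 := by
    have h1 := Finset.card_insert_le 1 ({3, N / 3, N} : Finset ℕ)
    have h2 := Finset.card_insert_le 3 ({N / 3, N} : Finset ℕ)
    have h3 := Finset.card_insert_le (N / 3) ({N} : Finset ℕ)
    simp only [Finset.card_singleton] at *
    omega
  have hτ : N.divisors.card ≤ D.card + 4 := by
    calc N.divisors.card ≤ (D ∪ {1, 3, N / 3, N}).card := Finset.card_le_card hsub
    _ ≤ D.card + ({1, 3, N / 3, N} : Finset ℕ).card := Finset.card_union_le _ _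
    _ ≤ D.card + 4 := by omega
  -- the candidate vertex set
  set n : ℕ := p + 1 with hn
  set Pm : ℕ → ℝ × ℝ := fun d => ((d : ℝ), ((p : ℝ) + 1) - (N / d : ℕ)) with hPm
  set Qm : ℕ → ℝ × ℝ := fun d => (((p : ℝ) + 1) - (N / d : ℕ), (d : ℝ)) with hQm
  -- key inequality for d ∈ D : d + N/d + 1 ≤ n and 5 ≤ d, N/d
  have hDsum : ∀ d ∈ D, 5 ≤ d ∧ 5 ≤ N / d ∧ (d : ℤ) + (N / d : ℕ) < (p : ℤ) + 1 := by
    intro d hd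
    obtain ⟨h1, h2, h3⟩ := hDfacts d hd
    refine ⟨h1, h2, ?_⟩
    have h3' : (d : ℤ) * ((N / d : ℕ) : ℤ) = 2 * ((p : ℤ) + 1) - 1 := by
      have h4 : ((d : ℤ)) * ((N / d : ℕ) : ℤ) = ((N : ℕ) : ℤ) := by exact_mod_cast h3
      have h5 : ((N : ℕ) : ℤ) = 2 * (p : ℤ) + 1 := by rw [hN]; push_cast; ring
      linarith
    have h1' : (5 : ℤ) ≤ d := by exact_mod_cast h1
    have h2' : (5 : ℤ) ≤ ((N / d : ℕ) : ℤ) := by exact_mod_cast h2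
    nlinarith
  have hPsign : ∀ x ∈ D.image Pm, x.1 < x.2 := by
    rintro x hx
    obtain ⟨d, hd, rfl⟩ := Finset.mem_image.1 hx
    obtain ⟨_, _, h3⟩ := hDsum d hd
    have : ((d : ℝ) + (N / d : ℕ)) < (p : ℝ) + 1 := by exact_mod_cast h3
    simp only [hPm]
    linarith
  have hQsign : ∀ x ∈ D.image Qm, x.2 < x.1 := by
    rintro x hx
    obtain ⟨d, hd, rfl⟩ := Finset.mem_image.1 hx
    obtain ⟨_, _, h3⟩ := hDsum d hd
    have : ((d : ℝ) + (N / d : ℕ)) < (p : ℝ) + 1 := by exact_mod_cast h3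
    simp only [hQm]
    linarith
  set C : Finset (ℝ × ℝ) := {((1 : ℝ), (1 : ℝ)), (((n : ℕ) : ℝ) - 1, ((n : ℕ) : ℝ) - 1)}
    with hC
  have hCsign : ∀ x ∈ C, x.1 = x.2 := by
    intro x hx
    rw [hC, Finset.mem_insert, Finset.mem_singleton] at hx
    rcases hx with rfl | rfl <;> rfl
  set E : Finset (ℝ × ℝ) := (D.image Pm ∪ D.image Qm) ∪ C with hE
  -- cardinality of E
  have hinjP : Set.InjOn Pm D := by
    intro a _ b _ hab
    have : ((a : ℕ) : ℝ) = (b : ℕ) := congrArg Prod.fst hab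
    exact_mod_cast this
  have hinjQ : Set.InjOn Qm D := by
    intro a _ b _ hab
    have : ((a : ℕ) : ℝ) = (b : ℕ) := congrArg Prod.snd hab
    exact_mod_cast this
  have hdisjPQ : Disjoint (D.image Pm) (D.image Qm) := by
    rw [Finset.disjoint_left]
    intro x hxP hxQ
    exact absurd (hPsign x hxP) (not_lt.2 (hQsign x hxQ).le)
  have hdisjC : Disjoint (D.image Pm ∪ D.image Qm) C := by
    rw [Finset.disjoint_left]
    intro x hxPQ hxC
    rcases Finset.mem_union.1 hxPQ with h | h
    · exact absurd (hCsign x hxC) (ne_of_lt (hPsign x h))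
    · exact absurd (hCsign x hxC).symm (ne_of_lt (hQsign x h))
  have hcardC : C.card = 2 := by
    rw [hC, Finset.card_insert_of_notMem, Finset.card_singleton]
    rw [Finset.mem_singleton]
    intro hcontra
    have h1 : (1 : ℝ) = ((n : ℕ) : ℝ) - 1 := congrArg Prod.fst hcontra
    have : (3 : ℝ) ≤ ((n : ℕ) : ℝ) := by
      have : (3 : ℕ) ≤ n := by omega
      exact_mod_cast this
    linarith
  have hcardE : E.card = 2 * D.card + 2 := by
    rw [hE, Finset.card_union_of_disjoint hdisjC, Finset.card_union_of_disjoint hdisjPQ,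
      Finset.card_image_of_injOn hinjP, Finset.card_image_of_injOn hinjQ, hcardC]
    ring
  -- E consists of vertices
  have hEsub : (E : Set (ℝ × ℝ)) ⊆ modVertices n := by
    intro x hx
    rw [Finset.coe_union, Finset.coe_union] at hx
    rcases hx with hx | hx
    · rcases hx with hx | hx
      · obtain ⟨d, hd, rfl⟩ := Finset.mem_coe.1 hx |> Finset.mem_image.1
        obtain ⟨h1, h2, h3⟩ := hDfacts d hd
        exact P_vertex p d (N / d) hp h3 h1 h2
      · obtain ⟨d, hd, rfl⟩ := Finset.mem_coe.1 hx |> Finset.mem_image.1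
        obtain ⟨h1, h2, h3⟩ := hDfacts d hd
        exact Q_vertex p d (N / d) hp h3 h1 h2
    · have hx' := Finset.mem_coe.1 hx
      rw [hC, Finset.mem_insert, Finset.mem_singleton] at hx'
      rcases hx' with rfl | rfl
      · exact corner_one_vertex n (by omega)
      · exact corner_top_vertex n (by omega)
  -- conclude
  have hVsub : modVertices n ⊆ modPoints n := extremePoints_convexHull_subset
  have hVfin : (modVertices n).Finite := (modPoints_finite n).subset hVsub
  have hEle : E.card ≤ (modVertices n).ncard := by
    rw [← Set.ncard_coe_finset]
    exact Set.ncard_le_ncard hEsub hVfin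
  have hv : numVertices n = (modVertices n).ncard := rfl
  have hDge : (N.divisors.card : ℤ) ≤ (D.card : ℤ) + 4 := by exact_mod_cast hτ
  have hEcard' : (2 : ℤ) * D.card + 2 ≤ (numVertices n : ℤ) := by
    rw [hv]
    have : ((E.card : ℕ) : ℤ) ≤ ((modVertices n).ncard : ℤ) := by exact_mod_cast hEle
    rw [hcardE] at this
    push_cast at this ⊢
    linarith
  linarith
end
end

section
/- For every integer n ≥ 2, v(n) ≤ 2(n − M(n) + 1). -/
set_option maxHeartbeats 1000000

open Filter MeasureTheory

noncomputable section

/-- `M(n) = max{|a-b| : 1 ≤ a,b ≤ n-1, ab ≡ 1 (mod n)}`. -/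
def Mgap (n : ℕ) : ℕ :=
  sSup {m : ℕ | ∃ a b : ℤ, 1 ≤ a ∧ a ≤ (n : ℤ) - 1 ∧ 1 ≤ b ∧ b ≤ (n : ℤ) - 1 ∧
    (n : ℤ) ∣ a * b - 1 ∧ m = (a - b).natAbs}

/-- Membership in a convex hull from an explicit nonnegative combination of four points. -/
lemma quad_mem {S : Set (ℝ × ℝ)} {A B C D q : ℝ × ℝ}
    (hA : A ∈ S) (hB : B ∈ S) (hC : C ∈ S) (hD : D ∈ S)
    {w1 w2 w3 w4 : ℝ} (h1 : 0 ≤ w1) (h2 : 0 ≤ w2) (h3 : 0 ≤ w3) (h4 : 0 ≤ w4)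
    (hpos : 0 < w1 + w2 + w3 + w4)
    (heq : (w1 + w2 + w3 + w4) • q = w1 • A + w2 • B + w3 • C + w4 • D) :
    q ∈ convexHull ℝ S := by
  have hw : ∀ i ∈ (Finset.univ : Finset (Fin 4)), 0 ≤ (![w1, w2, w3, w4]) i := by
    intro i _
    fin_cases i
    exacts [h1, h2, h3, h4]
  have hz : ∀ i ∈ (Finset.univ : Finset (Fin 4)), (![A, B, C, D]) i ∈ S := by
    intro i _
    fin_cases i
    exacts [hA, hB, hC, hD]
  have hmem := Finset.centerMass_mem_convexHull (Finset.univ : Finset (Fin 4))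
      (w := ![w1, w2, w3, w4]) (z := ![A, B, C, D]) hw
      (by simpa [Fin.sum_univ_four] using hpos) hz
  have e1 : ∑ i, (![w1, w2, w3, w4]) i = w1 + w2 + w3 + w4 := by
    simp [Fin.sum_univ_four]
  have e2 : ∑ i, (![w1, w2, w3, w4]) i • (![A, B, C, D]) i
      = w1 • A + w2 • B + w3 • C + w4 • D := by
    simp [Fin.sum_univ_four]
  have hcm : (Finset.univ : Finset (Fin 4)).centerMass ![w1, w2, w3, w4] ![A, B, C, D] = q := by
    rw [Finset.centerMass, e1, e2, ← heq, smul_smul, inv_mul_cancel₀ hpos.ne', one_smul]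
  exact hcm ▸ hmem

/-- An extreme point of the hull that lies in the hull of a subfamily belongs to the
subfamily. -/
lemma not_vertex {n : ℕ} {q : ℝ × ℝ} {S : Set (ℝ × ℝ)} (hS : S ⊆ modPoints n)
    (hq : q ∈ convexHull ℝ S) (hv : q ∈ modVertices n) : q ∈ S := by
  have h1 : convexHull ℝ S ⊆ modHull n := convexHull_mono hS
  have h2 : q ∈ (convexHull ℝ S).extremePoints ℝ :=
    inter_extremePoints_subset_extremePoints_of_subset h1 ⟨hq, hv⟩
  exact extremePoints_convexHull_subset h2

/-- A union over a finset of subsingleton sets has cardinality at most the finset's. -/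
lemma biUnion_card_bound (R : Finset ℤ) (t : ℤ → Set (ℝ × ℝ))
    (ht : ∀ r, (t r).Subsingleton) :
    (⋃ r ∈ R, t r).ncard ≤ R.card ∧ (⋃ r ∈ R, t r).Finite := by
  classical
  induction R using Finset.induction with
  | empty => simp
  | @insert a s ha ih =>
    rw [Finset.set_biUnion_insert]
    have h1 : (t a).ncard ≤ 1 := by
      rcases (ht a).eq_empty_or_singleton with h | ⟨x, h⟩ <;> simp [h]
    refine ⟨?_, ((ht a).finite).union ih.2⟩
    calc (t a ∪ ⋃ r ∈ s, t r).ncard ≤ (t a).ncard + (⋃ r ∈ s, t r).ncard :=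
          Set.ncard_union_le _ _
      _ ≤ 1 + s.card := add_le_add h1 ih.1
      _ = (insert a s).card := by rw [Finset.card_insert_of_notMem ha]; omega

theorem stmt15 (n : ℕ) (hn : 2 ≤ n) :
    (numVertices n : ℤ) ≤ 2 * ((n : ℤ) - (Mgap n : ℤ) + 1) := by
  have hn2 : (2 : ℤ) ≤ (n : ℤ) := by exact_mod_cast hn
  set T : Set ℕ := {m : ℕ | ∃ a b : ℤ, 1 ≤ a ∧ a ≤ (n : ℤ) - 1 ∧ 1 ≤ b ∧ b ≤ (n : ℤ) - 1 ∧
    (n : ℤ) ∣ a * b - 1 ∧ m = (a - b).natAbs} with hTdef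
  have h0T : 0 ∈ T := ⟨1, 1, le_refl _, by omega, le_refl _, by omega, by norm_num, by norm_num⟩
  have hbdd : BddAbove T := by
    refine ⟨n, fun m hm => ?_⟩
    obtain ⟨a, b, h1, h2, h3, h4, _, h6⟩ := hm
    omega
  have hMT : Mgap n ∈ T := by
    rw [show Mgap n = sSup T from rfl]
    exact Nat.sSup_mem ⟨0, h0T⟩ hbdd
  have hMle : ∀ a b : ℤ, 1 ≤ a → a ≤ (n : ℤ) - 1 → 1 ≤ b → b ≤ (n : ℤ) - 1 →
      (n : ℤ) ∣ a * b - 1 → a - b ≤ (Mgap n : ℤ) ∧ b - a ≤ (Mgap n : ℤ) := by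
    intro a b h1 h2 h3 h4 h5
    have h6 : (a - b).natAbs ≤ Mgap n := by
      rw [show Mgap n = sSup T from rfl]
      exact le_csSup hbdd ⟨a, b, h1, h2, h3, h4, h5, rfl⟩
    omega
  obtain ⟨a₀, b₀, hb01, hba, ha0n, hsum0, hdvd0, hMeq⟩ :
      ∃ a₀ b₀ : ℤ, 1 ≤ b₀ ∧ b₀ ≤ a₀ ∧ a₀ ≤ (n : ℤ) - 1 ∧ a₀ + b₀ ≤ (n : ℤ) ∧
        (n : ℤ) ∣ a₀ * b₀ - 1 ∧ a₀ - b₀ = (Mgap n : ℤ) := by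
    obtain ⟨a, b, h1, h2, h3, h4, h5, h6⟩ := hMT
    obtain ⟨k, hk⟩ := h5
    rcases le_total b a with hab | hab
    · rcases le_or_gt (a + b) (n : ℤ) with hs | hs
      · exact ⟨a, b, h3, hab, h2, hs, ⟨k, hk⟩, by omega⟩
      · exact ⟨(n : ℤ) - b, (n : ℤ) - a, by omega, by omega, by omega, by omega,
          ⟨(n : ℤ) - a - b + k, by linear_combination hk⟩, by omega⟩
    · rcases le_or_gt (a + b) (n : ℤ) with hs | hs
      · exact ⟨b, a, h1, hab, h4, by omega, ⟨k, by linear_combination hk⟩, by omega⟩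
      · exact ⟨(n : ℤ) - a, (n : ℤ) - b, by omega, by omega, by omega, by omega,
          ⟨(n : ℤ) - a - b + k, by linear_combination hk⟩, by omega⟩
  have uniq : ∀ a a' b : ℤ, 1 ≤ a → a ≤ (n : ℤ) - 1 → 1 ≤ a' → a' ≤ (n : ℤ) - 1 →
      (n : ℤ) ∣ a * b - 1 → (n : ℤ) ∣ a' * b - 1 → a = a' := by
    intro a a' b h1 h2 h3 h4 h5 h6
    have h7 : (n : ℤ) ∣ (a - a') * b := by
      have h := dvd_sub h5 h6
      have e : (a * b - 1) - (a' * b - 1) = (a - a') * b := by ring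
      rwa [e] at h
    have h8 : (n : ℤ) ∣ a - a' := by
      have e : a - a' = a * ((a - a') * b) - (a - a') * (a * b - 1) := by ring
      rw [e]
      exact dvd_sub (Dvd.dvd.mul_left h7 a) (Dvd.dvd.mul_left h5 (a - a'))
    obtain ⟨k, hk⟩ := h8
    have hk0 : k = 0 := by
      rcases lt_trichotomy k 0 with h | h | h
      · exfalso
        have hnk : (n : ℤ) * k ≤ (n : ℤ) * (-1) :=
          mul_le_mul_of_nonneg_left (by omega) (by omega)
        linarith
      · exact h
      · exfalso
        have hnk : (n : ℤ) * 1 ≤ (n : ℤ) * k :=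
          mul_le_mul_of_nonneg_left (by omega) (by omega)
        linarith
    rw [hk0, mul_zero] at hk
    omega
  have memG : ∀ x y : ℤ, 1 ≤ x → x ≤ (n : ℤ) - 1 → 1 ≤ y → y ≤ (n : ℤ) - 1 →
      (n : ℤ) ∣ x * y - 1 → ((x : ℝ), (y : ℝ)) ∈ modPoints n :=
    fun x y p1 p2 p3 p4 p5 => ⟨x, y, p1, p2, p3, p4, p5, rfl⟩
  obtain ⟨k₀, hk₀⟩ := hdvd0
  have hdvd0' : (n : ℤ) ∣ a₀ * b₀ - 1 := ⟨k₀, hk₀⟩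
  have hdvd1 : (n : ℤ) ∣ b₀ * a₀ - 1 := ⟨k₀, by linear_combination hk₀⟩
  have hdvd2 : (n : ℤ) ∣ ((n : ℤ) - b₀) * ((n : ℤ) - a₀) - 1 :=
    ⟨(n : ℤ) - a₀ - b₀ + k₀, by linear_combination hk₀⟩
  have hdvd3 : (n : ℤ) ∣ ((n : ℤ) - a₀) * ((n : ℤ) - b₀) - 1 :=
    ⟨(n : ℤ) - a₀ - b₀ + k₀, by linear_combination hk₀⟩
  have hdvd4 : (n : ℤ) ∣ (1 : ℤ) * 1 - 1 := by norm_num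
  have hdvd5 : (n : ℤ) ∣ ((n : ℤ) - 1) * ((n : ℤ) - 1) - 1 := ⟨(n : ℤ) - 2, by ring⟩
  have hsubG : modVertices n ⊆ modPoints n :=
    fun q hq => extremePoints_convexHull_subset hq
  -- the key geometric lemma
  have key : 1 ≤ Mgap n → ∀ a b : ℤ, 1 ≤ a → a ≤ (n : ℤ) - 1 → 1 ≤ b → b ≤ (n : ℤ) - 1 →
      (n : ℤ) ∣ a * b - 1 → ((a : ℝ), (b : ℝ)) ∈ modVertices n →
      b ≤ b₀ ∨ a ≤ b₀ ∨ (n : ℤ) - b₀ ≤ a ∨ (n : ℤ) - b₀ ≤ b := by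
    intro hM1 a b ha1 ha2 hb1 hb2 hdv hvert
    by_contra hcon
    push_neg at hcon
    obtain ⟨hc1, hc2, hc3, hc4⟩ := hcon
    have hM1' : 1 ≤ a₀ - b₀ := by omega
    have habM := hMle a b ha1 ha2 hb1 hb2 hdv
    rcases le_or_gt (a + b) (a₀ + b₀) with hcase1 | hcase1
    · -- bottom triangle (1,1), (a₀,b₀), (b₀,a₀)
      have hW1 : (0 : ℤ) ≤ (a₀ - b₀) * (a₀ + b₀ - a - b) := mul_nonneg (by omega) (by omega)
      have hW2 : (0 : ℤ) ≤ (a - 1) * (a₀ - 1) - (b - 1) * (b₀ - 1) := by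
        have t1 : (0 : ℤ) ≤ (a - b + (a₀ - b₀)) * (b₀ - 1) := mul_nonneg (by omega) (by omega)
        have t2 : (0 : ℤ) ≤ (a₀ - b₀) * (a - b₀) := mul_nonneg (by omega) (by omega)
        nlinarith [t1, t2]
      have hW3 : (0 : ℤ) ≤ (b - 1) * (a₀ - 1) - (a - 1) * (b₀ - 1) := by
        have t1 : (0 : ℤ) ≤ (b - a + (a₀ - b₀)) * (b₀ - 1) := mul_nonneg (by omega) (by omega)
        have t2 : (0 : ℤ) ≤ (a₀ - b₀) * (b - b₀) := mul_nonneg (by omega) (by omega)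
        nlinarith [t1, t2]
      have hWpos : (0 : ℤ) < (a₀ - b₀) * (a₀ + b₀ - a - b)
          + ((a - 1) * (a₀ - 1) - (b - 1) * (b₀ - 1))
          + ((b - 1) * (a₀ - 1) - (a - 1) * (b₀ - 1)) := by
        have e : (a₀ - b₀) * (a₀ + b₀ - a - b)
            + ((a - 1) * (a₀ - 1) - (b - 1) * (b₀ - 1))
            + ((b - 1) * (a₀ - 1) - (a - 1) * (b₀ - 1))
            = (a₀ - b₀) * (a₀ + b₀ - 2) := by ring
        rw [e]
        exact mul_pos (by omega) (by omega)
      have hq : ((a : ℝ), (b : ℝ)) ∈ convexHull ℝ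
          ({(((1 : ℤ) : ℝ), ((1 : ℤ) : ℝ)), ((a₀ : ℝ), (b₀ : ℝ)), ((b₀ : ℝ), (a₀ : ℝ))}
            : Set (ℝ × ℝ)) := by
        refine quad_mem (A := (((1 : ℤ) : ℝ), ((1 : ℤ) : ℝ))) (B := ((a₀ : ℝ), (b₀ : ℝ)))
          (C := ((b₀ : ℝ), (a₀ : ℝ))) (D := ((b₀ : ℝ), (a₀ : ℝ)))
          (by simp) (by simp) (by simp) (by simp)
          (w1 := (((a₀ - b₀) * (a₀ + b₀ - a - b) : ℤ) : ℝ))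
          (w2 := (((a - 1) * (a₀ - 1) - (b - 1) * (b₀ - 1) : ℤ) : ℝ))
          (w3 := (((b - 1) * (a₀ - 1) - (a - 1) * (b₀ - 1) : ℤ) : ℝ))
          (w4 := 0)
          (by exact_mod_cast hW1) (by exact_mod_cast hW2) (by exact_mod_cast hW3) le_rfl
          ?_ ?_
        · have h'' : (0 : ℤ) < (a₀ - b₀) * (a₀ + b₀ - a - b)
              + ((a - 1) * (a₀ - 1) - (b - 1) * (b₀ - 1))
              + ((b - 1) * (a₀ - 1) - (a - 1) * (b₀ - 1)) + 0 := by linarith [hWpos]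
          exact_mod_cast h''
        · simp only [Prod.smul_mk, Prod.mk_add_mk, smul_eq_mul, Prod.mk.injEq]
          constructor <;> · push_cast; ring
      have hS : ({(((1 : ℤ) : ℝ), ((1 : ℤ) : ℝ)), ((a₀ : ℝ), (b₀ : ℝ)), ((b₀ : ℝ), (a₀ : ℝ))}
          : Set (ℝ × ℝ)) ⊆ modPoints n := by
        intro x hx
        simp only [Set.mem_insert_iff, Set.mem_singleton_iff] at hx
        rcases hx with rfl | rfl | rfl
        · exact memG 1 1 (by omega) (by omega) (by omega) (by omega) hdvd4
        · exact memG a₀ b₀ (by omega) (by omega) (by omega) (by omega) hdvd0'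
        · exact memG b₀ a₀ (by omega) (by omega) (by omega) (by omega) hdvd1
      have hin := not_vertex hS hq hvert
      simp only [Set.mem_insert_iff, Set.mem_singleton_iff, Prod.mk.injEq] at hin
      rcases hin with ⟨e1, e2⟩ | ⟨e1, e2⟩ | ⟨e1, e2⟩
      · have : b = 1 := by exact_mod_cast e2
        omega
      · have : b = b₀ := by exact_mod_cast e2
        omega
      · have : a = b₀ := by exact_mod_cast e1
        omega
    · rcases le_or_gt (2 * (n : ℤ) - (a₀ + b₀)) (a + b) with hcase2 | hcase2
      · -- top triangle (n-1,n-1), (n-a₀,n-b₀), (n-b₀,n-a₀)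
        have hW1 : (0 : ℤ) ≤ (a₀ - b₀) * (a + b - (2 * n - a₀ - b₀)) :=
          mul_nonneg (by omega) (by omega)
        have hW2 : (0 : ℤ) ≤ (n - a - 1) * (a₀ - 1) - (n - b - 1) * (b₀ - 1) := by
          have t1 : (0 : ℤ) ≤ (b - a + (a₀ - b₀)) * (b₀ - 1) := mul_nonneg (by omega) (by omega)
          have t2 : (0 : ℤ) ≤ (a₀ - b₀) * ((n - a) - b₀) := mul_nonneg (by omega) (by omega)
          nlinarith [t1, t2]
        have hW3 : (0 : ℤ) ≤ (n - b - 1) * (a₀ - 1) - (n - a - 1) * (b₀ - 1) := by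
          have t1 : (0 : ℤ) ≤ (a - b + (a₀ - b₀)) * (b₀ - 1) := mul_nonneg (by omega) (by omega)
          have t2 : (0 : ℤ) ≤ (a₀ - b₀) * ((n - b) - b₀) := mul_nonneg (by omega) (by omega)
          nlinarith [t1, t2]
        have hWpos : (0 : ℤ) < (a₀ - b₀) * (a + b - (2 * n - a₀ - b₀))
            + ((n - a - 1) * (a₀ - 1) - (n - b - 1) * (b₀ - 1))
            + ((n - b - 1) * (a₀ - 1) - (n - a - 1) * (b₀ - 1)) := by
          have e : (a₀ - b₀) * (a + b - (2 * n - a₀ - b₀))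
              + ((n - a - 1) * (a₀ - 1) - (n - b - 1) * (b₀ - 1))
              + ((n - b - 1) * (a₀ - 1) - (n - a - 1) * (b₀ - 1))
              = (a₀ - b₀) * (a₀ + b₀ - 2) := by ring
          rw [e]
          exact mul_pos (by omega) (by omega)
        have hq : ((a : ℝ), (b : ℝ)) ∈ convexHull ℝ
            ({((((n : ℤ) - 1 : ℤ) : ℝ), (((n : ℤ) - 1 : ℤ) : ℝ)),
              ((((n : ℤ) - a₀ : ℤ) : ℝ), (((n : ℤ) - b₀ : ℤ) : ℝ)),
              ((((n : ℤ) - b₀ : ℤ) : ℝ), (((n : ℤ) - a₀ : ℤ) : ℝ))} : Set (ℝ × ℝ)) := by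
          refine quad_mem (A := ((((n : ℤ) - 1 : ℤ) : ℝ), (((n : ℤ) - 1 : ℤ) : ℝ)))
            (B := ((((n : ℤ) - a₀ : ℤ) : ℝ), (((n : ℤ) - b₀ : ℤ) : ℝ)))
            (C := ((((n : ℤ) - b₀ : ℤ) : ℝ), (((n : ℤ) - a₀ : ℤ) : ℝ)))
            (D := ((((n : ℤ) - b₀ : ℤ) : ℝ), (((n : ℤ) - a₀ : ℤ) : ℝ)))
            (by simp) (by simp) (by simp) (by simp)
            (w1 := (((a₀ - b₀) * (a + b - (2 * n - a₀ - b₀)) : ℤ) : ℝ))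
            (w2 := (((n - a - 1) * (a₀ - 1) - (n - b - 1) * (b₀ - 1) : ℤ) : ℝ))
            (w3 := (((n - b - 1) * (a₀ - 1) - (n - a - 1) * (b₀ - 1) : ℤ) : ℝ))
            (w4 := 0)
            (by exact_mod_cast hW1) (by exact_mod_cast hW2) (by exact_mod_cast hW3) le_rfl
            ?_ ?_
          · have h'' : (0 : ℤ) < (a₀ - b₀) * (a + b - (2 * n - a₀ - b₀))
                + ((n - a - 1) * (a₀ - 1) - (n - b - 1) * (b₀ - 1))
                + ((n - b - 1) * (a₀ - 1) - (n - a - 1) * (b₀ - 1)) + 0 := by linarith [hWpos]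
            exact_mod_cast h''
          · simp only [Prod.smul_mk, Prod.mk_add_mk, smul_eq_mul, Prod.mk.injEq]
            constructor <;> · push_cast; ring
        have hS : ({((((n : ℤ) - 1 : ℤ) : ℝ), (((n : ℤ) - 1 : ℤ) : ℝ)),
              ((((n : ℤ) - a₀ : ℤ) : ℝ), (((n : ℤ) - b₀ : ℤ) : ℝ)),
              ((((n : ℤ) - b₀ : ℤ) : ℝ), (((n : ℤ) - a₀ : ℤ) : ℝ))} : Set (ℝ × ℝ))
            ⊆ modPoints n := by
          intro x hx
          simp only [Set.mem_insert_iff, Set.mem_singleton_iff] at hx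
          rcases hx with rfl | rfl | rfl
          · exact memG ((n : ℤ) - 1) ((n : ℤ) - 1) (by omega) (by omega) (by omega) (by omega)
              hdvd5
          · exact memG ((n : ℤ) - a₀) ((n : ℤ) - b₀) (by omega) (by omega) (by omega) (by omega)
              hdvd3
          · exact memG ((n : ℤ) - b₀) ((n : ℤ) - a₀) (by omega) (by omega) (by omega) (by omega)
              hdvd2
        have hin := not_vertex hS hq hvert
        simp only [Set.mem_insert_iff, Set.mem_singleton_iff, Prod.mk.injEq] at hin
        rcases hin with ⟨e1, e2⟩ | ⟨e1, e2⟩ | ⟨e1, e2⟩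
        · have : b = (n : ℤ) - 1 := by exact_mod_cast e2
          omega
        · have : b = (n : ℤ) - b₀ := by exact_mod_cast e2
          omega
        · have : a = (n : ℤ) - b₀ := by exact_mod_cast e1
          omega
      · -- middle quadrilateral (a₀,b₀), (b₀,a₀), (n-b₀,n-a₀), (n-a₀,n-b₀)
        have hWP : (0 : ℤ) ≤ ((a₀ - b₀) + (a - b)) * ((2 * n - a₀ - b₀) - (a + b)) :=
          mul_nonneg (by omega) (by omega)
        have hWsP : (0 : ℤ) ≤ ((a₀ - b₀) - (a - b)) * ((2 * n - a₀ - b₀) - (a + b)) :=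
          mul_nonneg (by omega) (by omega)
        have hWP' : (0 : ℤ) ≤ ((a₀ - b₀) + (a - b)) * ((a + b) - (a₀ + b₀)) :=
          mul_nonneg (by omega) (by omega)
        have hWsP' : (0 : ℤ) ≤ ((a₀ - b₀) - (a - b)) * ((a + b) - (a₀ + b₀)) :=
          mul_nonneg (by omega) (by omega)
        have hWpos : (0 : ℤ) < ((a₀ - b₀) + (a - b)) * ((2 * n - a₀ - b₀) - (a + b))
            + ((a₀ - b₀) - (a - b)) * ((2 * n - a₀ - b₀) - (a + b))
            + ((a₀ - b₀) + (a - b)) * ((a + b) - (a₀ + b₀))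
            + ((a₀ - b₀) - (a - b)) * ((a + b) - (a₀ + b₀)) := by
          have e : ((a₀ - b₀) + (a - b)) * ((2 * n - a₀ - b₀) - (a + b))
              + ((a₀ - b₀) - (a - b)) * ((2 * n - a₀ - b₀) - (a + b))
              + ((a₀ - b₀) + (a - b)) * ((a + b) - (a₀ + b₀))
              + ((a₀ - b₀) - (a - b)) * ((a + b) - (a₀ + b₀))
              = (2 * (a₀ - b₀)) * ((2 * n - a₀ - b₀) - (a₀ + b₀)) := by ring
          rw [e]
          exact mul_pos (by omega) (by omega)
        have hq : ((a : ℝ), (b : ℝ)) ∈ convexHull ℝ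
            ({((a₀ : ℝ), (b₀ : ℝ)), ((b₀ : ℝ), (a₀ : ℝ)),
              ((((n : ℤ) - b₀ : ℤ) : ℝ), (((n : ℤ) - a₀ : ℤ) : ℝ)),
              ((((n : ℤ) - a₀ : ℤ) : ℝ), (((n : ℤ) - b₀ : ℤ) : ℝ))} : Set (ℝ × ℝ)) := by
          refine quad_mem (A := ((a₀ : ℝ), (b₀ : ℝ))) (B := ((b₀ : ℝ), (a₀ : ℝ)))
            (C := ((((n : ℤ) - b₀ : ℤ) : ℝ), (((n : ℤ) - a₀ : ℤ) : ℝ)))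
            (D := ((((n : ℤ) - a₀ : ℤ) : ℝ), (((n : ℤ) - b₀ : ℤ) : ℝ)))
            (by simp) (by simp) (by simp) (by simp)
            (w1 := ((((a₀ - b₀) + (a - b)) * ((2 * n - a₀ - b₀) - (a + b)) : ℤ) : ℝ))
            (w2 := ((((a₀ - b₀) - (a - b)) * ((2 * n - a₀ - b₀) - (a + b)) : ℤ) : ℝ))
            (w3 := ((((a₀ - b₀) + (a - b)) * ((a + b) - (a₀ + b₀)) : ℤ) : ℝ))
            (w4 := ((((a₀ - b₀) - (a - b)) * ((a + b) - (a₀ + b₀)) : ℤ) : ℝ))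
            (by exact_mod_cast hWP) (by exact_mod_cast hWsP)
            (by exact_mod_cast hWP') (by exact_mod_cast hWsP')
            ?_ ?_
          · have h'' : (0 : ℤ) < ((a₀ - b₀) + (a - b)) * ((2 * n - a₀ - b₀) - (a + b))
                + ((a₀ - b₀) - (a - b)) * ((2 * n - a₀ - b₀) - (a + b))
                + ((a₀ - b₀) + (a - b)) * ((a + b) - (a₀ + b₀))
                + ((a₀ - b₀) - (a - b)) * ((a + b) - (a₀ + b₀)) := by linarith [hWpos]
            exact_mod_cast h''
          · simp only [Prod.smul_mk, Prod.mk_add_mk, smul_eq_mul, Prod.mk.injEq]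
            constructor <;> · push_cast; ring
        have hS : ({((a₀ : ℝ), (b₀ : ℝ)), ((b₀ : ℝ), (a₀ : ℝ)),
              ((((n : ℤ) - b₀ : ℤ) : ℝ), (((n : ℤ) - a₀ : ℤ) : ℝ)),
              ((((n : ℤ) - a₀ : ℤ) : ℝ), (((n : ℤ) - b₀ : ℤ) : ℝ))} : Set (ℝ × ℝ))
            ⊆ modPoints n := by
          intro x hx
          simp only [Set.mem_insert_iff, Set.mem_singleton_iff] at hx
          rcases hx with rfl | rfl | rfl | rfl
          · exact memG a₀ b₀ (by omega) (by omega) (by omega) (by omega) hdvd0'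
          · exact memG b₀ a₀ (by omega) (by omega) (by omega) (by omega) hdvd1
          · exact memG ((n : ℤ) - b₀) ((n : ℤ) - a₀) (by omega) (by omega) (by omega) (by omega)
              hdvd2
          · exact memG ((n : ℤ) - a₀) ((n : ℤ) - b₀) (by omega) (by omega) (by omega) (by omega)
              hdvd3
        have hin := not_vertex hS hq hvert
        simp only [Set.mem_insert_iff, Set.mem_singleton_iff, Prod.mk.injEq] at hin
        rcases hin with ⟨e1, e2⟩ | ⟨e1, e2⟩ | ⟨e1, e2⟩ | ⟨e1, e2⟩
        · have : b = b₀ := by exact_mod_cast e2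
          omega
        · have : a = b₀ := by exact_mod_cast e1
          omega
        · have : a = (n : ℤ) - b₀ := by exact_mod_cast e1
          omega
        · have : b = (n : ℤ) - b₀ := by exact_mod_cast e2
          omega
  -- the counting lemma
  have count : ∀ R : Finset ℤ,
      (∀ a b : ℤ, 1 ≤ a → a ≤ (n : ℤ) - 1 → 1 ≤ b → b ≤ (n : ℤ) - 1 →
        (n : ℤ) ∣ a * b - 1 → ((a : ℝ), (b : ℝ)) ∈ modVertices n → b ∈ R ∨ a ∈ R) →
      (numVertices n : ℤ) ≤ 2 * (R.card : ℤ) := by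
    intro R hR
    have hsub1 : ∀ r : ℤ, ({q : ℝ × ℝ | q ∈ modPoints n ∧ q.2 = (r : ℝ)}).Subsingleton := by
      intro r x hx y hy
      obtain ⟨⟨a, b, p1, p2, p3, p4, p5, rfl⟩, hx2⟩ := hx
      obtain ⟨⟨a', b', q1, q2, q3, q4, q5, rfl⟩, hy2⟩ := hy
      simp only at hx2 hy2
      have hb : b = r := by exact_mod_cast hx2
      have hb' : b' = r := by exact_mod_cast hy2
      have hbb : b' = b := by omega
      rw [hbb] at q5
      have haa : a = a' := uniq a a' b p1 p2 q1 q2 p5 q5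
      rw [haa, hbb]
    have hsub2 : ∀ r : ℤ, ({q : ℝ × ℝ | q ∈ modPoints n ∧ q.1 = (r : ℝ)}).Subsingleton := by
      intro r x hx y hy
      obtain ⟨⟨a, b, p1, p2, p3, p4, p5, rfl⟩, hx2⟩ := hx
      obtain ⟨⟨a', b', q1, q2, q3, q4, q5, rfl⟩, hy2⟩ := hy
      simp only at hx2 hy2
      have ha : a = r := by exact_mod_cast hx2
      have ha' : a' = r := by exact_mod_cast hy2
      have haa : a' = a := by omega
      rw [haa] at q5
      rw [mul_comm] at p5 q5
      have hbb : b = b' := uniq b b' a p3 p4 q3 q4 p5 q5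
      rw [haa, hbb]
    have hcov : modVertices n ⊆
        (⋃ r ∈ R, {q : ℝ × ℝ | q ∈ modPoints n ∧ q.2 = (r : ℝ)})
          ∪ (⋃ r ∈ R, {q : ℝ × ℝ | q ∈ modPoints n ∧ q.1 = (r : ℝ)}) := by
      intro q hq
      obtain ⟨a, b, p1, p2, p3, p4, p5, rfl⟩ := hsubG hq
      rcases hR a b p1 p2 p3 p4 p5 hq with h | h
      · exact Or.inl (Set.mem_biUnion h ⟨memG a b p1 p2 p3 p4 p5, rfl⟩)
      · exact Or.inr (Set.mem_biUnion h ⟨memG a b p1 p2 p3 p4 p5, rfl⟩)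
    obtain ⟨hc1, hf1⟩ := biUnion_card_bound R _ hsub1
    obtain ⟨hc2, hf2⟩ := biUnion_card_bound R _ hsub2
    have h5 : (modVertices n).ncard ≤ 2 * R.card := by
      calc (modVertices n).ncard
          ≤ ((⋃ r ∈ R, {q : ℝ × ℝ | q ∈ modPoints n ∧ q.2 = (r : ℝ)})
            ∪ (⋃ r ∈ R, {q : ℝ × ℝ | q ∈ modPoints n ∧ q.1 = (r : ℝ)})).ncard :=
            Set.ncard_le_ncard hcov (hf1.union hf2)
        _ ≤ (⋃ r ∈ R, {q : ℝ × ℝ | q ∈ modPoints n ∧ q.2 = (r : ℝ)}).ncard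
            + (⋃ r ∈ R, {q : ℝ × ℝ | q ∈ modPoints n ∧ q.1 = (r : ℝ)}).ncard :=
            Set.ncard_union_le _ _
        _ ≤ 2 * R.card := by omega
    have h6 : numVertices n = (modVertices n).ncard := rfl
    have h7 : numVertices n ≤ 2 * R.card := by omega
    exact_mod_cast h7
  rcases Nat.eq_zero_or_pos (Mgap n) with hM0 | hM1
  · have hcard := count (Finset.Icc 1 ((n : ℤ) - 1))
      (fun a b h1 h2 h3 h4 h5 h6 => Or.inl (Finset.mem_Icc.2 ⟨h3, h4⟩))
    have hIcc : (Finset.Icc (1 : ℤ) ((n : ℤ) - 1)).card = ((n : ℤ) - 1).toNat := by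
      rw [Int.card_Icc]
      congr 1
      ring
    rw [hIcc] at hcard
    omega
  · have hcard := count (Finset.Icc 1 b₀ ∪ Finset.Icc ((n : ℤ) - b₀) ((n : ℤ) - 1)) ?_
    · have c1 : (Finset.Icc (1 : ℤ) b₀).card = b₀.toNat := by
        rw [Int.card_Icc]
        congr 1
        ring
      have c2 : (Finset.Icc ((n : ℤ) - b₀) ((n : ℤ) - 1)).card = b₀.toNat := by
        rw [Int.card_Icc]
        congr 1
        ring
      have c3 := Finset.card_union_le (Finset.Icc (1 : ℤ) b₀)
        (Finset.Icc ((n : ℤ) - b₀) ((n : ℤ) - 1))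
      rw [c1, c2] at c3
      omega
    · intro a b h1 h2 h3 h4 h5 h6
      rcases key hM1 a b h1 h2 h3 h4 h5 h6 with h | h | h | h
      · left
        simp only [Finset.mem_union, Finset.mem_Icc]
        omega
      · right
        simp only [Finset.mem_union, Finset.mem_Icc]
        omega
      · right
        simp only [Finset.mem_union, Finset.mem_Icc]
        omega
      · left
        simp only [Finset.mem_union, Finset.mem_Icc]
        omega
end
end
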